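/- arXiv:1910.11808 — 5 statements merged into one kernel-verified Lean document; each statement's English description precedes it below -/
import Mathlib

section
/- Let d(n) denote the number of nondecreasing Dyck words of semilength n. Then d(1) = 1, d(2) = 2, and for every n ≥ 1, d(n+2) = 3·d(n+1) − d(n). -/
/-- Height of the prefix of length `i` of the word `w`
(`true` = U-step, `false` = D-step): number of U's minus number of D's. -/
def prefixHeight (w : List Bool) (i : ℕ) : ℤ :=
  ((w.take i).count true : ℤ) - ((w.take i).count false : ℤ)

/-- `w` is a Dyck word: every prefix has nonnegative height and the whole word
has height 0 (equally many U's and D's). -/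
def IsDyckWord (w : List Bool) : Prop :=
  (∀ i, i ≤ w.length → 0 ≤ prefixHeight w i) ∧ prefixHeight w w.length = 0

/-- A valley at (0-based) position `i`: a D-step immediately followed by a U-step. -/
def IsValley (w : List Bool) (i : ℕ) : Prop :=
  w[i]? = some false ∧ w[i + 1]? = some true

/-- A nondecreasing Dyck word: a Dyck word whose valley altitudes, read left to
right, form a nondecreasing sequence.  The altitude of a valley at position `i`
is the height of the prefix ending at that D-step, i.e. of length `i + 1`. -/
def IsNondecDyck (w : List Bool) : Prop :=
  IsDyckWord w ∧ ∀ i j, IsValley w i → IsValley w j → i ≤ j →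
    prefixHeight w (i + 1) ≤ prefixHeight w (j + 1)

/-- The set of nondecreasing Dyck words of semilength `n`. -/
def nondecDyck (n : ℕ) : Set (List Bool) :=
  {w | w.length = 2 * n ∧ IsNondecDyck w}

/-- `d n` = number of nondecreasing Dyck words of semilength `n`. -/
noncomputable def numNondecDyck (n : ℕ) : ℕ := (nondecDyck n).ncard

set_option maxHeartbeats 400000

def hsum (w : List Bool) : ℤ := (w.count true : ℤ) - (w.count false : ℤ)

lemma prefixHeight_eq (w : List Bool) (i : ℕ) : prefixHeight w i = hsum (w.take i) := rfl

lemma hsum_append (u v : List Bool) : hsum (u ++ v) = hsum u + hsum v := by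
  simp [hsum, List.count_append]; ring

lemma hsum_singleton (b : Bool) : hsum [b] = if b then 1 else -1 := by
  cases b <;> simp [hsum]

lemma hsum_cons (b : Bool) (t : List Bool) :
    hsum (b :: t) = (if b then 1 else -1) + hsum t := by
  cases b <;> simp [hsum] <;> ring

lemma hsum_replicate_true (a : ℕ) : hsum (List.replicate a true) = a := by
  simp [hsum, List.count_replicate]

lemma hsum_replicate_false (a : ℕ) : hsum (List.replicate a false) = -a := by
  simp [hsum, List.count_replicate]

lemma prefixHeight_zero (w : List Bool) : prefixHeight w 0 = 0 := rfl

lemma prefixHeight_of_le (w : List Bool) {i : ℕ} (h : w.length ≤ i) :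
    prefixHeight w i = hsum w := by
  rw [prefixHeight_eq, List.take_of_length_le h]

lemma prefixHeight_succ (w : List Bool) {i : ℕ} (h : i < w.length) :
    prefixHeight w (i + 1) = prefixHeight w i + (if w[i] then 1 else -1) := by
  rw [prefixHeight_eq, prefixHeight_eq, List.take_succ, hsum_append]
  have : w[i]? = some w[i] := List.getElem?_eq_getElem h
  rw [this]
  simp [hsum_singleton]

lemma prefixHeight_append_left (u v : List Bool) {i : ℕ} (h : i ≤ u.length) :
    prefixHeight (u ++ v) i = prefixHeight u i := by
  rw [prefixHeight_eq, prefixHeight_eq, List.take_append_of_le_length h]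

lemma prefixHeight_append_right (u v : List Bool) (j : ℕ) :
    prefixHeight (u ++ v) (u.length + j) = hsum u + prefixHeight v j := by
  rw [prefixHeight_eq, prefixHeight_eq, List.take_length_add_append, hsum_append]

lemma prefixHeight_cons (b : Bool) (t : List Bool) (i : ℕ) :
    prefixHeight (b :: t) (i + 1) = (if b then 1 else -1) + prefixHeight t i := by
  rw [prefixHeight_eq, prefixHeight_eq, List.take_succ_cons, hsum_cons]

lemma hsum_of_dyck {w : List Bool} (h : IsDyckWord w) : hsum w = 0 := by
  have := h.2; rwa [prefixHeight_of_le w le_rfl] at this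

-- getElem? helpers
lemma gea_left {α : Type*} {l1 l2 : List α} {i : ℕ} (h : i < l1.length) :
    (l1 ++ l2)[i]? = l1[i]? := by
  rw [List.getElem?_append]; simp [h]

lemma gea_right {α : Type*} {l1 l2 : List α} {i : ℕ} (h : l1.length ≤ i) :
    (l1 ++ l2)[i]? = l2[i - l1.length]? := List.getElem?_append_right h

lemma ge_replicate {a : Bool} {n i : ℕ} (h : i < n) :
    (List.replicate n a)[i]? = some a := by
  simp [List.getElem?_replicate, h]

-- head of a nonempty Dyck word
lemma dyck_head {w : List Bool} (hd : IsDyckWord w) (hne : 0 < w.length) :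
    w[0]? = some true := by
  have h1 : prefixHeight w 1 = prefixHeight w 0 + (if w[0] then 1 else -1) :=
    prefixHeight_succ w hne
  have h2 : 0 ≤ prefixHeight w 1 := hd.1 1 hne
  rw [prefixHeight_zero, zero_add] at h1
  have : w[0] = true := by
    by_contra hb
    simp [Bool.not_eq_true] at hb
    rw [hb] at h1; simp at h1; omega
  rw [List.getElem?_eq_getElem hne, this]

/-- elevation -/
def elev (v : List Bool) : List Bool := true :: (v ++ [false])

lemma elev_length (v : List Bool) : (elev v).length = v.length + 2 := by
  simp [elev]

lemma prefixHeight_elev_succ (v : List Bool) {i : ℕ} (h : i ≤ v.length) :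
    prefixHeight (elev v) (i + 1) = 1 + prefixHeight v i := by
  rw [elev, prefixHeight_cons, prefixHeight_append_left v [false] h]; simp

lemma hsum_elev (v : List Bool) : hsum (elev v) = hsum v := by
  rw [elev, hsum_cons, hsum_append, hsum_singleton]; simp

lemma isValley_elev (v : List Bool) (i : ℕ) :
    IsValley (elev v) i ↔ ∃ i', i = i' + 1 ∧ IsValley v i' := by
  constructor
  · rintro ⟨h1, h2⟩
    cases i with
    | zero => simp [elev] at h1
    | succ i' =>
      refine ⟨i', rfl, ?_, ?_⟩
      · -- v[i']? = some false
        have h2' : (v ++ [false])[i' + 1]? = some true := by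
          simpa [elev, List.getElem?_cons_succ] using h2
        have hlt : i' + 1 < v.length := by
          by_contra hge
          push_neg at hge
          rw [gea_right hge] at h2'
          rcases Nat.lt_or_ge (i' + 1 - v.length) 1 with hc | hc
          · interval_cases h : (i' + 1 - v.length) <;> simp_all
          · rw [List.getElem?_eq_none (by simpa using hc)] at h2'; simp at h2'
        have h1' : (v ++ [false])[i']? = some false := by
          simpa [elev, List.getElem?_cons_succ] using h1
        rwa [gea_left (by omega)] at h1'
      · have h2' : (v ++ [false])[i' + 1]? = some true := by
          simpa [elev, List.getElem?_cons_succ] using h2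
        have hlt : i' + 1 < v.length := by
          by_contra hge
          push_neg at hge
          rw [gea_right hge] at h2'
          rcases Nat.lt_or_ge (i' + 1 - v.length) 1 with hc | hc
          · interval_cases h : (i' + 1 - v.length) <;> simp_all
          · rw [List.getElem?_eq_none (by simpa using hc)] at h2'; simp at h2'
        rwa [gea_left hlt] at h2'
  · rintro ⟨i', rfl, hv1, hv2⟩
    have hlt : i' + 1 < v.length := by
      by_contra hge
      push_neg at hge
      rw [List.getElem?_eq_none hge] at hv2; simp at hv2
    constructor
    · show (true :: (v ++ [false]))[i' + 1]? = some false
      rw [List.getElem?_cons_succ, gea_left (by omega)]; exact hv1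
    · show (true :: (v ++ [false]))[i' + 2]? = some true
      rw [List.getElem?_cons_succ, gea_left hlt]; exact hv2

lemma valley_lt_length {w : List Bool} {i : ℕ} (h : IsValley w i) : i + 1 < w.length := by
  have := h.2
  by_contra hge
  push_neg at hge
  rw [List.getElem?_eq_none hge] at this; simp at this

lemma elev_mem {v : List Bool} {n : ℕ} (hv : v ∈ nondecDyck n) :
    elev v ∈ nondecDyck (n + 1) := by
  obtain ⟨hlen, ⟨hdy, hval⟩⟩ := hv
  refine ⟨by rw [elev_length, hlen]; ring, ⟨?_, ?_⟩, ?_⟩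
  · intro i hi
    cases i with
    | zero => rw [prefixHeight_zero]
    | succ k =>
      rcases Nat.lt_or_ge k (v.length + 1) with hk | hk
      · rcases Nat.lt_or_ge k v.length with hk2 | hk2
        · rw [prefixHeight_elev_succ v hk2.le]
          have := hdy.1 k hk2.le
          omega
        · have hk3 : k = v.length := by omega
          rw [hk3, prefixHeight_elev_succ v le_rfl]
          have := hdy.1 v.length le_rfl
          omega
      · rw [prefixHeight_of_le _ (by rw [elev_length]; omega), hsum_elev,
          hsum_of_dyck hdy]
  · rw [prefixHeight_of_le _ le_rfl, hsum_elev, hsum_of_dyck hdy]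
  · intro i j hi hj hij
    obtain ⟨i', rfl, hi'⟩ := (isValley_elev v i).1 hi
    obtain ⟨j', rfl, hj'⟩ := (isValley_elev v j).1 hj
    have hib := valley_lt_length hi'
    have hjb := valley_lt_length hj'
    rw [show i' + 1 + 1 = (i' + 1) + 1 from rfl,
      prefixHeight_elev_succ v (by omega), prefixHeight_elev_succ v (by omega)]
    have := hval i' j' hi' hj' (by omega)
    omega

/-- pyramid U^a D^a -/
def pyr (a : ℕ) : List Bool := List.replicate a true ++ List.replicate a false

lemma pyr_length (a : ℕ) : (pyr a).length = 2 * a := by simp [pyr]; ring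

lemma hsum_pyr (a : ℕ) : hsum (pyr a) = 0 := by
  rw [pyr, hsum_append, hsum_replicate_true, hsum_replicate_false]; ring

lemma prefixHeight_pyr (a i : ℕ) :
    prefixHeight (pyr a) i = ((min i a : ℕ) : ℤ) - ((min (i - a) a : ℕ) : ℤ) := by
  rw [prefixHeight_eq, pyr, List.take_append, hsum_append,
    List.take_replicate, List.take_replicate, List.length_replicate,
    hsum_replicate_true, hsum_replicate_false]
  omega

/-- flat prefix: U^a D^a followed by w -/
def flat (a : ℕ) (w : List Bool) : List Bool := pyr a ++ w

lemma flat_length (a : ℕ) (w : List Bool) : (flat a w).length = 2 * a + w.length := by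
  simp [flat, pyr_length]

lemma prefixHeight_flat_low (a : ℕ) (w : List Bool) {i : ℕ} (h : i ≤ 2 * a) :
    prefixHeight (flat a w) i = prefixHeight (pyr a) i :=
  prefixHeight_append_left _ _ (by rw [pyr_length]; exact h)

lemma prefixHeight_flat_high (a : ℕ) (w : List Bool) (j : ℕ) :
    prefixHeight (flat a w) (2 * a + j) = prefixHeight w j := by
  have := prefixHeight_append_right (pyr a) w j
  rw [pyr_length, hsum_pyr, zero_add] at this
  exact this

lemma isValley_flat {a : ℕ} (ha : 1 ≤ a) {w : List Bool} (h0 : w[0]? = some true) (i : ℕ) :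
    IsValley (flat a w) i ↔ (i = 2 * a - 1 ∨ ∃ j, i = 2 * a + j ∧ IsValley w j) := by
  have hpyrlen : (pyr a).length = 2 * a := pyr_length a
  constructor
  · rintro ⟨h1, h2⟩
    rcases Nat.lt_or_ge i (2 * a) with hi | hi
    · -- inside pyramid, element is false only for a ≤ i < 2a
      left
      have hfalse : a ≤ i := by
        by_contra hlt
        push_neg at hlt
        rw [flat, gea_left (by omega)] at h1
        rw [pyr, gea_left (by simpa using hlt)] at h1
        rw [ge_replicate hlt] at h1
        simp at h1
      -- next element true forces i + 1 = 2a
      by_contra hne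
      have hi1 : i + 1 < 2 * a := by omega
      rw [flat, gea_left (by omega)] at h2
      rw [pyr, gea_right (by simpa using (by omega : a ≤ i + 1))] at h2
      rw [ge_replicate (by simpa using (by omega : i + 1 - a < a))] at h2
      simp at h2
    · right
      refine ⟨i - 2 * a, by omega, ?_, ?_⟩
      · rw [flat, gea_right (by omega)] at h1
        rwa [hpyrlen] at h1
      · rw [flat, gea_right (by omega)] at h2
        rw [hpyrlen] at h2
        have : i + 1 - 2 * a = i - 2 * a + 1 := by omega
        rwa [this] at h2
  · rintro (rfl | ⟨j, rfl, hv1, hv2⟩)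
    · constructor
      · rw [flat, gea_left (by omega), pyr, gea_right (by simp; omega),
          List.length_replicate]
        rw [ge_replicate (by omega)]
      · have h2a : 2 * a - 1 + 1 = 2 * a := by omega
        rw [h2a, flat, gea_right (by omega), hpyrlen]
        simpa using h0
    · constructor
      · rw [flat, gea_right (by omega), hpyrlen]
        simpa using hv1
      · rw [flat, gea_right (by omega), hpyrlen]
        have : 2 * a + j + 1 - 2 * a = j + 1 := by omega
        rwa [this]

lemma prefixHeight_pyr_nonneg (a : ℕ) (i : ℕ) : 0 ≤ prefixHeight (pyr a) i := by
  rw [prefixHeight_pyr]; omega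

lemma prefixHeight_pyr_pos {a i : ℕ} (h0 : 0 < i) (h1 : i < 2 * a) :
    0 < prefixHeight (pyr a) i := by
  rw [prefixHeight_pyr]; omega

lemma flat_pos {a : ℕ} (w : List Bool) {i : ℕ} (h0 : 0 < i) (h1 : i < 2 * a) :
    0 < prefixHeight (flat a w) i := by
  rw [prefixHeight_flat_low a w (by omega)]
  exact prefixHeight_pyr_pos h0 h1

lemma flat_ret (a : ℕ) (w : List Bool) : prefixHeight (flat a w) (2 * a) = 0 := by
  have := prefixHeight_flat_high a w 0
  simpa [prefixHeight_zero] using this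

lemma elev_pos {v : List Bool} (hv : IsDyckWord v) {i : ℕ} (h0 : 0 < i)
    (h1 : i < (elev v).length) : 0 < prefixHeight (elev v) i := by
  rw [elev_length] at h1
  obtain ⟨k, rfl⟩ : ∃ k, i = k + 1 := ⟨i - 1, by omega⟩
  rw [prefixHeight_elev_succ v (by omega)]
  have := hv.1 k (by omega)
  omega

lemma flat_mem {a m : ℕ} (ha : 1 ≤ a) (hm : 1 ≤ m) {w : List Bool}
    (hw : w ∈ nondecDyck m) : flat a w ∈ nondecDyck (a + m) := by
  obtain ⟨hlen, hdy, hval⟩ := hw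
  have h0 : w[0]? = some true := dyck_head hdy (by omega)
  refine ⟨by rw [flat_length, hlen]; ring, ⟨?_, ?_⟩, ?_⟩
  · intro i hi
    rcases Nat.lt_or_ge i (2 * a) with h | h
    · rw [prefixHeight_flat_low a w h.le]
      exact prefixHeight_pyr_nonneg a i
    · obtain ⟨j, rfl⟩ := Nat.exists_eq_add_of_le h
      rw [prefixHeight_flat_high]
      refine hdy.1 j ?_
      rw [flat_length, hlen] at hi
      omega
  · have hL : (flat a w).length = 2 * a + 2 * m := by rw [flat_length, hlen]
    rw [hL, prefixHeight_flat_high, ← hlen]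
    exact hdy.2
  · intro i j hi hj hij
    rcases (isValley_flat ha h0 i).1 hi with hi' | ⟨i', rfl, hi'⟩ <;>
      rcases (isValley_flat ha h0 j).1 hj with hj' | ⟨j', rfl, hj'⟩
    · rw [hi', hj']
    · subst hi'
      rw [show 2 * a - 1 + 1 = 2 * a + 0 from by omega, prefixHeight_flat_high,
        show 2 * a + j' + 1 = 2 * a + (j' + 1) from by omega, prefixHeight_flat_high]
      rw [prefixHeight_zero]
      exact hdy.1 (j' + 1) (by have := valley_lt_length hj'; omega)
    · subst hj'
      omega
    · rw [show 2 * a + i' + 1 = 2 * a + (i' + 1) from by omega, prefixHeight_flat_high,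
        show 2 * a + j' + 1 = 2 * a + (j' + 1) from by omega, prefixHeight_flat_high]
      exact hval i' j' hi' hj' (by omega)

lemma elev_injective : Function.Injective elev := by
  intro v v' h
  rw [elev, elev] at h
  have := List.tail_eq_of_cons_eq h
  exact List.append_cancel_right this

lemma flat_injective (a : ℕ) : Function.Injective (flat a) := by
  intro w w' h
  exact List.append_cancel_left h

lemma no_valley_shape (u : List Bool)
    (h : ∀ i, ¬(u[i]? = some false ∧ u[i + 1]? = some true)) :
    u = List.replicate (u.count true) true ++ List.replicate (u.count false) false := by
  induction u with
  | nil => simp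
  | cons b t ih =>
    have ht : ∀ i, ¬(t[i]? = some false ∧ t[i + 1]? = some true) := by
      intro i hi
      exact h (i + 1) (by simpa [List.getElem?_cons_succ] using hi)
    have hts := ih ht
    cases b with
    | true =>
      have c1 : (true :: t).count true = t.count true + 1 := by simp
      have c2 : (true :: t).count false = t.count false := by simp
      rw [c1, c2, List.replicate_succ, List.cons_append, ← hts]
    | false =>
      have h0 : t.count true = 0 := by
        by_contra hc
        have hc' : 0 < t.count true := Nat.pos_of_ne_zero hc
        have ht0 : t[0]? = some true := by
          rw [hts, gea_left (by simpa using hc'), ge_replicate hc']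
        exact h 0 ⟨by simp, by simpa [List.getElem?_cons_succ] using ht0⟩
      rw [h0] at hts
      simp only [List.replicate_zero, List.nil_append] at hts
      have c1 : (false :: t).count true = 0 := by simp [h0]
      have c2 : (false :: t).count false = t.count false + 1 := by simp
      rw [c1, c2]
      simp only [List.replicate_zero, List.nil_append, List.replicate_succ]
      rw [← hts]

lemma step_char (w : List Bool) {i : ℕ} (h : i < w.length) :
    (w[i]? = some true ∧ prefixHeight w (i + 1) = prefixHeight w i + 1) ∨
    (w[i]? = some false ∧ prefixHeight w (i + 1) = prefixHeight w i - 1) := by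
  have hs := prefixHeight_succ w h
  have hg : w[i]? = some (w[i]'h) := List.getElem?_eq_getElem h
  cases hb : w[i]'h with
  | true =>
    left
    rw [hb] at hs hg
    simp at hs
    exact ⟨hg, by omega⟩
  | false =>
    right
    rw [hb] at hs hg
    simp at hs
    exact ⟨hg, by omega⟩

lemma mem_decomp {n : ℕ} {w : List Bool} (hw : w ∈ nondecDyck (n + 1)) :
    (∃ v ∈ nondecDyck n, elev v = w) ∨
    (∃ m, 1 ≤ m ∧ m ≤ n ∧ ∃ u ∈ nondecDyck m, flat (n + 1 - m) u = w) := by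
  classical
  obtain ⟨hlen, hdy, hval⟩ := hw
  have hL : w.length = 2 * n + 2 := by omega
  by_cases hR : ∃ r, 0 < r ∧ r < w.length ∧ prefixHeight w r = 0
  · -- there is a proper return: flat case
    right
    obtain ⟨r, ⟨hr0, hrL, hr⟩, hrmin⟩ :
        ∃ r, (0 < r ∧ r < w.length ∧ prefixHeight w r = 0) ∧
          ∀ i, i < r → ¬(0 < i ∧ i < w.length ∧ prefixHeight w i = 0) :=
      ⟨Nat.find hR, Nat.find_spec hR, fun i hi => Nat.find_min hR hi⟩
    have hposr : ∀ i, 0 < i → i < r → 0 < prefixHeight w i := by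
      intro i h0 h1
      rcases lt_or_eq_of_le (hdy.1 i (by omega)) with h | h
      · exact h
      · exact absurd ⟨h0, by omega, h.symm⟩ (hrmin i h1)
    obtain ⟨r', rfl⟩ : ∃ r', r = r' + 1 := ⟨r - 1, by omega⟩
    have hr' := hdy.1 r' (by omega)
    rcases step_char w (show r' < w.length by omega) with ⟨hb1, he1⟩ | ⟨hb1, he1⟩
    · omega
    rcases step_char w (show r' + 1 < w.length by omega) with ⟨hb2, he2⟩ | ⟨hb2, he2⟩
    swap
    · have := hdy.1 (r' + 1 + 1) (by omega)
      omega
    have hvalr : IsValley w r' := ⟨hb1, hb2⟩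
    have hnov : ∀ i, i + 1 < r' + 1 → ¬ IsValley w i := by
      intro i hi hvi
      have halt := hval i r' hvi hvalr (by omega)
      rw [hr] at halt
      have := hposr (i + 1) (by omega) hi
      omega
    set u := w.take (r' + 1) with hudef
    set w2 := w.drop (r' + 1) with h2def
    have hsplit : u ++ w2 = w := List.take_append_drop (r' + 1) w
    have hulen : u.length = r' + 1 := by
      rw [hudef, List.length_take]; omega
    have hnodu : ∀ i, ¬(u[i]? = some false ∧ u[i + 1]? = some true) := by
      rintro i ⟨h1, h2⟩
      have hi1 : i + 1 < r' + 1 := by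
        by_contra hge
        push_neg at hge
        rw [hudef] at h2
        rw [List.getElem?_eq_none (by rw [List.length_take]; omega)] at h2
        simp at h2
      apply hnov i hi1
      constructor
      · rw [hudef, List.getElem?_take] at h1
        simpa [show i < r' + 1 from by omega] using h1
      · rw [hudef, List.getElem?_take] at h2
        simpa [hi1] using h2
    have hshape := no_valley_shape u hnodu
    have hsumu : hsum u = 0 := by
      rw [hudef, ← prefixHeight_eq]; exact hr
    have hcount : u.count true = u.count false := by
      rw [hsum] at hsumu
      omega
    set a := u.count true with hadef
    have hrcd : r' + 1 = a + a := by
      have := congrArg List.length hshape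
      rw [hulen] at this
      simp [← hcount] at this
      omega
    have hupyr : u = pyr a := by
      rw [hshape, ← hcount, pyr]
    have ha1 : 1 ≤ a := by omega
    have han : a ≤ n := by omega
    set m := n + 1 - a with hmdef
    have hm1 : 1 ≤ m := by omega
    have h2len : w2.length = 2 * m := by
      rw [h2def, List.length_drop]; omega
    have hph2 : ∀ j, prefixHeight w2 j = prefixHeight w (2 * a + j) := by
      intro j
      conv_rhs => rw [← hsplit]
      rw [show 2 * a = u.length from by omega, prefixHeight_append_right, hsumu,
        zero_add]
    have hvw : ∀ j, IsValley w2 j → IsValley w (2 * a + j) := by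
      rintro j ⟨h1, h2⟩
      constructor
      · rw [← hsplit, gea_right (by omega), hulen]
        rw [show 2 * a + j - (r' + 1) = j from by omega]
        exact h1
      · rw [← hsplit, gea_right (by omega), hulen]
        rw [show 2 * a + j + 1 - (r' + 1) = j + 1 from by omega]
        exact h2
    refine ⟨m, hm1, by omega, w2, ⟨h2len, ⟨?_, ?_⟩, ?_⟩, ?_⟩
    · intro j hj
      rw [hph2 j]
      exact hdy.1 (2 * a + j) (by omega)
    · rw [h2len, hph2 (2 * m), show 2 * a + 2 * m = w.length from by omega]
      exact hdy.2
    · intro i j hi hj hij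
      have := hval (2 * a + i) (2 * a + j) (hvw i hi) (hvw j hj) (by omega)
      rw [show 2 * a + i + 1 = 2 * a + (i + 1) from by omega,
        show 2 * a + j + 1 = 2 * a + (j + 1) from by omega,
        ← hph2 (i + 1), ← hph2 (j + 1)] at this
      exact this
    · rw [show n + 1 - m = a from by omega, flat, ← hupyr]
      exact hsplit
  · -- no proper return: elevation case
    left
    push_neg at hR
    have hpos : ∀ i, 0 < i → i < w.length → 0 < prefixHeight w i := by
      intro i h0 h1
      rcases lt_or_eq_of_le (hdy.1 i h1.le) with h | h
      · exact h
      · exact absurd h.symm (hR i h0 h1)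
    obtain ⟨k, hk⟩ : ∃ k, w.length = k + 1 := ⟨2 * n + 1, by omega⟩
    have htot : prefixHeight w (k + 1) = 0 := by
      have h2 := hdy.2
      rwa [hk] at h2
    have hposk := hpos k (by omega) (by omega)
    rcases step_char w (show k < w.length by omega) with ⟨hbk, hek⟩ | ⟨hbk, hek⟩
    · omega
    have hpe : prefixHeight w k = 1 := by omega
    have hh := dyck_head hdy (by omega)
    obtain ⟨b, t, rfl⟩ : ∃ b t, w = b :: t := by
      cases w with
      | nil => simp at hL
      | cons b t => exact ⟨b, t, rfl⟩
    have hb : b = true := by simpa using hh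
    subst hb
    have htlen : t.length = 2 * n + 1 := by simp at hL; omega
    have htne : t ≠ [] := by
      intro h
      rw [h] at htlen
      simp at htlen
    set v := t.dropLast with hvdef
    have hkt : k = t.length := by simp at hk; omega
    have htlast : t.getLast htne = false := by
      have hgt : t[t.length - 1]? = some false := by
        have hck : (true :: t)[k]? = t[k - 1]? := by
          conv_lhs => rw [show k = (k - 1) + 1 from by omega]
          rw [List.getElem?_cons_succ]
        rw [hck] at hbk
        rwa [show t.length - 1 = k - 1 from by omega]
      rw [List.getElem?_eq_getElem (by omega : t.length - 1 < t.length)] at hgt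
      rw [List.getLast_eq_getElem htne]
      exact Option.some_injective _ hgt
    have hvt : t = v ++ [false] := by
      conv_lhs => rw [← List.dropLast_append_getLast htne]
      rw [htlast]
    have hwe : true :: t = elev v := by
      rw [elev, hvt]
    have hvlen : v.length = 2 * n := by
      have := congrArg List.length hwe
      rw [elev_length] at this
      simp at this ⊢
      omega
    rw [hwe] at hval hpos hpe
    refine ⟨v, ⟨hvlen, ⟨?_, ?_⟩, ?_⟩, hwe.symm⟩
    · intro i hi
      rw [hvlen] at hi
      have := hpos (i + 1) (by omega) (by rw [elev_length]; omega)
      rw [prefixHeight_elev_succ v (by omega)] at this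
      omega
    · rw [hvlen]
      have hkv : k = v.length + 1 := by omega
      rw [hkv, prefixHeight_elev_succ v le_rfl] at hpe
      rw [← hvlen]
      omega
    · intro i j hi hj hij
      have hwi := (isValley_elev v (i + 1)).2 ⟨i, rfl, hi⟩
      have hwj := (isValley_elev v (j + 1)).2 ⟨j, rfl, hj⟩
      have := hval (i + 1) (j + 1) hwi hwj (by omega)
      rw [prefixHeight_elev_succ v (by have := valley_lt_length hi; omega),
        prefixHeight_elev_succ v (by have := valley_lt_length hj; omega)] at this
      omega

lemma nondec_finite (n : ℕ) : (nondecDyck n).Finite :=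
  Set.Finite.subset (List.finite_length_eq Bool (2 * n)) (fun _ hw => hw.1)

noncomputable def FD (n : ℕ) : Finset (List Bool) := (nondec_finite n).toFinset

lemma num_eq (n : ℕ) : numNondecDyck n = (FD n).card :=
  Set.ncard_eq_toFinset_card _ _

lemma mem_FD {n : ℕ} {w : List Bool} : w ∈ FD n ↔ w ∈ nondecDyck n :=
  Set.Finite.mem_toFinset _

lemma nondec_zero : nondecDyck 0 = {([] : List Bool)} := by
  ext w
  constructor
  · rintro ⟨hlen, _⟩
    simpa using List.length_eq_zero_iff.1 (by simpa using hlen)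
  · rintro rfl
    refine ⟨by simp, ⟨⟨?_, ?_⟩, ?_⟩⟩
    · intro i _; simp [prefixHeight]
    · simp [prefixHeight]
    · rintro i j ⟨h1, _⟩ _ _
      simp at h1

lemma d0 : numNondecDyck 0 = 1 := by
  rw [numNondecDyck, nondec_zero, Set.ncard_singleton]

lemma flat_a_eq {a a' : ℕ} (ha : 1 ≤ a) (ha' : 1 ≤ a') {u u' : List Bool}
    (h : flat a u = flat a' u') : a = a' := by
  rcases lt_trichotomy a a' with hl | he | hl
  · exfalso
    have h1 := flat_ret a u
    rw [h] at h1
    have h2 := flat_pos (a := a') u' (i := 2 * a) (by omega) (by omega)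
    omega
  · exact he
  · exfalso
    have h1 := flat_ret a' u'
    rw [← h] at h1
    have h2 := flat_pos (a := a) u (i := 2 * a') (by omega) (by omega)
    omega

lemma key (n : ℕ) :
    numNondecDyck (n + 1) = numNondecDyck n + ∑ m ∈ Finset.Icc 1 n, numNondecDyck m := by
  have hFeq : FD (n + 1) = (FD n).image elev ∪
      (Finset.Icc 1 n).biUnion (fun m => (FD m).image (flat (n + 1 - m))) := by
    ext w
    simp only [mem_FD, Finset.mem_union, Finset.mem_image, Finset.mem_biUnion,
      Finset.mem_Icc]
    constructor
    · intro hw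
      rcases mem_decomp hw with ⟨v, hv, he⟩ | ⟨m, h1, h2, u, hu, hf⟩
      · exact Or.inl ⟨v, hv, he⟩
      · exact Or.inr ⟨m, ⟨h1, h2⟩, u, hu, hf⟩
    · rintro (⟨v, hv, rfl⟩ | ⟨m, ⟨h1, h2⟩, u, hu, rfl⟩)
      · exact elev_mem hv
      · have := flat_mem (a := n + 1 - m) (by omega) h1 hu
        rwa [show n + 1 - m + m = n + 1 from by omega] at this
  have hdisj : Disjoint ((FD n).image elev)
      ((Finset.Icc 1 n).biUnion (fun m => (FD m).image (flat (n + 1 - m)))) := by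
    rw [Finset.disjoint_left]
    rintro w hw hw'
    simp only [Finset.mem_image, Finset.mem_biUnion, Finset.mem_Icc] at hw hw'
    obtain ⟨v, hv, rfl⟩ := hw
    obtain ⟨m, ⟨h1, h2⟩, u, hu, hf⟩ := hw'
    have hv' := mem_FD.1 hv
    have h1' := flat_ret (n + 1 - m) u
    rw [hf] at h1'
    have h2' := elev_pos hv'.2.1 (i := 2 * (n + 1 - m)) (by omega)
      (by rw [elev_length, hv'.1]; omega)
    omega
  have hpair : ∀ m ∈ Finset.Icc 1 n, ∀ m' ∈ Finset.Icc 1 n, m ≠ m' →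
      Disjoint ((FD m).image (flat (n + 1 - m))) ((FD m').image (flat (n + 1 - m'))) := by
    intro m hm m' hm' hne
    simp only [Finset.mem_Icc] at hm hm'
    rw [Finset.disjoint_left]
    rintro w hw hw'
    simp only [Finset.mem_image] at hw hw'
    obtain ⟨u, hu, rfl⟩ := hw
    obtain ⟨u', hu', hf⟩ := hw'
    have := flat_a_eq (by omega) (by omega) hf.symm
    omega
  rw [num_eq, hFeq, Finset.card_union_of_disjoint hdisj,
    Finset.card_image_of_injective _ elev_injective, Finset.card_biUnion hpair]
  congr 1
  · exact (num_eq n).symm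
  · refine Finset.sum_congr rfl ?_
    intro m _
    rw [Finset.card_image_of_injective _ (flat_injective _), num_eq]

lemma d1 : numNondecDyck 1 = 1 := by
  have h := key 0
  rw [show Finset.Icc 1 0 = ∅ from Finset.Icc_eq_empty (by omega)] at h
  simpa [d0] using h

lemma d2 : numNondecDyck 2 = 2 := by
  have h := key 1
  rw [Finset.Icc_self, Finset.sum_singleton] at h
  rw [h, d1]


/-- `d(1) = 1`, `d(2) = 2`, and for every `n ≥ 1`,
`d(n+2) = 3·d(n+1) − d(n)`. -/
theorem nondecDyck_recurrence :
    numNondecDyck 1 = 1 ∧ numNondecDyck 2 = 2 ∧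
    ∀ n : ℕ, 1 ≤ n →
      (numNondecDyck (n + 2) : ℤ) =
        3 * numNondecDyck (n + 1) - numNondecDyck n := by
  refine ⟨d1, d2, ?_⟩
  intro n _
  have e1 : numNondecDyck (n + 2) = numNondecDyck (n + 1) +
      ∑ m ∈ Finset.Icc 1 (n + 1), numNondecDyck m := key (n + 1)
  have e2 := key n
  rw [Finset.sum_Icc_succ_top (by omega : 1 ≤ n + 1)] at e1
  omega
end

section
/- For every n ≥ 1, the number of nondecreasing Dyck words of semilength n equals the Fibonacci number F(2n−1), where F(1) = F(2) = 1 and F(k+2) = F(k+1) + F(k). -/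
namespace NondecAux

/-! ### basic facts about `prefixHeight` -/

lemma ph_zero (w : List Bool) : prefixHeight w 0 = 0 := by simp [prefixHeight]

lemma ph_stable (w : List Bool) {i : ℕ} (h : w.length ≤ i) :
    prefixHeight w i = prefixHeight w w.length := by
  simp [prefixHeight, List.take_of_length_le h]

lemma ph_append (u v : List Bool) (i : ℕ) :
    prefixHeight (u ++ v) i = prefixHeight u i + prefixHeight v (i - u.length) := by
  simp only [prefixHeight, List.take_append, List.count_append]
  push_cast; ring

lemma ph_append_left (u v : List Bool) {i : ℕ} (h : i ≤ u.length) :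
    prefixHeight (u ++ v) i = prefixHeight u i := by
  rw [ph_append, Nat.sub_eq_zero_of_le h, ph_zero, add_zero]

lemma ph_split (u v : List Bool) (h0 : prefixHeight u u.length = 0) (j : ℕ) :
    prefixHeight (u ++ v) (u.length + j) = prefixHeight v j := by
  rw [ph_append, ph_stable u (Nat.le_add_right _ _), h0, Nat.add_sub_cancel_left, zero_add]

lemma ph_take (w : List Bool) {k i : ℕ} (h : i ≤ k) :
    prefixHeight (w.take k) i = prefixHeight w i := by
  simp [prefixHeight, List.take_take, Nat.min_eq_left h]

lemma ph_step (w : List Bool) {i : ℕ} (h : i < w.length) :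
    prefixHeight w (i + 1) = prefixHeight w i + (if w[i] = true then 1 else -1) := by
  have ht : w.take (i + 1) = w.take i ++ [w[i]] := by
    rw [List.take_succ, List.getElem?_eq_getElem h]; rfl
  by_cases hb : w[i] = true
  · simp [prefixHeight, ht, hb, List.count_append]; ring
  · have hb' : w[i] = false := by simpa using hb
    simp [prefixHeight, ht, hb', List.count_append]; ring

lemma ph_cons_true (w : List Bool) (j : ℕ) :
    prefixHeight (true :: w) (j + 1) = 1 + prefixHeight w j := by
  have h1 : prefixHeight [true] (j + 1) = 1 := by
    rw [prefixHeight, List.take_of_length_le (by simp)]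
    simp
  have h2 : j + 1 - ([true] : List Bool).length = j := by simp
  rw [show (true :: w) = [true] ++ w from rfl, ph_append, h1, h2]

lemma step_down (w : List Bool) {i : ℕ} (h : i < w.length)
    (hlt : prefixHeight w (i + 1) < prefixHeight w i) : w[i]? = some false := by
  have hs := ph_step w h
  by_cases hb : w[i] = true
  · rw [hb, if_pos rfl] at hs; omega
  · have hb' : w[i] = false := by simpa using hb
    rw [List.getElem?_eq_getElem h, hb']

lemma step_up (w : List Bool) {i : ℕ} (h : i < w.length)
    (hlt : prefixHeight w i < prefixHeight w (i + 1)) : w[i]? = some true := by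
  have hs := ph_step w h
  by_cases hb : w[i] = true
  · rw [List.getElem?_eq_getElem h, hb]
  · rw [if_neg hb] at hs; omega

lemma ph_length (w : List Bool) :
    prefixHeight w w.length = (w.count true : ℤ) - (w.count false : ℤ) := by
  simp [prefixHeight]

lemma count_true_add_count_false (w : List Bool) :
    w.count true + w.count false = w.length := by
  induction w with
  | nil => rfl
  | cons b t ih => cases b <;> simp [List.count_cons] <;> omega

/-! ### valleys and appending -/

lemma valley_append_right (u v : List Bool) (i : ℕ) :
    IsValley (u ++ v) (u.length + i) ↔ IsValley v i := by
  unfold IsValley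
  rw [List.getElem?_append_right (Nat.le_add_right _ _),
    show u.length + i + 1 = u.length + (i + 1) by ring,
    List.getElem?_append_right (Nat.le_add_right _ _),
    Nat.add_sub_cancel_left, Nat.add_sub_cancel_left]

lemma valley_cons (b : Bool) (w : List Bool) (i : ℕ) :
    IsValley (b :: w) (i + 1) ↔ IsValley w i := by
  have := valley_append_right [b] w i
  simpa [Nat.add_comm] using this

lemma not_valley_zero_of_head_true {w : List Bool} (h : w[0]? = some true) :
    ¬ IsValley w 0 := by
  intro hv; rw [hv.1] at h; simp at h

/-! ### replicate and pyramids -/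

lemma ph_replicate_true (m i : ℕ) :
    prefixHeight (List.replicate m true) i = (min i m : ℕ) := by
  simp [prefixHeight, List.take_replicate, List.count_replicate]

lemma ph_replicate_false (m i : ℕ) :
    prefixHeight (List.replicate m false) i = -((min i m : ℕ) : ℤ) := by
  simp [prefixHeight, List.take_replicate, List.count_replicate]

def pyr (m : ℕ) : List Bool := List.replicate m true ++ List.replicate m false

lemma pyr_length (m : ℕ) : (pyr m).length = 2 * m := by simp [pyr]; ring

lemma ph_pyr (m i : ℕ) :
    prefixHeight (pyr m) i = ((min i m : ℕ) : ℤ) - ((min (i - m) m : ℕ) : ℤ) := by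
  rw [pyr, ph_append, ph_replicate_true, ph_replicate_false, List.length_replicate]
  ring

lemma ph_pyr_nonneg (m i : ℕ) : 0 ≤ prefixHeight (pyr m) i := by
  rw [ph_pyr]
  have : min (i - m) m ≤ min i m := min_le_min (Nat.sub_le i m) le_rfl
  have := (Nat.cast_le (α := ℤ)).2 this
  omega

lemma ph_pyr_full (m : ℕ) : prefixHeight (pyr m) (2 * m) = 0 := by
  rw [ph_pyr]
  have h1 : min (2 * m) m = m := by omega
  have h2 : min (2 * m - m) m = m := by omega
  rw [h1, h2]; ring

lemma ph_pyr_pos {m i : ℕ} (h1 : 0 < i) (h2 : i < 2 * m) : 0 < prefixHeight (pyr m) i := by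
  rw [ph_pyr]
  rcases le_or_gt i m with h | h
  · rw [Nat.min_eq_left h, Nat.sub_eq_zero_of_le h, Nat.zero_min]
    push_cast; omega
  · have h3 : i - m < m := by omega
    rw [Nat.min_eq_right (le_of_lt h), Nat.min_eq_left (le_of_lt h3)]
    push_cast; omega

lemma pyr_getElem_lt {m i : ℕ} (h : i < m) : (pyr m)[i]? = some true := by
  rw [pyr, List.getElem?_append_left (by simpa using h)]
  simp [h]

lemma pyr_getElem_ge {m i : ℕ} (h1 : m ≤ i) (h2 : i < 2 * m) : (pyr m)[i]? = some false := by
  rw [pyr, List.getElem?_append_right (by simpa using h1)]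
  simp only [List.length_replicate, List.getElem?_replicate]
  rw [if_pos (by omega)]

/-! ### words with no valley are pyramids -/

lemma all_false_of_no_valley :
    ∀ (w : List Bool), (∀ i, ¬ IsValley w i) → w[0]? = some false → ∀ b ∈ w, b = false := by
  intro w
  induction w with
  | nil => intro _ _ b hb; simp at hb
  | cons c t ih =>
    intro hno h0 b hb
    have hc : c = false := by simpa using h0
    subst hc
    rcases List.mem_cons.1 hb with rfl | hbt
    · rfl
    · cases t with
      | nil => simp at hbt
      | cons c' t' =>
        have hc' : c' = false := by
          by_contra hcc
          have hcc' : c' = true := by simpa using hcc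
          exact hno 0 ⟨by simp, by simp [hcc']⟩
        exact ih (fun i hv => hno (i + 1) ((valley_cons false _ i).2 hv)) (by simp [hc']) b hbt

lemma no_valley_struct :
    ∀ (w : List Bool), (∀ i, ¬ IsValley w i) →
      w = List.replicate (w.count true) true ++ List.replicate (w.count false) false := by
  intro w
  induction w with
  | nil => intro _; rfl
  | cons b t ih =>
    intro hno
    cases b with
    | true =>
      have ht := ih (fun i hv => hno (i + 1) ((valley_cons true _ i).2 hv))
      have hct : (true :: t).count true = t.count true + 1 := by simp
      have hcf : (true :: t).count false = t.count false := by simp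
      rw [hct, hcf, List.replicate_succ, List.cons_append]
      exact congrArg (List.cons true) ht
    | false =>
      have hmem : ∀ b ∈ (false :: t), b = false :=
        all_false_of_no_valley _ hno (by simp)
      have hct : (false :: t).count true = 0 := by
        rw [List.count_eq_zero]
        intro h
        simpa using hmem true h
      have hcf : (false :: t).count false = (false :: t).length := by
        have := count_true_add_count_false (false :: t)
        omega
      rw [hct, hcf, List.replicate_zero, List.nil_append]
      exact List.eq_replicate_of_mem hmem

lemma eq_pyr_of_no_valley {w : List Bool} {m : ℕ} (hlen : w.length = 2 * m)
    (hz : prefixHeight w w.length = 0) (hno : ∀ i, ¬ IsValley w i) : w = pyr m := by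
  have hs := no_valley_struct w hno
  have hcc := count_true_add_count_false w
  rw [ph_length] at hz
  have hm : w.count true = m := by omega
  have hm' : w.count false = m := by omega
  rw [hm, hm'] at hs
  rw [hs]; rfl

/-! ### membership helpers -/

lemma head_true {n : ℕ} {w : List Bool} (hw : w ∈ nondecDyck n) (hn : 0 < n) :
    w[0]? = some true := by
  obtain ⟨hlen, ⟨hd, _⟩, _⟩ := hw
  have h1 : 0 < w.length := by omega
  have hs := ph_step w h1
  rw [ph_zero, zero_add] at hs
  have hd1 := hd (0 + 1) (by omega)
  rw [hs] at hd1
  refine step_up w h1 ?_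
  rw [ph_zero, hs]
  split at hd1
  · next h => rw [if_pos h]; norm_num
  · exact absurd hd1 (by norm_num)

lemma valley_lt_length {w : List Bool} {i : ℕ} (h : IsValley w i) : i + 1 < w.length := by
  have h2 := h.2
  by_contra hle
  push_neg at hle
  rw [List.getElem?_eq_none hle] at h2
  exact nomatch h2

/-! ### the two classes of words -/

/-- words with an intermediate return to 0 -/
def Bnset (n : ℕ) : Set (List Bool) :=
  {w | w ∈ nondecDyck n ∧ ∃ i, 0 < i ∧ i < w.length ∧ prefixHeight w i = 0}

/-- prime words -/
def Anset (n : ℕ) : Set (List Bool) :=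
  {w | w ∈ nondecDyck n ∧ ∀ i, 0 < i → i < w.length → prefixHeight w i ≠ 0}

lemma nondec_eq_union (n : ℕ) : nondecDyck n = Anset n ∪ Bnset n := by
  ext w
  constructor
  · intro hw
    by_cases h : ∀ i, 0 < i → i < w.length → prefixHeight w i ≠ 0
    · exact Or.inl ⟨hw, h⟩
    · push_neg at h
      obtain ⟨i, h1, h2, h3⟩ := h
      exact Or.inr ⟨hw, i, h1, h2, h3⟩
  · rintro (⟨hw, _⟩ | ⟨hw, _⟩) <;> exact hw

lemma AB_disjoint (n : ℕ) : Disjoint (Anset n) (Bnset n) := by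
  rw [Set.disjoint_left]
  rintro w ⟨_, hA⟩ ⟨_, i, h1, h2, h3⟩
  exact hA i h1 h2 h3

/-- Backward direction: gluing a pyramid in front of a nondecreasing Dyck word. -/
lemma pyr_append_mem {m k : ℕ} {y : List Bool} (hm : 1 ≤ m) (hk : 1 ≤ k)
    (hy : y ∈ nondecDyck k) : pyr m ++ y ∈ Bnset (m + k) := by
  obtain ⟨hylen, ⟨hyd, hyz⟩, hynd⟩ := hy
  have hy0 : y[0]? = some true := head_true ⟨hylen, ⟨hyd, hyz⟩, hynd⟩ (by omega)
  have hplen : (pyr m).length = 2 * m := pyr_length m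
  have hwlen : (pyr m ++ y).length = 2 * (m + k) := by
    rw [List.length_append, hplen, hylen]; ring
  have hsplit : ∀ j, prefixHeight (pyr m ++ y) (2 * m + j) = prefixHeight y j := by
    intro j
    have := ph_split (pyr m) y (by rw [hplen]; exact ph_pyr_full m) j
    rwa [hplen] at this
  -- heights
  have hph : ∀ i, i ≤ 2 * (m + k) → 0 ≤ prefixHeight (pyr m ++ y) i := by
    intro i hi
    by_cases hc : i ≤ 2 * m
    · rw [ph_append_left _ _ (by omega)]
      exact ph_pyr_nonneg m i
    · push_neg at hc
      have : i = 2 * m + (i - 2 * m) := by omega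
      rw [this, hsplit]
      exact hyd _ (by omega)
  have hz : prefixHeight (pyr m ++ y) ((pyr m ++ y).length) = 0 := by
    rw [hwlen, show 2 * (m + k) = 2 * m + 2 * k by ring, hsplit, ← hylen, hyz]
  -- valley characterization
  have hvchar : ∀ i, IsValley (pyr m ++ y) i ↔
      (i = 2 * m - 1 ∨ ∃ j, i = 2 * m + j ∧ IsValley y j) := by
    intro i
    constructor
    · intro hv
      by_cases hc : i < 2 * m
      · left
        have h1 : (pyr m ++ y)[i]? = (pyr m)[i]? := by
          rw [List.getElem?_append_left (by omega)]
        by_cases hc2 : i + 1 < 2 * m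
        · exfalso
          have h2 : (pyr m ++ y)[i + 1]? = (pyr m)[i + 1]? := by
            rw [List.getElem?_append_left (by omega)]
          have hif : (pyr m)[i]? = some false := by rw [← h1]; exact hv.1
          have him : m ≤ i := by
            by_contra him
            push_neg at him
            rw [pyr_getElem_lt him] at hif
            simp at hif
          have : (pyr m)[i + 1]? = some false := pyr_getElem_ge (by omega) (by omega)
          rw [← h2, hv.2] at this
          simp at this
        · omega
      · right
        push_neg at hc
        refine ⟨i - 2 * m, by omega, ?_⟩
        have := (valley_append_right (pyr m) y (i - 2 * m)).1
        rw [hplen] at this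
        exact this (by rwa [show 2 * m + (i - 2 * m) = i by omega])
    · rintro (rfl | ⟨j, rfl, hj⟩)
      · constructor
        · rw [List.getElem?_append_left (by omega)]
          exact pyr_getElem_ge (by omega) (by omega)
        · rw [show 2 * m - 1 + 1 = 2 * m by omega, ← hplen,
            List.getElem?_append_right le_rfl, hplen, Nat.sub_self]
          exact hy0
      · have := (valley_append_right (pyr m) y j).2 hj
        rwa [hplen] at this
  refine ⟨⟨hwlen, ⟨fun i hi => hph i (by rwa [hwlen] at hi), hz⟩, ?_⟩, 2 * m, by omega,
    by rw [hwlen]; omega, by rw [show 2*m = 2*m+0 by ring, hsplit, ph_zero]⟩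
  intro i j hvi hvj hij
  rcases (hvchar i).1 hvi with hi1 | ⟨i', rfl, hi'⟩
  · rcases (hvchar j).1 hvj with hj1 | ⟨j', rfl, hj'⟩
    · rw [hi1, hj1]
    · rw [hi1, show 2 * m - 1 + 1 = 2 * m + 0 by omega, hsplit, ph_zero,
        show 2 * m + j' + 1 = 2 * m + (j' + 1) by ring, hsplit]
      exact hyd (j' + 1) (by have := valley_lt_length hj'; omega)
  · rcases (hvchar j).1 hvj with hj1 | ⟨j', rfl, hj'⟩
    · omega
    · rw [show 2 * m + i' + 1 = 2 * m + (i' + 1) by ring, hsplit,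
        show 2 * m + j' + 1 = 2 * m + (j' + 1) by ring, hsplit]
      exact hynd i' j' hi' hj' (by omega)

lemma exists_min_zero (w : List Bool)
    (hP : ∃ i, 0 < i ∧ i < w.length ∧ prefixHeight w i = 0) :
    ∃ k, 0 < k ∧ k < w.length ∧ prefixHeight w k = 0 ∧
      ∀ i, 0 < i → i < k → prefixHeight w i ≠ 0 := by
  classical
  refine ⟨Nat.find hP, (Nat.find_spec hP).1, (Nat.find_spec hP).2.1, (Nat.find_spec hP).2.2, ?_⟩
  intro i h1 h2 h3
  have hiw : i < w.length := by
    have := (Nat.find_spec hP).2.1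
    omega
  exact Nat.find_min hP h2 ⟨h1, hiw, h3⟩

/-- Forward direction: every non-prime nondecreasing Dyck word splits off a pyramid. -/
lemma Bnset_struct {n : ℕ} {w : List Bool} (hw : w ∈ Bnset n) :
    ∃ m, 1 ≤ m ∧ m < n ∧ ∃ y ∈ nondecDyck (n - m), w = pyr m ++ y := by
  obtain ⟨⟨hlen, ⟨hd, hz⟩, hnd⟩, hex⟩ := hw
  obtain ⟨k, hk0, hklen, hkz, hmin⟩ := exists_min_zero w hex
  have hpos : ∀ i, 0 < i → i < k → 1 ≤ prefixHeight w i := by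
    intro i h1 h2
    have := hd i (by omega)
    have := hmin i h1 h2
    omega
  have hk2 : 2 ≤ k := by
    by_contra hlt
    push_neg at hlt
    have hk1 : k = 1 := by omega
    rw [hk1] at hkz
    have hs := ph_step w (show 0 < w.length by omega)
    rw [ph_zero, zero_add, hkz] at hs
    split at hs <;> omega
  -- w[k-1] = false, w[k] = true
  have hkm1 : w[k - 1]? = some false := by
    have h1 : k - 1 < w.length := by omega
    refine step_down w h1 ?_
    rw [show k - 1 + 1 = k by omega, hkz]
    have := hpos (k - 1) (by omega) (by omega)
    omega
  have hkt : w[k]? = some true := by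
    refine step_up w hklen ?_
    rw [hkz]
    have hs := ph_step w hklen
    rw [hkz, zero_add] at hs
    have := hd (k + 1) (by omega)
    split at hs <;> omega
  have hvk : IsValley w (k - 1) := ⟨hkm1, by rw [show k - 1 + 1 = k by omega]; exact hkt⟩
  -- no valley strictly before k-1
  have hnov : ∀ i, i + 1 < k → ¬ IsValley w i := by
    intro i hik hv
    have halt := hnd i (k - 1) hv hvk (by omega)
    rw [show k - 1 + 1 = k by omega, hkz] at halt
    have := hpos (i + 1) (by omega) hik
    omega
  -- the prefix is a pyramid
  set x := w.take k with hx
  have hxlen : x.length = k := by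
    rw [hx, List.length_take]; omega
  have hxnov : ∀ i, ¬ IsValley x i := by
    intro i hv
    have hi1 : i + 1 < k := by
      have := valley_lt_length hv; omega
    refine hnov i hi1 ?_
    refine ⟨?_, ?_⟩
    · have h1 := hv.1; rwa [hx, List.getElem?_take, if_pos (by omega)] at h1
    · have h2 := hv.2; rwa [hx, List.getElem?_take, if_pos (by omega)] at h2
  have hxz : prefixHeight x x.length = 0 := by
    rw [hxlen, hx, ph_take w le_rfl, hkz]
  -- k is even
  have hcc := count_true_add_count_false x
  have hkeven : k = 2 * (x.count true) := by
    rw [ph_length] at hxz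
    omega
  set m := x.count true with hm
  have hxpyr : x = pyr m := eq_pyr_of_no_valley (by omega) hxz hxnov
  have hm1 : 1 ≤ m := by omega
  have hmn : m < n := by omega
  set y := w.drop k with hy
  have hwxy : w = x ++ y := (List.take_append_drop k w).symm
  have hylen : y.length = 2 * (n - m) := by
    rw [hy, List.length_drop]; omega
  have hsplit : ∀ j, prefixHeight y j = prefixHeight w (k + j) := by
    intro j
    have h := ph_split x y hxz j
    rw [← hwxy, hxlen] at h
    exact h.symm
  have hyd : IsDyckWord y := by
    constructor
    · intro j hj
      rw [hsplit]
      exact hd (k + j) (by omega)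
    · rw [hsplit, ← hz]
      congr 1
      omega
  have hyvall : ∀ j, IsValley y j ↔ IsValley w (k + j) := by
    intro j
    have h := valley_append_right x y j
    rw [← hwxy, hxlen] at h
    exact h.symm
  have hynd : IsNondecDyck y := by
    refine ⟨hyd, fun i j hvi hvj hij => ?_⟩
    rw [hsplit, hsplit, show k + (i + 1) = (k + i) + 1 by ring,
      show k + (j + 1) = (k + j) + 1 by ring]
    exact hnd (k + i) (k + j) ((hyvall i).1 hvi) ((hyvall j).1 hvj) (by omega)
  exact ⟨m, hm1, hmn, y, ⟨hylen, hynd⟩, by rw [hwxy, hxpyr]⟩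

/-! ### prime words -/

lemma nest_mem {n : ℕ} {v : List Bool} (hv : v ∈ nondecDyck n) :
    (true :: (v ++ [false])) ∈ Anset (n + 1) := by
  obtain ⟨hvlen, ⟨hvd, hvz⟩, hvnd⟩ := hv
  set w := true :: (v ++ [false]) with hwdef
  have hwl2 : w.length = v.length + 1 + 1 := by rw [hwdef]; simp
  have hwlen : w.length = 2 * (n + 1) := by omega
  have hph : ∀ j, j ≤ v.length → prefixHeight w (1 + j) = 1 + prefixHeight v j := by
    intro j hj
    rw [hwdef, show 1 + j = j + 1 by ring, ph_cons_true, ph_append_left v [false] hj]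
  have hphend : prefixHeight w w.length = 0 := by
    have hf : prefixHeight [false] 1 = -1 := by
      rw [prefixHeight, List.take_of_length_le (by simp)]; simp
    rw [hwl2, hwdef, ph_cons_true, ph_append, show v.length + 1 - v.length = 1 by omega,
      ph_stable v (Nat.le_succ _), hvz, hf]
    ring
  have hphpos : ∀ i, 0 < i → i ≤ v.length + 1 → 1 ≤ prefixHeight w i := by
    intro i h1 h2
    rw [show i = 1 + (i - 1) by omega, hph (i - 1) (by omega)]
    have := hvd (i - 1) (by omega)
    omega
  -- valleys
  have hvall : ∀ i, IsValley w i ↔ ∃ j, i = j + 1 ∧ IsValley v j := by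
    intro i
    constructor
    · intro hv
      cases i with
      | zero =>
        exact absurd hv (not_valley_zero_of_head_true (by rw [hwdef]; simp))
      | succ j =>
        have h1 := hv.1
        have h2 := hv.2
        rw [hwdef] at h1 h2
        simp only [List.getElem?_cons_succ] at h1 h2
        have hjlt : j + 1 < v.length := by
          by_contra hle
          push_neg at hle
          rcases Nat.lt_or_ge (j + 1) (v.length + 1) with hc | hc
          · have hj : j + 1 = v.length := by omega
            rw [List.getElem?_append_right (by omega), hj, Nat.sub_self] at h2
            simp at h2
          · rw [List.getElem?_eq_none (by simp; omega)] at h2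
            exact nomatch h2
        refine ⟨j, rfl, ?_, ?_⟩
        · rwa [List.getElem?_append_left (by omega)] at h1
        · rwa [List.getElem?_append_left hjlt] at h2
    · rintro ⟨j, rfl, hj⟩
      have hjlt : j + 1 < v.length := valley_lt_length hj
      constructor
      · rw [hwdef]
        simp only [List.getElem?_cons_succ]
        rw [List.getElem?_append_left (by omega)]
        exact hj.1
      · rw [hwdef]
        simp only [List.getElem?_cons_succ]
        rw [List.getElem?_append_left hjlt]
        exact hj.2
  refine ⟨⟨hwlen, ⟨?_, hphend⟩, ?_⟩, ?_⟩
  · intro i hi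
    rcases Nat.eq_zero_or_pos i with rfl | hi0
    · rw [ph_zero]
    · rcases Nat.lt_or_ge i w.length with hc | hc
      · have hi' : i ≤ v.length + 1 := by omega
        have := hphpos i hi0 hi'
        omega
      · have hiw : i = w.length := by omega
        rw [hiw, hphend]
  · intro i j hvi hvj hij
    obtain ⟨i', rfl, hi'⟩ := (hvall i).1 hvi
    obtain ⟨j', rfl, hj'⟩ := (hvall j).1 hvj
    have e1 : prefixHeight w (i' + 1 + 1) = 1 + prefixHeight v (i' + 1) := by
      rw [show i' + 1 + 1 = 1 + (i' + 1) by ring]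
      exact hph (i' + 1) (by have := valley_lt_length hi'; omega)
    have e2 : prefixHeight w (j' + 1 + 1) = 1 + prefixHeight v (j' + 1) := by
      rw [show j' + 1 + 1 = 1 + (j' + 1) by ring]
      exact hph (j' + 1) (by have := valley_lt_length hj'; omega)
    rw [e1, e2]
    have := hvnd i' j' hi' hj' (by omega)
    omega
  · intro i h1 h2
    rw [hwlen] at h2
    have hi' : i ≤ v.length + 1 := by omega
    have := hphpos i h1 hi'
    omega

lemma Anset_struct {n : ℕ} (hn : 1 ≤ n) {w : List Bool} (hw : w ∈ Anset n) :
    ∃ v ∈ nondecDyck (n - 1), w = true :: (v ++ [false]) := by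
  obtain ⟨⟨hlen, ⟨hd, hz⟩, hnd⟩, hpr⟩ := hw
  have hlpos : 0 < w.length := by omega
  have h0 : w[0]? = some true := head_true ⟨hlen, ⟨hd, hz⟩, hnd⟩ (by omega)
  have hpos : ∀ i, 0 < i → i < w.length → 1 ≤ prefixHeight w i := by
    intro i h1 h2
    have := hd i (by omega)
    have := hpr i h1 h2
    omega
  have hlast : w[w.length - 1]? = some false := by
    refine step_down w (by omega) ?_
    rw [show w.length - 1 + 1 = w.length by omega, hz]
    have := hpos (w.length - 1) (by omega) (by omega)
    omega
  obtain ⟨a, t, rfl⟩ := List.exists_cons_of_ne_nil (List.ne_nil_of_length_pos hlpos)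
  have ha : a = true := by simpa using h0
  subst ha
  have htne : t ≠ [] := by
    intro h
    rw [h] at hlen
    simp at hlen
    omega
  have htlen0 : 0 < t.length := List.length_pos_iff.2 htne
  have hltc : (true :: t).length = t.length + 1 := by simp
  have hglast : t.getLast htne = false := by
    have h1 : (true :: t)[(true :: t).length - 1]? = t[t.length - 1]? := by
      rw [show (true :: t).length - 1 = (t.length - 1) + 1 by omega, List.getElem?_cons_succ]
    rw [h1, List.getElem?_eq_getElem (by omega)] at hlast
    rw [List.getLast_eq_getElem]
    exact Option.some.inj hlast
  have htl : t = t.dropLast ++ [t.getLast htne] := (List.dropLast_append_getLast htne).symm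
  set v := t.dropLast with hv
  have htlen : t.length = v.length + 1 := by
    conv_lhs => rw [htl]
    simp
  have hwv : true :: t = true :: (v ++ [false]) := by
    conv_lhs => rw [htl]
    rw [hglast]
  have hvlen : v.length = 2 * (n - 1) := by omega
  have hph : ∀ j, j ≤ v.length → prefixHeight (true :: t) (1 + j) = 1 + prefixHeight v j := by
    intro j hj
    rw [hwv, show 1 + j = j + 1 by ring, ph_cons_true, ph_append_left v [false] hj]
  have hvd : IsDyckWord v := by
    constructor
    · intro j hj
      rcases Nat.eq_zero_or_pos j with rfl | hj0
      · rw [ph_zero]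
      · have e := hph j hj
        have hlt : 1 + j < (true :: t).length := by omega
        have := hpos (1 + j) (by omega) hlt
        omega
    · have e : prefixHeight (true :: t) (1 + v.length) = 1 + prefixHeight v v.length :=
        hph v.length le_rfl
      have hil : 1 + v.length < (true :: t).length := by omega
      have hstep := ph_step (true :: t) hil
      have hgv : (true :: t)[1 + v.length]'hil = false := by
        have h' : (true :: t)[1 + v.length]? = some false := by
          rw [show 1 + v.length = (true :: t).length - 1 by omega]
          exact hlast
        rw [List.getElem?_eq_getElem hil] at h'
        exact Option.some.inj h'
      rw [hgv] at hstep
      rw [show 1 + v.length + 1 = (true :: t).length by omega, hz] at hstep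
      norm_num at hstep
      omega
  have hvall : ∀ i, IsValley (true :: t) i ↔ ∃ j, i = j + 1 ∧ IsValley v j := by
    intro i
    constructor
    · intro hvi
      cases i with
      | zero => exact absurd hvi (not_valley_zero_of_head_true h0)
      | succ j =>
        have h1 := hvi.1
        have h2 := hvi.2
        rw [hwv] at h1 h2
        simp only [List.getElem?_cons_succ] at h1 h2
        have hjlt : j + 1 < v.length := by
          by_contra hle
          push_neg at hle
          rcases Nat.lt_or_ge (j + 1) (v.length + 1) with hc | hc
          · have hj : j + 1 = v.length := by omega
            rw [List.getElem?_append_right (by omega), hj, Nat.sub_self] at h2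
            simp at h2
          · rw [List.getElem?_eq_none (by simp; omega)] at h2
            exact nomatch h2
        refine ⟨j, rfl, ?_, ?_⟩
        · rwa [List.getElem?_append_left (by omega)] at h1
        · rwa [List.getElem?_append_left hjlt] at h2
    · rintro ⟨j, rfl, hj⟩
      have hjlt : j + 1 < v.length := valley_lt_length hj
      constructor
      · rw [hwv]
        simp only [List.getElem?_cons_succ]
        rw [List.getElem?_append_left (by omega)]
        exact hj.1
      · rw [hwv]
        simp only [List.getElem?_cons_succ]
        rw [List.getElem?_append_left hjlt]
        exact hj.2
  have hvnd : IsNondecDyck v := by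
    refine ⟨hvd, fun i j hvi hvj hij => ?_⟩
    have e1 : prefixHeight (true :: t) (1 + (i + 1)) = 1 + prefixHeight v (i + 1) :=
      hph (i + 1) (by have := valley_lt_length hvi; omega)
    have e2 : prefixHeight (true :: t) (1 + (j + 1)) = 1 + prefixHeight v (j + 1) :=
      hph (j + 1) (by have := valley_lt_length hvj; omega)
    have h := hnd (i + 1) (j + 1) ((hvall (i + 1)).2 ⟨i, rfl, hvi⟩)
      ((hvall (j + 1)).2 ⟨j, rfl, hvj⟩) (by omega)
    rw [show i + 1 + 1 = 1 + (i + 1) by ring, show j + 1 + 1 = 1 + (j + 1) by ring,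
      e1, e2] at h
    omega
  exact ⟨v, ⟨hvlen, hvnd⟩, hwv⟩

/-! ### counting -/

lemma nondec_finite (n : ℕ) : (nondecDyck n).Finite :=
  (List.finite_length_eq Bool (2 * n)).subset (fun _ hw => hw.1)

lemma Anset_finite (n : ℕ) : (Anset n).Finite :=
  (nondec_finite n).subset (fun _ hw => hw.1)

lemma Bnset_finite (n : ℕ) : (Bnset n).Finite :=
  (nondec_finite n).subset (fun _ hw => hw.1)

lemma nest_inj : Function.Injective (fun v : List Bool => true :: (v ++ [false])) := by
  intro a b h
  simpa using h

lemma Anset_eq_image {n : ℕ} (hn : 1 ≤ n) :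
    Anset n = (fun v => true :: (v ++ [false])) '' nondecDyck (n - 1) := by
  ext w
  constructor
  · intro hw
    obtain ⟨v, hv, hwv⟩ := Anset_struct hn hw
    exact ⟨v, hv, hwv.symm⟩
  · rintro ⟨v, hv, rfl⟩
    have h := nest_mem hv
    rwa [Nat.sub_add_cancel hn] at h

lemma card_rec1 {n : ℕ} (hn : 1 ≤ n) :
    numNondecDyck n = numNondecDyck (n - 1) + (Bnset n).ncard := by
  rw [numNondecDyck, nondec_eq_union n,
    Set.ncard_union_eq (AB_disjoint n) (Anset_finite n) (Bnset_finite n)]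
  congr 1
  rw [Anset_eq_image hn, Set.ncard_image_of_injective _ nest_inj]
  rfl

/-- insert a `false` just before the first `false` (or at the end). -/
def insFst : List Bool → List Bool
  | [] => [false]
  | true :: l => true :: insFst l
  | false :: l => false :: false :: l

lemma insFst_true (l : List Bool) : insFst (true :: l) = true :: insFst l := rfl

lemma insFst_false (l : List Bool) : insFst (false :: l) = false :: false :: l := rfl

lemma insFst_spec (m : ℕ) (rest : List Bool) :
    insFst (List.replicate m true ++ false :: rest)
      = List.replicate m true ++ false :: false :: rest := by
  induction m with
  | zero => simp only [List.replicate_zero, List.nil_append, insFst_false]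
  | succ k ih => simp only [List.replicate_succ, List.cons_append, insFst_true, ih]

lemma pyr_succ_decomp (m : ℕ) (y : List Bool) :
    pyr (m + 1) ++ y = List.replicate (m + 1) true ++ false :: (List.replicate m false ++ y) := by
  simp [pyr, List.replicate_succ, List.append_assoc, List.cons_append]

lemma f2_pyr (m : ℕ) (y : List Bool) :
    true :: insFst (pyr (m + 1) ++ y) = pyr (m + 2) ++ y := by
  rw [pyr_succ_decomp, insFst_spec]
  rw [show m + 2 = (m + 1) + 1 from rfl]
  simp [pyr, List.replicate_succ, List.append_assoc, List.cons_append]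

lemma pyr_one (y : List Bool) : pyr 1 ++ y = true :: false :: y := by
  simp [pyr]

lemma pyr_append_second {M : ℕ} (h : 2 ≤ M) (y : List Bool) :
    (pyr M ++ y)[1]? = some true := by
  rw [List.getElem?_append_left (by rw [pyr_length]; omega)]
  exact pyr_getElem_lt (by omega)

lemma pyr_append_cancel {a b : ℕ} {y y' : List Bool} (ha : 1 ≤ a) (hb : 1 ≤ b)
    (h : pyr a ++ y = pyr b ++ y') : a = b ∧ y = y' := by
  have key : ∀ {a b : ℕ} {y y' : List Bool}, 1 ≤ a → 1 ≤ b → a < b →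
      pyr a ++ y = pyr b ++ y' → False := by
    intro a b y y' ha hb hlt heq
    have hz1 : prefixHeight (pyr a) ((pyr a).length) = 0 := by
      rw [pyr_length]; exact ph_pyr_full a
    have h1 : prefixHeight (pyr a ++ y) ((pyr a).length + 0) = 0 := by
      rw [ph_split _ _ hz1 0, ph_zero]
    rw [Nat.add_zero, pyr_length] at h1
    have h2 : prefixHeight (pyr b ++ y') (2 * a) = prefixHeight (pyr b) (2 * a) :=
      ph_append_left _ _ (by rw [pyr_length]; omega)
    have h3 := ph_pyr_pos (m := b) (i := 2 * a) (by omega) (by omega)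
    rw [heq, h2] at h1
    omega
  have hab : a = b := by
    rcases Nat.lt_trichotomy a b with hlt | heq | hgt
    · exact absurd (key ha hb hlt h) (by simp)
    · exact heq
    · exact absurd (key hb ha hgt h.symm) (by simp)
  subst hab
  exact ⟨rfl, List.append_cancel_left h⟩

lemma g1_inj : Function.Injective (fun y : List Bool => true :: false :: y) := by
  intro a b h
  simpa using h

lemma f2_injOn {n : ℕ} : Set.InjOn (fun z => true :: insFst z) (Bnset n) := by
  intro z1 h1 z2 h2 heq
  obtain ⟨m1, hm1, _, y1, hy1, rfl⟩ := Bnset_struct h1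
  obtain ⟨m2, hm2, _, y2, hy2, rfl⟩ := Bnset_struct h2
  obtain ⟨m1', rfl⟩ : ∃ m', m1 = m' + 1 := ⟨m1 - 1, by omega⟩
  obtain ⟨m2', rfl⟩ : ∃ m', m2 = m' + 1 := ⟨m2 - 1, by omega⟩
  simp only at heq
  rw [f2_pyr, f2_pyr] at heq
  obtain ⟨he, hy⟩ := pyr_append_cancel (by omega) (by omega) heq
  have hmm : m1' = m2' := by omega
  subst hmm
  rw [hy]

lemma Bparts_disjoint {n : ℕ} :
    Disjoint ((fun y => true :: false :: y) '' nondecDyck (n - 1))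
      ((fun z => true :: insFst z) '' Bnset (n - 1)) := by
  rw [Set.disjoint_left]
  rintro w ⟨y, _, rfl⟩ ⟨z, hz, hzeq⟩
  obtain ⟨m, hm, _, y', hy', rfl⟩ := Bnset_struct hz
  obtain ⟨m', rfl⟩ : ∃ m'', m = m'' + 1 := ⟨m - 1, by omega⟩
  simp only at hzeq
  rw [f2_pyr] at hzeq
  have h2 := pyr_append_second (M := m' + 2) (by omega) y'
  rw [hzeq] at h2
  simp at h2

lemma Bnset_eq {n : ℕ} (hn : 2 ≤ n) :
    Bnset n = (fun y => true :: false :: y) '' nondecDyck (n - 1)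
      ∪ (fun z => true :: insFst z) '' Bnset (n - 1) := by
  ext w
  constructor
  · intro hw
    obtain ⟨m, hm1, hmn, y, hy, rfl⟩ := Bnset_struct hw
    rcases Nat.lt_or_ge m 2 with h2 | h2
    · have hm : m = 1 := by omega
      subst hm
      exact Or.inl ⟨y, hy, (pyr_one y).symm⟩
    · obtain ⟨m', rfl⟩ : ∃ m', m = m' + 2 := ⟨m - 2, by omega⟩
      have hz := pyr_append_mem (m := m' + 1) (by omega) (k := n - (m' + 2)) (by omega) hy
      rw [show m' + 1 + (n - (m' + 2)) = n - 1 by omega] at hz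
      exact Or.inr ⟨pyr (m' + 1) ++ y, hz, f2_pyr m' y⟩
  · rintro (⟨y, hy, rfl⟩ | ⟨z, hz, rfl⟩)
    · have h := pyr_append_mem (m := 1) le_rfl (k := n - 1) (by omega) hy
      rw [show 1 + (n - 1) = n by omega, pyr_one] at h
      exact h
    · obtain ⟨m, hm1, hmn, y, hy, rfl⟩ := Bnset_struct hz
      obtain ⟨m', rfl⟩ : ∃ m'', m = m'' + 1 := ⟨m - 1, by omega⟩
      have h := pyr_append_mem (m := m' + 2) (by omega) (k := (n - 1) - (m' + 1)) (by omega) hy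
      rw [show m' + 2 + ((n - 1) - (m' + 1)) = n by omega] at h
      show (true :: insFst (pyr (m' + 1) ++ y)) ∈ Bnset n
      rw [f2_pyr]
      exact h

lemma card_B_succ {n : ℕ} (hn : 2 ≤ n) :
    (Bnset n).ncard = numNondecDyck (n - 1) + (Bnset (n - 1)).ncard := by
  rw [Bnset_eq hn,
    Set.ncard_union_eq Bparts_disjoint ((nondec_finite (n - 1)).image _)
      ((Bnset_finite (n - 1)).image _),
    Set.ncard_image_of_injective _ g1_inj, Set.ncard_image_of_injOn f2_injOn]
  rfl

lemma Bnset_one : Bnset 1 = ∅ := by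
  ext w
  simp only [Set.mem_empty_iff_false, iff_false]
  intro hw
  obtain ⟨m, hm1, hmn, _⟩ := Bnset_struct hw
  omega

lemma nondec_zero : nondecDyck 0 = {([] : List Bool)} := by
  ext w
  constructor
  · intro hw
    have h := hw.1
    have : w.length = 0 := by simpa using h
    simpa using List.length_eq_zero_iff.1 this
  · rintro rfl
    refine ⟨by simp, ⟨⟨?_, ?_⟩, ?_⟩⟩
    · intro i hi
      have : i = 0 := by simpa using hi
      rw [this, ph_zero]
    · rw [show ([] : List Bool).length = 0 from rfl, ph_zero]
    · intro i j hvi _ _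
      exact absurd hvi.1 (by simp)

lemma card_zero : numNondecDyck 0 = 1 := by
  rw [numNondecDyck, nondec_zero, Set.ncard_singleton]

lemma main_count : ∀ n, 1 ≤ n →
    numNondecDyck n = Nat.fib (2 * n - 1) ∧ (Bnset n).ncard = Nat.fib (2 * n - 2) := by
  intro n hn
  induction n, hn using Nat.le_induction with
  | base =>
    have hB : (Bnset 1).ncard = 0 := by rw [Bnset_one, Set.ncard_empty]
    have hd1 : numNondecDyck 1 = 1 := by
      rw [card_rec1 le_rfl, hB, show (1 : ℕ) - 1 = 0 from rfl, card_zero]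
    constructor
    · rw [hd1]; norm_num [Nat.fib_one]
    · rw [hB]; norm_num [Nat.fib_zero]
  | succ n hn ih =>
    have hb : (Bnset (n + 1)).ncard = Nat.fib (2 * (n + 1) - 2) := by
      rw [card_B_succ (by omega), Nat.add_sub_cancel, ih.1, ih.2,
        show 2 * (n + 1) - 2 = (2 * n - 2) + 2 by omega, Nat.fib_add_two,
        show 2 * n - 2 + 1 = 2 * n - 1 by omega]
      omega
    refine ⟨?_, hb⟩
    rw [card_rec1 (by omega), Nat.add_sub_cancel, ih.1, hb,
      show 2 * (n + 1) - 1 = (2 * n - 1) + 2 by omega, Nat.fib_add_two,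
      show 2 * n - 1 + 1 = 2 * (n + 1) - 2 by omega]

end NondecAux

/-- For every `n ≥ 1`, the number of nondecreasing Dyck words of semilength `n`
equals the Fibonacci number `F(2n − 1)` (with `F 1 = F 2 = 1`). -/
theorem nondecDyck_eq_fib (n : ℕ) (hn : 1 ≤ n) :
    numNondecDyck n = Nat.fib (2 * n - 1) := by
  exact (NondecAux.main_count n hn).1
end

section
/- In the ring of formal power series over ℤ, the generating function D(X) = Σ_{n≥0} d(n) X^n of the numbers d(n) of nondecreasing Dyck words of semilength n (with d(0) = 1, counting the empty word) satisfies (1 − 3X + X²)·D(X) = 1 − 2X, i.e. D(X) = (1 − 2X)/(1 − 3X + X²). -/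
namespace NDyck

def decode : List (ℕ × ℕ) → List Bool
  | [] => []
  | p :: M => List.replicate p.1 true ++ List.replicate p.2 false ++ decode M

def Bsum (M : List (ℕ × ℕ)) (t : ℕ) : ℕ := ((M.take t).map fun p => p.1 + p.2).sum

def Ssum (M : List (ℕ × ℕ)) (t : ℕ) : ℤ := ((M.take t).map fun p => (p.1 : ℤ) - p.2).sum

lemma count_true_decode (M : List (ℕ × ℕ)) :
    (decode M).count true = (M.map Prod.fst).sum := by
  induction M with
  | nil => rfl
  | cons p M ih =>
    simp [decode, List.count_append, ih, List.count_replicate]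

lemma count_false_decode (M : List (ℕ × ℕ)) :
    (decode M).count false = (M.map Prod.snd).sum := by
  induction M with
  | nil => rfl
  | cons p M ih =>
    simp [decode, List.count_append, ih, List.count_replicate]

lemma length_decode (M : List (ℕ × ℕ)) :
    (decode M).length = (M.map Prod.fst).sum + (M.map Prod.snd).sum := by
  induction M with
  | nil => rfl
  | cons p M ih => simp [decode, ih]; ring

lemma hBlock (a b : ℕ) (v : List Bool) (j : ℕ) :
    prefixHeight (List.replicate a true ++ List.replicate b false ++ v) j =
      ((min j a : ℕ) : ℤ) - ((min (j - a) b : ℕ) : ℤ) + prefixHeight v (j - a - b) := by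
  unfold prefixHeight
  rw [List.append_assoc, List.take_append, List.take_append,
    List.take_replicate, List.take_replicate]
  simp [List.count_append, List.count_replicate, List.length_replicate]
  push_cast
  ring

end NDyck

namespace NDyck

lemma prefixHeight_zero (v : List Bool) : prefixHeight v 0 = 0 := by simp [prefixHeight]

lemma Bsum_zero (M : List (ℕ × ℕ)) : Bsum M 0 = 0 := by simp [Bsum]

lemma Ssum_zero (M : List (ℕ × ℕ)) : Ssum M 0 = 0 := by simp [Ssum]

lemma Bsum_cons (p : ℕ × ℕ) (M : List (ℕ × ℕ)) (t : ℕ) :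
    Bsum (p :: M) (t + 1) = p.1 + p.2 + Bsum M t := by simp [Bsum]

lemma Ssum_cons (p : ℕ × ℕ) (M : List (ℕ × ℕ)) (t : ℕ) :
    Ssum (p :: M) (t + 1) = ((p.1 : ℤ) - p.2) + Ssum M t := by simp [Ssum]

lemma hB (M : List (ℕ × ℕ)) (t : ℕ) :
    prefixHeight (decode M) (Bsum M t) = Ssum M t := by
  induction M generalizing t with
  | nil => simp [Bsum, Ssum, prefixHeight, decode]
  | cons p M ih =>
    cases t with
    | zero => simp [Bsum_zero, Ssum_zero, prefixHeight_zero]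
    | succ t =>
      rw [Bsum_cons, Ssum_cons, decode, hBlock]
      have h1 : min (p.1 + p.2 + Bsum M t) p.1 = p.1 := by omega
      have h2 : min (p.1 + p.2 + Bsum M t - p.1) p.2 = p.2 := by omega
      have h3 : p.1 + p.2 + Bsum M t - p.1 - p.2 = Bsum M t := by omega
      rw [h1, h2, h3, ih]

lemma nonneg_aux (M : List (ℕ × ℕ)) (c : ℤ) (hc : 0 ≤ c)
    (h : ∀ t, t ≤ M.length → 0 ≤ c + Ssum M t) :
    ∀ i, 0 ≤ c + prefixHeight (decode M) i := by
  induction M generalizing c with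
  | nil => intro i; simpa [decode, prefixHeight] using hc
  | cons p M ih =>
    intro i
    have hc' : 0 ≤ c + ((p.1 : ℤ) - p.2) := by
      have := h 1 (by simp)
      rwa [Ssum_cons, Ssum_zero, add_zero] at this
    rw [decode, hBlock]
    rcases le_or_gt (p.1 + p.2) i with hi | hi
    · have key := ih (c + ((p.1 : ℤ) - p.2)) hc' (fun t ht => by
        have := h (t + 1) (by simpa using ht)
        rwa [Ssum_cons, ← add_assoc] at this) (i - p.1 - p.2)
      omega
    · have h0 : i - p.1 - p.2 = 0 := by omega
      rw [h0, prefixHeight_zero]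
      omega

lemma getElem?_block (a b : ℕ) (v : List Bool) (i : ℕ) :
    (List.replicate a true ++ List.replicate b false ++ v)[i]? =
      if i < a then some true else if i < a + b then some false else v[i - (a + b)]? := by
  rw [List.append_assoc]
  rcases lt_or_ge i a with h | h
  · rw [List.getElem?_append_left (by simpa using h)]
    simp [List.getElem?_replicate, h]
  · rw [List.getElem?_append_right (by simpa using h)]
    simp only [List.length_replicate]
    rcases lt_or_ge i (a + b) with h2 | h2
    · rw [List.getElem?_append_left (by simp only [List.length_replicate]; omega)]
      rw [List.getElem?_replicate]
      have h3 : i - a < b := by omega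
      simp [h3, h2, Nat.not_lt.mpr h]
    · rw [List.getElem?_append_right (by simp only [List.length_replicate]; omega)]
      have h3 : i - a - b = i - (a + b) := by omega
      simp [h3, Nat.not_lt.mpr h, Nat.not_lt.mpr h2]

lemma getElem?_decode_zero (M : List (ℕ × ℕ)) (hpos : ∀ p ∈ M, 1 ≤ p.1 ∧ 1 ≤ p.2)
    (hM : M ≠ []) : (decode M)[0]? = some true := by
  match M with
  | p :: M =>
    have ha := (hpos p (by simp)).1
    rw [decode, getElem?_block, if_pos (by omega)]

lemma isValley_decode : ∀ (M : List (ℕ × ℕ)) (i : ℕ), (∀ p ∈ M, 1 ≤ p.1 ∧ 1 ≤ p.2) →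
    (IsValley (decode M) i ↔ ∃ t, 1 ≤ t ∧ t < M.length ∧ i + 1 = Bsum M t) := by
  intro M
  induction M with
  | nil => intro i _; simp [IsValley, decode]
  | cons p M ih =>
    intro i hpos
    obtain ⟨ha, hb⟩ := hpos p (by simp)
    have hpos' : ∀ q ∈ M, 1 ≤ q.1 ∧ 1 ≤ q.2 := fun q hq => hpos q (by simp [hq])
    rw [decode]
    rcases lt_trichotomy (i + 1) (p.1 + p.2) with hi | hi | hi
    · constructor
      · rintro ⟨h1, h2⟩
        rw [getElem?_block] at h1 h2
        rcases lt_or_ge i p.1 with hA | hA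
        · rw [if_pos hA] at h1; exact absurd h1 (by simp)
        · rw [if_neg (by omega), if_pos (by omega)] at h2
          exact absurd h2 (by simp)
      · rintro ⟨t, ht1, ht2, ht3⟩
        exfalso
        cases t with
        | zero => omega
        | succ t => rw [Bsum_cons] at ht3; have : 0 ≤ Bsum M t := Nat.zero_le _; omega
    · have h1 : (List.replicate p.1 true ++ List.replicate p.2 false ++ decode M)[i]? =
          some false := by
        rw [getElem?_block, if_neg (by omega), if_pos (by omega)]
      have h2e : (List.replicate p.1 true ++ List.replicate p.2 false ++ decode M)[i + 1]? =
          (decode M)[0]? := by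
        rw [getElem?_block, if_neg (by omega), if_neg (by omega)]
        congr 1
        omega
      constructor
      · rintro ⟨_, h2⟩
        rw [h2e] at h2
        have hM : M ≠ [] := by rintro rfl; simp [decode] at h2
        exact ⟨1, le_refl _, by simpa using List.length_pos_iff.mpr hM,
          by rw [Bsum_cons, Bsum_zero]; omega⟩
      · rintro ⟨t, ht1, ht2, _⟩
        have hM : M ≠ [] := by
          rintro rfl
          simp at ht2
          omega
        exact ⟨h1, by rw [h2e]; exact getElem?_decode_zero M hpos' hM⟩
    · have e1 : (List.replicate p.1 true ++ List.replicate p.2 false ++ decode M)[i]? =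
          (decode M)[i - (p.1 + p.2)]? := by
        rw [getElem?_block, if_neg (by omega), if_neg (by omega)]
      have e2 : (List.replicate p.1 true ++ List.replicate p.2 false ++ decode M)[i + 1]? =
          (decode M)[(i - (p.1 + p.2)) + 1]? := by
        rw [getElem?_block, if_neg (by omega), if_neg (by omega)]
        congr 1
        omega
      unfold IsValley
      rw [e1, e2]
      constructor
      · intro hv
        obtain ⟨t, ht1, ht2, ht3⟩ := (ih (i - (p.1 + p.2)) hpos').mp hv
        refine ⟨t + 1, by omega, by simp; omega, ?_⟩
        rw [Bsum_cons]
        omega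
      · rintro ⟨t, ht1, ht2, ht3⟩
        cases t with
        | zero => omega
        | succ t =>
          rw [Bsum_cons] at ht3
          have ht0 : 1 ≤ t := by
            rcases Nat.eq_zero_or_pos t with rfl | h
            · rw [Bsum_zero] at ht3; omega
            · exact h
          exact (ih (i - (p.1 + p.2)) hpos').mpr ⟨t, ht0, by simpa using ht2, by omega⟩

lemma shrink (w : List Bool) (h : w ≠ []) :
    ((w.dropWhile (fun b => b)).dropWhile (fun b => !b)).length < w.length := by
  cases w with
  | nil => exact absurd rfl h
  | cons x xs =>
    cases x
    · rw [List.dropWhile_cons_of_neg (by simp), List.dropWhile_cons_of_pos (by simp)]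
      have := (List.dropWhile_suffix (l := xs) (fun b => !b)).length_le
      simp only [List.length_cons]
      omega
    · rw [List.dropWhile_cons_of_pos (by simp)]
      have h1 := (List.dropWhile_suffix (l := xs) (fun b => b)).length_le
      have h2 := (List.dropWhile_suffix (l := xs.dropWhile (fun b => b)) (fun b => !b)).length_le
      simp only [List.length_cons]
      omega

def encode (w : List Bool) : List (ℕ × ℕ) :=
  if h : w = [] then []
  else
    ((w.takeWhile (fun b => b)).length,
      ((w.dropWhile (fun b => b)).takeWhile (fun b => !b)).length) ::
      encode ((w.dropWhile (fun b => b)).dropWhile (fun b => !b))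
termination_by w.length
decreasing_by exact shrink w h

lemma encode_nil : encode [] = [] := by rw [encode]; simp

lemma head?_decode (M : List (ℕ × ℕ)) (hpos : ∀ p ∈ M, 1 ≤ p.1 ∧ 1 ≤ p.2)
    (hM : M ≠ []) : (decode M).head? = some true := by
  match M with
  | q :: N =>
    have hq := (hpos q (by simp)).1
    obtain ⟨k, hk⟩ : ∃ k, q.1 = k + 1 := ⟨q.1 - 1, by omega⟩
    rw [decode, hk, List.replicate_succ]
    simp

lemma decode_encode : ∀ (n : ℕ) (w : List Bool), w.length ≤ n → decode (encode w) = w := by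
  intro n
  induction n with
  | zero =>
    intro w hw
    have : w = [] := List.length_eq_zero_iff.mp (Nat.le_zero.mp hw)
    subst this
    rw [encode_nil]; rfl
  | succ n ih =>
    intro w hw
    by_cases h : w = []
    · subst h; rw [encode_nil]; rfl
    · rw [encode, dif_neg h, decode]
      have ht : List.replicate (w.takeWhile (fun b => b)).length true =
          w.takeWhile (fun b => b) := by
        symm
        rw [List.eq_replicate_iff]
        exact ⟨rfl, fun b hb => by simpa using List.mem_takeWhile_imp hb⟩
      have hf : List.replicate ((w.dropWhile (fun b => b)).takeWhile (fun b => !b)).length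
          false = (w.dropWhile (fun b => b)).takeWhile (fun b => !b) := by
        symm
        rw [List.eq_replicate_iff]
        exact ⟨rfl, fun b hb => by simpa using List.mem_takeWhile_imp hb⟩
      rw [ht, hf, ih _ (by have := shrink w h; omega)]
      rw [List.append_assoc, List.takeWhile_append_dropWhile, List.takeWhile_append_dropWhile]

lemma encode_pos : ∀ (n : ℕ) (w : List Bool), w.length ≤ n → w ≠ [] →
    w.head? = some true → w.getLast? = some false →
    ∀ p ∈ encode w, 1 ≤ p.1 ∧ 1 ≤ p.2 := by
  intro n
  induction n with
  | zero =>
    intro w hw h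
    exact absurd (List.length_eq_zero_iff.mp (Nat.le_zero.mp hw)) h
  | succ n ih =>
    intro w hw hne hhead hlast p hp
    rw [encode, dif_neg hne] at hp
    have hw1ne : w.dropWhile (fun b => b) ≠ [] := by
      intro hcon
      have hall := List.dropWhile_eq_nil_iff.mp hcon
      have hmem := List.mem_of_getLast? hlast
      have := hall false hmem
      simp at this
    obtain ⟨y, ys, hy⟩ := List.exists_cons_of_ne_nil hw1ne
    have hyf : y = false := by
      have := List.head?_dropWhile_not (fun b => b) w
      rw [hy] at this
      simpa using this
    rcases List.mem_cons.mp hp with rfl | hp'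
    · constructor
      · cases w with
        | nil => exact absurd rfl hne
        | cons x xs =>
          have hx : x = true := by simpa using hhead
          subst hx
          rw [List.takeWhile_cons_of_pos (by simp)]
          simp
      · rw [hy, hyf, List.takeWhile_cons_of_pos (by simp)]
        simp
    · set w₂ := (w.dropWhile (fun b => b)).dropWhile (fun b => !b) with hw₂
      by_cases h2 : w₂ = []
      · rw [h2, encode_nil] at hp'
        simp at hp'
      · have hlen : w₂.length ≤ n := by
          have := shrink w hne
          rw [← hw₂] at this
          omega
        refine ih w₂ hlen h2 ?_ ?_ p hp'
        · obtain ⟨z, zs, hz⟩ := List.exists_cons_of_ne_nil h2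
          have := List.head?_dropWhile_not (fun b => !b) (w.dropWhile (fun b => b))
          rw [← hw₂, hz] at this
          simp at this
          rw [hz, this]
          simp
        · obtain ⟨t, ht⟩ := List.dropWhile_suffix (l := w.dropWhile (fun b => b)) (fun b => !b)
          obtain ⟨s, hs⟩ := List.dropWhile_suffix (l := w) (fun b => b)
          rw [← hw₂] at ht
          have hws : w = s ++ (t ++ w₂) := by rw [← ht] at hs; rw [← hs]
          rw [hws, List.getLast?_append, List.getLast?_append] at hlast
          cases hl2 : w₂.getLast? with
          | none => exact absurd (List.getLast?_eq_none_iff.mp hl2) h2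
          | some b =>
            rw [hl2] at hlast
            simpa using hlast

lemma encode_decode : ∀ (M : List (ℕ × ℕ)), (∀ p ∈ M, 1 ≤ p.1 ∧ 1 ≤ p.2) →
    encode (decode M) = M := by
  intro M
  induction M with
  | nil => intro _; rw [decode]; exact encode_nil
  | cons p M ih =>
    intro hpos
    obtain ⟨ha, hb⟩ := hpos p (by simp)
    have hpos' : ∀ q ∈ M, 1 ≤ q.1 ∧ 1 ≤ q.2 := fun q hq => hpos q (by simp [hq])
    obtain ⟨k, hk⟩ : ∃ k, p.2 = k + 1 := ⟨p.2 - 1, by omega⟩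
    rw [decode]
    have hne : List.replicate p.1 true ++ List.replicate p.2 false ++ decode M ≠ [] := by
      simp
      intro h1 _
      omega
    rw [encode, dif_neg hne, List.append_assoc]
    have e1 : (List.replicate p.1 true ++ (List.replicate p.2 false ++ decode M)).takeWhile
        (fun b => b) = List.replicate p.1 true := by
      rw [List.takeWhile_append_of_pos (by simp), hk, List.replicate_succ, List.cons_append,
        List.takeWhile_cons_of_neg (by simp)]
      simp
    have e2 : (List.replicate p.1 true ++ (List.replicate p.2 false ++ decode M)).dropWhile
        (fun b => b) = List.replicate p.2 false ++ decode M := by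
      conv_lhs => rw [List.dropWhile_append_of_pos (by simp), hk, List.replicate_succ,
        List.cons_append, List.dropWhile_cons_of_neg (by simp)]
      rw [hk, List.replicate_succ, List.cons_append]
    have e3 : (List.replicate p.2 false ++ decode M).takeWhile (fun b => !b) =
        List.replicate p.2 false := by
      rw [List.takeWhile_append_of_pos (by simp)]
      by_cases hM : decode M = []
      · rw [hM]; simp
      · obtain ⟨y, ys, hy⟩ := List.exists_cons_of_ne_nil hM
        have hyt : y = true := by
          have hM' : M ≠ [] := by rintro rfl; simp [decode] at hy
          have := head?_decode M hpos' hM'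
          rw [hy] at this
          simpa using this
        rw [hy, hyt, List.takeWhile_cons_of_neg (by simp)]
        simp
    have e4 : (List.replicate p.2 false ++ decode M).dropWhile (fun b => !b) = decode M := by
      rw [List.dropWhile_append_of_pos (by simp)]
      by_cases hM : decode M = []
      · rw [hM]; simp
      · obtain ⟨y, ys, hy⟩ := List.exists_cons_of_ne_nil hM
        have hyt : y = true := by
          have hM' : M ≠ [] := by rintro rfl; simp [decode] at hy
          have := head?_decode M hpos' hM'
          rw [hy] at this
          simpa using this
        rw [hy, hyt, List.dropWhile_cons_of_neg (by simp)]
    rw [e1, e2, e3, e4, ih hpos']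
    simp


lemma Bsum_le (M : List (ℕ × ℕ)) : ∀ t u, t ≤ u → Bsum M t ≤ Bsum M u := by
  induction M with
  | nil => intro t u _; simp [Bsum]
  | cons p M ih =>
    intro t u htu
    cases t with
    | zero => rw [Bsum_zero]; exact Nat.zero_le _
    | succ t =>
      cases u with
      | zero => omega
      | succ u =>
        rw [Bsum_cons, Bsum_cons]
        have := ih t u (by omega)
        omega

lemma Bsum_lt_of (M : List (ℕ × ℕ)) (hpos : ∀ p ∈ M, 1 ≤ p.1 ∧ 1 ≤ p.2) :
    ∀ t u, t < u → u ≤ M.length → Bsum M t < Bsum M u := by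
  induction M with
  | nil => intro t u h1 h2; simp at h2; omega
  | cons p M ih =>
    intro t u h1 h2
    obtain ⟨ha, hb⟩ := hpos p (by simp)
    have hpos' : ∀ q ∈ M, 1 ≤ q.1 ∧ 1 ≤ q.2 := fun q hq => hpos q (by simp [hq])
    cases u with
    | zero => omega
    | succ u =>
      rw [Bsum_cons]
      cases t with
      | zero => rw [Bsum_zero]; have := Nat.zero_le (Bsum M u); omega
      | succ t =>
        rw [Bsum_cons]
        have := ih hpos' t u (by omega) (by simpa using h2)
        omega

lemma Bsum_full (M : List (ℕ × ℕ)) :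
    Bsum M M.length = (M.map Prod.fst).sum + (M.map Prod.snd).sum := by
  induction M with
  | nil => simp [Bsum]
  | cons p M ih => rw [List.length_cons, Bsum_cons, ih]; simp; ring

lemma Ssum_succ (M : List (ℕ × ℕ)) (t : ℕ) (h : t < M.length) :
    Ssum M (t + 1) = Ssum M t + ((M[t].1 : ℤ) - M[t].2) := by
  unfold Ssum
  rw [List.map_take, List.map_take, List.sum_take_succ _ t (by simpa using h), List.getElem_map]

lemma Ssum_full (M : List (ℕ × ℕ)) :
    Ssum M M.length = ((M.map Prod.fst).sum : ℤ) - ((M.map Prod.snd).sum : ℤ) := by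
  induction M with
  | nil => simp [Ssum]
  | cons p M ih =>
    rw [List.length_cons, Ssum_cons, ih]
    simp only [List.map_cons, List.sum_cons]
    push_cast
    ring

lemma Ssum_nonneg (M : List (ℕ × ℕ)) (hd : ∀ p ∈ M.dropLast, p.2 ≤ p.1) :
    ∀ t, t < M.length → 0 ≤ Ssum M t := by
  intro t
  induction t with
  | zero => intro _; rw [Ssum_zero]
  | succ t ih =>
    intro ht
    have ht' : t < M.length := by omega
    rw [Ssum_succ M t ht']
    have hmem : M[t] ∈ M.dropLast := by
      have hlt : t < M.dropLast.length := by
        rw [List.length_dropLast]; omega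
      have : M.dropLast[t] = M[t] := List.getElem_dropLast hlt
      rw [← this]
      exact List.getElem_mem hlt
    have := hd _ hmem
    have := ih (by omega)
    omega

lemma Ssum_mono (M : List (ℕ × ℕ)) (hd : ∀ p ∈ M.dropLast, p.2 ≤ p.1) :
    ∀ t u, t ≤ u → u < M.length → Ssum M t ≤ Ssum M u := by
  intro t u htu hu
  have key : ∀ k, t + k < M.length → Ssum M t ≤ Ssum M (t + k) := by
    intro k
    induction k with
    | zero => intro _; exact le_refl _
    | succ k ih =>
      intro hk
      have h1 : t + k < M.length := by omega
      rw [show t + (k+1) = (t+k)+1 by ring, Ssum_succ M (t+k) h1]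
      have hmem : M[t+k] ∈ M.dropLast := by
        have hlt : t + k < M.dropLast.length := by rw [List.length_dropLast]; omega
        have : M.dropLast[t+k] = M[t+k] := List.getElem_dropLast hlt
        rw [← this]
        exact List.getElem_mem hlt
      have := hd _ hmem
      have := ih (by omega)
      omega
  have := key (u - t) (by omega)
  rw [show t + (u - t) = u by omega] at this
  exact this

lemma count_bool (w : List Bool) : w.count true + w.count false = w.length := by
  induction w with
  | nil => rfl
  | cons x xs ih => cases x <;> simp [List.count_cons] <;> omega

lemma prefixHeight_length (w : List Bool) :
    prefixHeight w w.length = (w.count true : ℤ) - w.count false := by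
  unfold prefixHeight
  rw [List.take_length]

def Codes (n : ℕ) : Set (List (ℕ × ℕ)) :=
  {M | (∀ p ∈ M, 1 ≤ p.1 ∧ 1 ≤ p.2) ∧ (∀ p ∈ M.dropLast, p.2 ≤ p.1) ∧
    (M.map Prod.fst).sum = n ∧ (M.map Prod.snd).sum = n}

lemma decode_mem (n : ℕ) (M : List (ℕ × ℕ)) (hM : M ∈ Codes n) :
    decode M ∈ nondecDyck n := by
  obtain ⟨hpos, hd, hf, hs⟩ := hM
  have hSnn : ∀ t, t ≤ M.length → 0 ≤ Ssum M t := by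
    intro t ht
    rcases lt_or_eq_of_le ht with h | h
    · exact Ssum_nonneg M hd t h
    · rw [h, Ssum_full, hf, hs]; simp
  have hlen : (decode M).length = 2 * n := by
    rw [length_decode, hf, hs]; ring
  refine ⟨hlen, ⟨?_, ?_⟩, ?_⟩
  · intro i _
    have := nonneg_aux M 0 le_rfl (fun t ht => by simpa using hSnn t ht) i
    simpa using this
  · rw [prefixHeight_length, count_true_decode, count_false_decode, hf, hs]
    ring
  · intro i j hvi hvj hij
    obtain ⟨t, ht1, ht2, ht3⟩ := (isValley_decode M i hpos).mp hvi
    obtain ⟨u, hu1, hu2, hu3⟩ := (isValley_decode M j hpos).mp hvj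
    have htu : t ≤ u := by
      by_contra hc
      have := Bsum_lt_of M hpos u t (by omega) (by omega)
      omega
    rw [show i + 1 = Bsum M t from ht3, show j + 1 = Bsum M u from hu3, hB, hB]
    exact Ssum_mono M hd t u htu hu2

lemma encode_mem (n : ℕ) (w : List Bool) (hw : w ∈ nondecDyck n) :
    encode w ∈ Codes n ∧ decode (encode w) = w := by
  obtain ⟨hlen, ⟨hnn, htot⟩, hval⟩ := hw
  by_cases hne : w = []
  · subst hne
    have : n = 0 := by simp at hlen; omega
    subst this
    rw [encode_nil]
    exact ⟨⟨by simp, by simp, rfl, rfl⟩, rfl⟩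
  · -- counts
    have hcount : w.count true = n ∧ w.count false = n := by
      have h1 := count_bool w
      have h2 : (w.count true : ℤ) - w.count false = 0 := by
        rw [← prefixHeight_length]; exact htot
      rw [hlen] at h1
      omega
    -- head is true
    have hhead : w.head? = some true := by
      obtain ⟨x, xs, rfl⟩ := List.exists_cons_of_ne_nil hne
      have := hnn 1 (by simp)
      cases x
      · exfalso
        have e : prefixHeight (false :: xs) 1 = -1 := by
          simp [prefixHeight, List.take_succ_cons]
        rw [e] at this
        omega
      · rfl
    -- last is false
    have hlast : w.getLast? = some false := by
      obtain ⟨ys, x, rfl⟩ := (List.eq_nil_or_concat' w).resolve_left hne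
      have h1 := hnn (ys.length) (by simp)
      rw [List.getLast?_append]
      cases x
      · rfl
      · exfalso
        have e1 : prefixHeight (ys ++ [true]) ys.length = (ys.count true : ℤ) - ys.count false := by
          unfold prefixHeight
          rw [List.take_append, List.take_length, Nat.sub_self, List.take_zero,
            List.append_nil]
        have e2 : prefixHeight (ys ++ [true]) (ys ++ [true]).length =
            ((ys.count true : ℤ) + 1) - ys.count false := by
          rw [prefixHeight_length]
          simp [List.count_append]
        rw [e1] at h1
        rw [e2] at htot
        omega
    set M := encode w with hM
    have hdec : decode M = w := decode_encode w.length w le_rfl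
    have hpos : ∀ p ∈ M, 1 ≤ p.1 ∧ 1 ≤ p.2 :=
      encode_pos w.length w le_rfl hne hhead hlast
    refine ⟨⟨hpos, ?_, ?_, ?_⟩, hdec⟩
    · -- dropLast condition
      intro p hp
      obtain ⟨t, hlt, rfl⟩ := List.getElem_of_mem hp
      rw [List.getElem_dropLast]
      rw [List.length_dropLast] at hlt
      have hlen2 : t + 1 < M.length := by omega
      rcases Nat.eq_zero_or_pos t with rfl | ht0
      · -- from Dyck nonneg at Bsum M 1
        have hb1 : Bsum M 1 ≤ w.length := by
          rw [← hdec, length_decode, ← Bsum_full]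
          exact Bsum_le M 1 M.length (by omega)
        have := hnn (Bsum M 1) hb1
        rw [← hdec, hB, Ssum_succ M 0 (by omega), Ssum_zero, zero_add] at this
        omega
      · -- from valley comparison at boundaries t and t+1
        have hvt : IsValley w (Bsum M t - 1) := by
          rw [← hdec]
          refine (isValley_decode M _ hpos).mpr ⟨t, ht0, by omega, ?_⟩
          have : 0 < Bsum M t := by
            have := Bsum_lt_of M hpos 0 t ht0 (by omega)
            rw [Bsum_zero] at this
            omega
          omega
        have hvt1 : IsValley w (Bsum M (t+1) - 1) := by
          rw [← hdec]
          refine (isValley_decode M _ hpos).mpr ⟨t+1, by omega, by omega, ?_⟩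
          have : 0 < Bsum M (t+1) := by
            have := Bsum_lt_of M hpos 0 (t+1) (by omega) (by omega)
            rw [Bsum_zero] at this
            omega
          omega
        have hle : Bsum M t - 1 ≤ Bsum M (t+1) - 1 := by
          have := Bsum_le M t (t+1) (by omega)
          omega
        have hcmp := hval _ _ hvt hvt1 hle
        have h0t : 0 < Bsum M t := by
          have := Bsum_lt_of M hpos 0 t ht0 (by omega)
          rw [Bsum_zero] at this
          omega
        have h0t1 : 0 < Bsum M (t+1) := by
          have := Bsum_lt_of M hpos 0 (t+1) (by omega) (by omega)
          rw [Bsum_zero] at this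
          omega
        rw [show Bsum M t - 1 + 1 = Bsum M t by omega,
          show Bsum M (t+1) - 1 + 1 = Bsum M (t+1) by omega, ← hdec, hB, hB,
          Ssum_succ M t (by omega)] at hcmp
        omega
    · rw [← hcount.1, ← count_true_decode M, hdec]
    · rw [← hcount.2, ← count_false_decode M, hdec]

lemma nondecDyck_eq_image (n : ℕ) : nondecDyck n = decode '' Codes n := by
  ext w
  constructor
  · intro hw
    obtain ⟨hc, hd⟩ := encode_mem n w hw
    exact ⟨encode w, hc, hd⟩
  · rintro ⟨M, hM, rfl⟩
    exact decode_mem n M hM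

lemma card_codes (n : ℕ) : numNondecDyck n = (Codes n).ncard := by
  rw [numNondecDyck, nondecDyck_eq_image]
  apply Set.ncard_image_of_injOn
  intro M hM M' hM' h
  rw [← encode_decode M hM.1, ← encode_decode M' hM'.1, h]

lemma ncard_biUnion {ι α : Type*} (s : Finset ι) (f : ι → Set α)
    (hf : ∀ i ∈ s, (f i).Finite)
    (hd : ∀ i ∈ s, ∀ j ∈ s, i ≠ j → Disjoint (f i) (f j)) :
    (⋃ i ∈ s, f i).ncard = ∑ i ∈ s, (f i).ncard := by
  classical
  induction s using Finset.induction with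
  | empty => simp
  | @insert a s hx ih =>
    rw [Finset.sum_insert hx, Finset.set_biUnion_insert]
    have hfin1 : (f a).Finite := hf a (Finset.mem_insert_self a s)
    have hfin2 : (⋃ i ∈ s, f i).Finite :=
      Set.Finite.biUnion s.finite_toSet (fun i hi => hf i (Finset.mem_insert_of_mem hi))
    rw [Set.ncard_union_eq ?_ hfin1 hfin2,
      ih (fun i hi => hf i (Finset.mem_insert_of_mem hi))
        (fun i hi j hj hij => hd i (Finset.mem_insert_of_mem hi) j
          (Finset.mem_insert_of_mem hj) hij)]
    rw [Set.disjoint_iUnion_right]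
    intro i
    rw [Set.disjoint_iUnion_right]
    intro hi
    exact hd a (Finset.mem_insert_self a s) i (Finset.mem_insert_of_mem hi)
      (fun h => hx (h ▸ hi))

def C (m : ℕ) : Set (List (ℕ × ℕ)) :=
  {L | (∀ p ∈ L, 1 ≤ p.2 ∧ p.2 ≤ p.1) ∧ (L.map Prod.fst).sum = m}

noncomputable def c (m : ℕ) : ℕ := (C m).ncard

lemma C_zero : C 0 = {[]} := by
  ext L
  constructor
  · rintro ⟨hp, hs⟩
    cases L with
    | nil => rfl
    | cons q L =>
      exfalso
      have h1 := (hp q (by simp)).1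
      have h2 := (hp q (by simp)).2
      simp at hs
      omega
  · rintro rfl
    exact ⟨by simp, by simp⟩

lemma c_zero : c 0 = 1 := by rw [c, C_zero, Set.ncard_singleton]

def P (s : ℕ) : Finset (ℕ × ℕ) :=
  (Finset.Icc 1 s ×ˢ Finset.Icc 1 s).filter fun p => p.2 ≤ p.1

lemma C_succ (m : ℕ) :
    C (m + 1) = ⋃ p ∈ P (m + 1), (fun L => p :: L) '' C (m + 1 - p.1) := by
  ext L
  constructor
  · rintro ⟨hp, hs⟩
    cases L with
    | nil => simp at hs
    | cons q L =>
      have hq := hp q (by simp)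
      simp only [List.map_cons, List.sum_cons] at hs
      apply Set.mem_iUnion₂.mpr
      refine ⟨q, ?_, L, ⟨fun r hr => hp r (by simp [hr]), by omega⟩, rfl⟩
      simp only [P, Finset.mem_filter, Finset.mem_product, Finset.mem_Icc]
      omega
  · intro hL
    obtain ⟨q, hq, L', ⟨hL'p, hL's⟩, rfl⟩ := Set.mem_iUnion₂.mp hL
    simp only [P, Finset.mem_filter, Finset.mem_product, Finset.mem_Icc] at hq
    constructor
    · intro r hr
      rcases List.mem_cons.mp hr with rfl | hr'
      · omega
      · exact hL'p r hr'
    · simp only [List.map_cons, List.sum_cons]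
      omega

lemma C_finite : ∀ m, (C m).Finite := by
  intro m
  induction m using Nat.strong_induction_on with
  | _ m ih =>
    cases m with
    | zero => rw [C_zero]; exact Set.finite_singleton _
    | succ m =>
      rw [C_succ]
      apply Set.Finite.biUnion (P (m+1)).finite_toSet
      intro p hp
      simp only [P, Finset.mem_coe, Finset.mem_filter, Finset.mem_product, Finset.mem_Icc] at hp
      exact (ih (m + 1 - p.1) (by omega)).image _

lemma c_succ_sum (m : ℕ) : c (m + 1) = ∑ p ∈ P (m + 1), c (m + 1 - p.1) := by
  rw [c, C_succ, ncard_biUnion]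
  · refine Finset.sum_congr rfl fun p _ => ?_
    exact Set.ncard_image_of_injOn (fun L _ L' _ h => by simpa using h)
  · intro p _
    exact (C_finite _).image _
  · intro p _ q _ hpq
    rw [Set.disjoint_left]
    rintro x ⟨L, _, rfl⟩ ⟨L', _, hL'⟩
    injection hL' with h1 _
    exact hpq h1.symm

lemma sum_P (s : ℕ) (g : ℕ → ℕ) : ∑ p ∈ P s, g p.1 = ∑ a ∈ Finset.Icc 1 s, a * g a := by
  classical
  rw [P, Finset.sum_filter, Finset.sum_product]
  refine Finset.sum_congr rfl fun a ha => ?_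
  rw [Finset.mem_Icc] at ha
  rw [← Finset.sum_filter]
  have hsub : (Finset.Icc 1 s).filter (fun b => b ≤ a) = Finset.Icc 1 a := by
    ext b
    simp only [Finset.mem_filter, Finset.mem_Icc]
    omega
  rw [hsub]
  simp [Finset.sum_const, Nat.card_Icc, mul_comm]

lemma sum_Icc_one (s : ℕ) (g : ℕ → ℕ) :
    ∑ a ∈ Finset.Icc 1 s, g a = ∑ i ∈ Finset.range s, g (i + 1) := by
  rw [← Finset.Ico_add_one_right_eq_Icc, Finset.sum_Ico_eq_sum_range]
  refine Finset.sum_congr (by simp) fun i _ => by rw [add_comm]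

lemma c_rec (m : ℕ) : c (m + 1) = ∑ a ∈ Finset.range (m + 1), (a + 1) * c (m - a) := by
  calc c (m + 1) = ∑ p ∈ P (m + 1), c (m + 1 - p.1) := c_succ_sum m
    _ = ∑ a ∈ Finset.Icc 1 (m + 1), a * c (m + 1 - a) := sum_P (m + 1) (fun a => c (m + 1 - a))
    _ = ∑ i ∈ Finset.range (m + 1), (i + 1) * c (m + 1 - (i + 1)) :=
        sum_Icc_one (m + 1) (fun a => a * c (m + 1 - a))
    _ = ∑ i ∈ Finset.range (m + 1), (i + 1) * c (m - i) :=
        Finset.sum_congr rfl fun i _ => by rw [show m + 1 - (i + 1) = m - i by omega]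

lemma key (k : ℕ) :
    c (k + 2) = 2 * c (k + 1) + ∑ j ∈ Finset.range (k + 1), c j := by
  rw [show k + 2 = (k + 1) + 1 by ring, c_rec, Finset.sum_range_succ']
  have h1 : ∀ a ∈ Finset.range (k + 1), (a + 1 + 1) * c (k + 1 - (a + 1)) =
      (a + 1) * c (k - a) + c (k - a) := by
    intro a _
    rw [show k + 1 - (a + 1) = k - a by omega]
    ring
  rw [Finset.sum_congr rfl h1, Finset.sum_add_distrib, ← c_rec]
  have h2 : ∑ a ∈ Finset.range (k + 1), c (k - a) = ∑ j ∈ Finset.range (k + 1), c j := by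
    have := Finset.sum_range_reflect (fun j => c j) (k + 1)
    simpa using this
  rw [h2]
  simp [Nat.sub_zero]
  ring

lemma snd_le_fst (L : List (ℕ × ℕ)) (h : ∀ p ∈ L, 1 ≤ p.2 ∧ p.2 ≤ p.1) :
    (L.map Prod.snd).sum ≤ (L.map Prod.fst).sum := by
  induction L with
  | nil => simp
  | cons q L ih =>
    simp only [List.map_cons, List.sum_cons]
    have h1 := (h q (by simp)).2
    have h2 := ih fun p hp => h p (by simp [hp])
    omega

lemma codes_zero : Codes 0 = {[]} := by
  ext M
  constructor
  · rintro ⟨hp, _, hf, _⟩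
    cases M with
    | nil => rfl
    | cons q M =>
      exfalso
      have h1 := (hp q (by simp)).1
      simp at hf
      omega
  · rintro rfl
    exact ⟨by simp, by simp, rfl, rfl⟩

lemma d_zero : numNondecDyck 0 = 1 := by
  rw [card_codes, codes_zero, Set.ncard_singleton]

lemma codes_succ (n : ℕ) :
    Codes (n + 1) = ⋃ a ∈ Finset.Icc 1 (n + 1),
      (fun L => L ++ [(a, n + 1 - (L.map Prod.snd).sum)]) '' C (n + 1 - a) := by
  ext M
  constructor
  · rintro ⟨hp, hd, hf, hs⟩
    have hne : M ≠ [] := by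
      rintro rfl
      simp at hf
    obtain ⟨L, q, rfl⟩ := (List.eq_nil_or_concat' M).resolve_left hne
    have hq := hp q (by simp)
    have hLp : ∀ p ∈ L, 1 ≤ p.2 ∧ p.2 ≤ p.1 := by
      intro p hpL
      exact ⟨(hp p (by simp [hpL])).2, hd p (by simp [hpL])⟩
    simp only [List.map_append, List.sum_append, List.map_cons, List.sum_cons,
      List.map_nil, List.sum_nil, add_zero] at hf hs
    apply Set.mem_iUnion₂.mpr
    refine ⟨q.1, by rw [Finset.mem_Icc]; omega, L, ⟨hLp, by omega⟩, ?_⟩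
    have hq2 : q.2 = n + 1 - (L.map Prod.snd).sum := by omega
    simp only [← hq2]
  · intro hM
    obtain ⟨a, ha, L, ⟨hLp, hLs⟩, rfl⟩ := Set.mem_iUnion₂.mp hM
    rw [Finset.mem_Icc] at ha
    have hsnd : (L.map Prod.snd).sum ≤ n + 1 - a := by
      rw [← hLs]
      exact snd_le_fst L hLp
    refine ⟨?_, ?_, ?_, ?_⟩
    · intro p hpM
      rcases List.mem_append.mp hpM with hpL | hpq
      · have := hLp p hpL
        omega
      · simp at hpq
        subst hpq
        simp only
        omega
    · rw [List.dropLast_concat]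
      intro p hpL
      exact (hLp p hpL).2
    · simp only [List.map_append, List.sum_append, List.map_cons, List.sum_cons,
        List.map_nil, List.sum_nil, add_zero, hLs]
      omega
    · simp only [List.map_append, List.sum_append, List.map_cons, List.sum_cons,
        List.map_nil, List.sum_nil, add_zero]
      omega

lemma d_succ (n : ℕ) : numNondecDyck (n + 1) = ∑ j ∈ Finset.range (n + 1), c j := by
  rw [card_codes, codes_succ, ncard_biUnion]
  · have h1 : ∀ a ∈ Finset.Icc 1 (n + 1),
        ((fun L => L ++ [(a, n + 1 - (L.map Prod.snd).sum)]) '' C (n + 1 - a)).ncard =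
          (fun a => c (n + 1 - a)) a := by
      intro a _
      exact Set.ncard_image_of_injOn fun L _ L' _ h => by
        have := congrArg List.dropLast h
        simpa using this
    rw [Finset.sum_congr rfl h1, sum_Icc_one (n + 1) (fun a => c (n + 1 - a))]
    have h2 : ∀ i ∈ Finset.range (n + 1), c (n + 1 - (i + 1)) = (fun j => c (n - j)) i := by
      intro i _
      simp [Nat.succ_sub_succ]
    rw [Finset.sum_congr rfl h2]
    have := Finset.sum_range_reflect (fun j => c j) (n + 1)
    simpa using this
  · intro a _
    exact (C_finite _).image _
  · intro a _ b _ hab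
    rw [Set.disjoint_left]
    rintro x ⟨L, _, rfl⟩ ⟨L', _, hL'⟩
    apply hab
    have := congrArg List.getLast? hL'
    rw [List.getLast?_concat, List.getLast?_concat] at this
    injection this with h
    injection h with h1 _
    exact h1.symm

lemma d_one : numNondecDyck 1 = 1 := by
  rw [d_succ 0]
  simp [c_zero]

lemma c_one : c 1 = 1 := by
  rw [show (1 : ℕ) = 0 + 1 from rfl, c_rec]
  simp [c_zero]

lemma d_rec (n : ℕ) :
    (numNondecDyck (n + 2) : ℤ) + numNondecDyck n = 3 * numNondecDyck (n + 1) := by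
  cases n with
  | zero =>
    have h2 : numNondecDyck 2 = 2 := by
      rw [show (2 : ℕ) = 1 + 1 from rfl, d_succ]
      simp [Finset.sum_range_succ, c_zero, c_one]
    show (numNondecDyck 2 : ℤ) + numNondecDyck 0 = 3 * numNondecDyck 1
    rw [h2, d_zero, d_one]
    norm_num
  | succ n =>
    show (numNondecDyck (n + 3) : ℤ) + numNondecDyck (n + 1) = 3 * numNondecDyck (n + 2)
    have e1 : numNondecDyck (n + 3) = ∑ j ∈ Finset.range (n + 3), c j := d_succ (n + 2)
    have e2 : numNondecDyck (n + 2) = ∑ j ∈ Finset.range (n + 2), c j := d_succ (n + 1)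
    have e3 : numNondecDyck (n + 1) = ∑ j ∈ Finset.range (n + 1), c j := d_succ n
    have s1 : ∑ j ∈ Finset.range (n + 3), c j = ∑ j ∈ Finset.range (n + 2), c j + c (n + 2) :=
      Finset.sum_range_succ _ _
    have s2 : ∑ j ∈ Finset.range (n + 2), c j = ∑ j ∈ Finset.range (n + 1), c j + c (n + 1) :=
      Finset.sum_range_succ _ _
    have k := key n
    have : numNondecDyck (n + 3) + numNondecDyck (n + 1) = 3 * numNondecDyck (n + 2) := by
      omega
    exact_mod_cast this

end NDyck

/-- In `ℤ⟦X⟧`, the generating function `D(X) = Σ d(n) Xⁿ` of nondecreasing Dyck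
words satisfies `(1 − 3X + X²)·D(X) = 1 − 2X`. -/
theorem nondecDyck_gf :
    ((1 : PowerSeries ℤ) - 3 * PowerSeries.X + PowerSeries.X ^ 2) *
        PowerSeries.mk (fun n => (numNondecDyck n : ℤ)) =
      1 - 2 * PowerSeries.X := by
  have h3 : (3 : PowerSeries ℤ) = PowerSeries.C (R := ℤ) 3 := by rw [map_ofNat]
  have h2 : (2 : PowerSeries ℤ) = PowerSeries.C (R := ℤ) 2 := by rw [map_ofNat]
  have expand : ((1 : PowerSeries ℤ) - 3 * PowerSeries.X + PowerSeries.X ^ 2) *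
      PowerSeries.mk (fun n => (numNondecDyck n : ℤ)) =
      PowerSeries.mk (fun n => (numNondecDyck n : ℤ)) -
        PowerSeries.C (R := ℤ) 3 * (PowerSeries.X * PowerSeries.mk (fun n => (numNondecDyck n : ℤ))) +
        PowerSeries.X * (PowerSeries.X * PowerSeries.mk (fun n => (numNondecDyck n : ℤ))) := by
    rw [← h3]; ring
  rw [expand, h2]
  refine PowerSeries.ext fun n => ?_
  rw [map_add, map_sub, map_sub, PowerSeries.coeff_C_mul, PowerSeries.coeff_C_mul]
  match n with
  | 0 =>
    rw [PowerSeries.coeff_zero_X_mul, PowerSeries.coeff_zero_X_mul]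
    simp [NDyck.d_zero, PowerSeries.constantCoeff_mk]
  | 1 =>
    rw [PowerSeries.coeff_succ_X_mul, PowerSeries.coeff_succ_X_mul,
      PowerSeries.coeff_zero_X_mul]
    simp [PowerSeries.coeff_mk, NDyck.d_zero, NDyck.d_one, PowerSeries.coeff_one,
      PowerSeries.coeff_X, PowerSeries.constantCoeff_mk]
  | (k + 2) =>
    rw [PowerSeries.coeff_succ_X_mul, PowerSeries.coeff_succ_X_mul,
      PowerSeries.coeff_succ_X_mul]
    simp only [PowerSeries.coeff_mk, PowerSeries.coeff_one, PowerSeries.coeff_X]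
    have hrec := NDyck.d_rec k
    have hne1 : (k + 2 : ℕ) ≠ 0 := by omega
    have hne2 : (k + 2 : ℕ) ≠ 1 := by omega
    have a1 : numNondecDyck (k + 1 + 1) = numNondecDyck (k + 2) := rfl
    simp [hne1, hne2]
    omega
end

section
/- For every n ≥ 0, the number of nondecreasing Dyck words of semilength n equals the number of Dyck words of semilength n whose height (the maximum over all prefixes of the prefix height) is at most 3. (Equivalently, nondecreasing Dyck paths of length 2n are in bijection with planted plane trees with n+1 nodes of height at most 4.) -/
namespace NDH

/-- Fibonacci-type pair: `(xy k).1 = fib (2k-1)` (with `fib (-1) = 1`), `(xy k).2 = fib (2k)`. -/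
def xy : ℕ → ℕ × ℕ
  | 0 => (1, 0)
  | k+1 => ((xy k).1 + (xy k).2, (xy k).1 + 2 * (xy k).2)

/-- Run a word through a deterministic guarded automaton. -/
def run {σ : Type*} (acc : σ → Bool) (gu : Bool → σ → Bool) (nx : Bool → σ → σ) :
    List Bool → σ → Bool
  | [], s => acc s
  | b :: t, s => gu b s && run acc gu nx t (nx b s)

/-- Number of accepted words of a given length from a given state. -/
def cnt {σ : Type*} (acc : σ → Bool) (gu : Bool → σ → Bool) (nx : Bool → σ → σ) :
    ℕ → σ → ℕ
  | 0, s => if acc s then 1 else 0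
  | L+1, s => (if gu true s then cnt acc gu nx L (nx true s) else 0)
            + (if gu false s then cnt acc gu nx L (nx false s) else 0)

lemma finite_aux (L : ℕ) (P : List Bool → Prop) : {w : List Bool | w.length = L ∧ P w}.Finite :=
  (List.finite_length_eq Bool L).subset (fun _ h => h.1)

lemma cnt_eq {σ : Type*} (acc : σ → Bool) (gu : Bool → σ → Bool) (nx : Bool → σ → σ) :
    ∀ (L : ℕ) (s : σ),
      {w : List Bool | w.length = L ∧ run acc gu nx w s = true}.ncard = cnt acc gu nx L s := by
  intro L
  induction L with
  | zero =>
    intro s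
    by_cases h : acc s = true
    · have : {w : List Bool | w.length = 0 ∧ run acc gu nx w s = true} = {[]} := by
        ext w
        constructor
        · rintro ⟨hl, _⟩; exact List.length_eq_zero_iff.mp hl
        · rintro rfl; exact ⟨rfl, h⟩
      rw [this]; simp [cnt, h]
    · have : {w : List Bool | w.length = 0 ∧ run acc gu nx w s = true} = ∅ := by
        ext w
        simp only [Set.mem_setOf_eq, Set.mem_empty_iff_false, iff_false, not_and]
        intro hl
        rw [List.length_eq_zero_iff.mp hl]
        simpa [run] using h
      rw [this]; simp [cnt, h]
  | succ L ih =>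
    intro s
    have hdecomp : {w : List Bool | w.length = L + 1 ∧ run acc gu nx w s = true} =
        (List.cons true '' {t | t.length = L ∧ gu true s = true ∧
            run acc gu nx t (nx true s) = true}) ∪
        (List.cons false '' {t | t.length = L ∧ gu false s = true ∧
            run acc gu nx t (nx false s) = true}) := by
      ext w
      cases w with
      | nil => simp
      | cons b t =>
        cases b <;> simp [run, Set.mem_image, and_comm, and_assoc] <;> tauto
    rw [hdecomp]
    have hinj : ∀ b : Bool, Function.Injective (List.cons b) := by
      intro b a c h; exact (List.cons.injEq _ _ _ _).mp h |>.2
    have hfin1 : ({t : List Bool | t.length = L ∧ gu true s = true ∧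
        run acc gu nx t (nx true s) = true}).Finite := finite_aux L _
    have hfin2 : ({t : List Bool | t.length = L ∧ gu false s = true ∧
        run acc gu nx t (nx false s) = true}).Finite := finite_aux L _
    have hdisj : Disjoint
        (List.cons true '' {t | t.length = L ∧ gu true s = true ∧
            run acc gu nx t (nx true s) = true})
        (List.cons false '' {t | t.length = L ∧ gu false s = true ∧
            run acc gu nx t (nx false s) = true}) := by
      rw [Set.disjoint_left]
      rintro w ⟨t1, _, rfl⟩ ⟨t2, _, h⟩
      exact absurd ((List.cons.injEq _ _ _ _).mp h).1 (by simp)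
    rw [Set.ncard_union_eq hdisj (hfin1.image _) (hfin2.image _),
        Set.ncard_image_of_injective _ (hinj true), Set.ncard_image_of_injective _ (hinj false)]
    by_cases h1 : gu true s = true <;> by_cases h2 : gu false s = true
    · have e1 : {t : List Bool | t.length = L ∧ gu true s = true ∧ run acc gu nx t (nx true s) = true}
          = {t | t.length = L ∧ run acc gu nx t (nx true s) = true} := by
        ext t; simp [h1]
      have e2 : {t : List Bool | t.length = L ∧ gu false s = true ∧ run acc gu nx t (nx false s) = true}
          = {t | t.length = L ∧ run acc gu nx t (nx false s) = true} := by
        ext t; simp [h2]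
      rw [e1, e2, ih, ih]; simp [cnt, h1, h2]
    · have e1 : {t : List Bool | t.length = L ∧ gu true s = true ∧ run acc gu nx t (nx true s) = true}
          = {t | t.length = L ∧ run acc gu nx t (nx true s) = true} := by
        ext t; simp [h1]
      have e2 : {t : List Bool | t.length = L ∧ gu false s = true ∧ run acc gu nx t (nx false s) = true}
          = (∅ : Set (List Bool)) := by
        ext t; simp [h2]
      rw [e1, e2, ih]; simp [cnt, h1, h2]
    · have e1 : {t : List Bool | t.length = L ∧ gu true s = true ∧ run acc gu nx t (nx true s) = true}
          = (∅ : Set (List Bool)) := by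
        ext t; simp [h1]
      have e2 : {t : List Bool | t.length = L ∧ gu false s = true ∧ run acc gu nx t (nx false s) = true}
          = {t | t.length = L ∧ run acc gu nx t (nx false s) = true} := by
        ext t; simp [h2]
      rw [e1, e2, ih]; simp [cnt, h1, h2]
    · have e1 : {t : List Bool | t.length = L ∧ gu true s = true ∧ run acc gu nx t (nx true s) = true}
          = (∅ : Set (List Bool)) := by
        ext t; simp [h1]
      have e2 : {t : List Bool | t.length = L ∧ gu false s = true ∧ run acc gu nx t (nx false s) = true}
          = (∅ : Set (List Bool)) := by
        ext t; simp [h2]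
      rw [e1, e2]; simp [cnt, h1, h2]




lemma pH_zero (w : List Bool) : prefixHeight w 0 = 0 := by simp [prefixHeight]

lemma pH_cons (b : Bool) (t : List Bool) (i : ℕ) :
    prefixHeight (b :: t) (i+1) = (if b then 1 else -1) + prefixHeight t i := by
  cases b <;> simp [prefixHeight, List.take_succ_cons, List.count_cons] <;> push_cast <;> ring

lemma valley_succ (b : Bool) (t : List Bool) (i : ℕ) :
    IsValley (b :: t) (i+1) ↔ IsValley t i := by
  simp [IsValley]

lemma valley_zero (b : Bool) (t : List Bool) :
    IsValley (b :: t) 0 ↔ (b = false ∧ t[0]? = some true) := by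
  simp [IsValley]

/-! ### The height-≤3 automaton -/

def acc3 : ℤ → Bool := fun h => decide (h = 0)
def gu3 : Bool → ℤ → Bool := fun b h => if b then decide (h + 1 ≤ 3) else decide (1 ≤ h)
def nx3 : Bool → ℤ → ℤ := fun b h => if b then h + 1 else h - 1

def ok3 (w : List Bool) (h : ℤ) : Bool := run acc3 gu3 nx3 w h
def g (L : ℕ) (h : ℤ) : ℕ := cnt acc3 gu3 nx3 L h

lemma ok3_nil (h : ℤ) : ok3 [] h = decide (h = 0) := rfl
lemma ok3_true (t : List Bool) (h : ℤ) :
    (ok3 (true :: t) h = true) ↔ (h + 1 ≤ 3 ∧ ok3 t (h+1) = true) := by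
  simp [ok3, run, gu3, nx3]
lemma ok3_false (t : List Bool) (h : ℤ) :
    (ok3 (false :: t) h = true) ↔ (1 ≤ h ∧ ok3 t (h-1) = true) := by
  simp [ok3, run, gu3, nx3]

def Good3 (w : List Bool) (h : ℤ) : Prop :=
  (∀ i, i ≤ w.length → 0 ≤ h + prefixHeight w i ∧ h + prefixHeight w i ≤ 3) ∧
    h + prefixHeight w w.length = 0

lemma ok3_iff : ∀ (w : List Bool) (h : ℤ), 0 ≤ h → h ≤ 3 →
    ((ok3 w h = true) ↔ Good3 w h) := by
  intro w
  induction w with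
  | nil =>
    intro h h0 h3
    simp only [ok3_nil, Good3, List.length_nil, Nat.le_zero, decide_eq_true_eq]
    constructor
    · rintro rfl
      exact ⟨by rintro i rfl; simp [pH_zero], by simp [pH_zero]⟩
    · rintro ⟨_, he⟩; rw [pH_zero] at he; omega
  | cons b t ih =>
    intro h h0 h3
    cases b with
    | true =>
      rw [ok3_true]
      constructor
      · rintro ⟨hle, hok⟩
        have hG := (ih (h+1) (by omega) hle).mp hok
        obtain ⟨hb, he⟩ := hG
        refine ⟨?_, ?_⟩
        · intro i hi
          match i with
          | 0 => rw [pH_zero]; omega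
          | (j+1) =>
            rw [pH_cons]; simp only [if_true]
            have := hb j (by simpa using hi)
            omega
        · show h + prefixHeight (true :: t) (t.length + 1) = 0
          rw [pH_cons]; simp only [if_true]
          omega
      · rintro ⟨hb, he⟩
        have h1 : h + 1 ≤ 3 := by
          have := hb 1 (by simp)
          rw [pH_cons, pH_zero] at this
          simp only [if_true] at this
          omega
        refine ⟨h1, (ih (h+1) (by omega) h1).mpr ⟨?_, ?_⟩⟩
        · intro i hi
          have := hb (i+1) (by simpa using hi)
          rw [pH_cons] at this; simp only [if_true] at this
          constructor <;> omega
        · have := he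
          show (h+1) + prefixHeight t t.length = 0
          rw [show (true :: t).length = t.length + 1 from rfl, pH_cons] at this
          simp only [if_true] at this
          omega
    | false =>
      rw [ok3_false]
      constructor
      · rintro ⟨hge, hok⟩
        have hG := (ih (h-1) (by omega) (by omega)).mp hok
        obtain ⟨hb, he⟩ := hG
        refine ⟨?_, ?_⟩
        · intro i hi
          match i with
          | 0 => rw [pH_zero]; omega
          | (j+1) =>
            rw [pH_cons]; simp only [Bool.false_eq_true, if_false]
            have := hb j (by simpa using hi)
            omega
        · show h + prefixHeight (false :: t) (t.length + 1) = 0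
          rw [pH_cons]; simp only [Bool.false_eq_true, if_false]
          omega
      · rintro ⟨hb, he⟩
        have h1 : 1 ≤ h := by
          have := hb 1 (by simp)
          rw [pH_cons, pH_zero] at this
          simp only [Bool.false_eq_true, if_false] at this
          omega
        refine ⟨h1, (ih (h-1) (by omega) (by omega)).mpr ⟨?_, ?_⟩⟩
        · intro i hi
          have := hb (i+1) (by simpa using hi)
          rw [pH_cons] at this; simp only [Bool.false_eq_true, if_false] at this
          constructor <;> omega
        · have := he
          show (h-1) + prefixHeight t t.length = 0
          rw [show (false :: t).length = t.length + 1 from rfl, pH_cons] at this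
          simp only [Bool.false_eq_true, if_false] at this
          omega


/-! ### The nondecreasing automaton -/

def accM : ℤ × ℤ × Bool → Bool := fun p => decide (p.1 = 0)
def guM : Bool → ℤ × ℤ × Bool → Bool := fun b p =>
  if b then (!p.2.2 || decide (p.2.1 ≤ p.1)) else decide (1 ≤ p.1)
def nxM : Bool → ℤ × ℤ × Bool → ℤ × ℤ × Bool := fun b p =>
  if b then (p.1 + 1, (if p.2.2 then p.1 else p.2.1), false) else (p.1 - 1, p.2.1, true)

def okm (w : List Bool) (h v : ℤ) (s : Bool) : Bool := run accM guM nxM w (h, v, s)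
def m (L : ℕ) (h v : ℤ) (s : Bool) : ℕ := cnt accM guM nxM L (h, v, s)

lemma okm_nil (h v : ℤ) (s : Bool) : okm [] h v s = decide (h = 0) := rfl

lemma okm_true_false (t : List Bool) (h v : ℤ) :
    (okm (true :: t) h v false = true) ↔ (okm t (h+1) v false = true) := by
  simp [okm, run, guM, nxM]

lemma okm_true_true (t : List Bool) (h v : ℤ) :
    (okm (true :: t) h v true = true) ↔ (v ≤ h ∧ okm t (h+1) h false = true) := by
  simp [okm, run, guM, nxM]

lemma okm_false (t : List Bool) (h v : ℤ) (s : Bool) :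
    (okm (false :: t) h v s = true) ↔ (1 ≤ h ∧ okm t (h-1) v true = true) := by
  simp [okm, run, guM, nxM]

def GoodM (w : List Bool) (h v : ℤ) (s : Bool) : Prop :=
  (∀ i, i ≤ w.length → 0 ≤ h + prefixHeight w i) ∧
  (h + prefixHeight w w.length = 0) ∧
  (∀ i j, IsValley w i → IsValley w j → i ≤ j →
      h + prefixHeight w (i+1) ≤ h + prefixHeight w (j+1)) ∧
  (∀ j, IsValley w j → v ≤ h + prefixHeight w (j+1)) ∧
  (s = true → w[0]? = some true →
      v ≤ h ∧ ∀ j, IsValley w j → h ≤ h + prefixHeight w (j+1))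

lemma okm_iff : ∀ (w : List Bool) (h v : ℤ) (s : Bool), 0 ≤ h →
    ((okm w h v s = true) ↔ GoodM w h v s) := by
  intro w
  induction w with
  | nil =>
    intro h v s h0
    unfold GoodM
    simp only [okm_nil, decide_eq_true_eq, List.length_nil, Nat.le_zero]
    constructor
    · rintro rfl
      refine ⟨by rintro i rfl; simp [pH_zero], by simp [pH_zero], ?_, ?_, ?_⟩
      · intro i j hi _ _; exact absurd hi.1 (by simp)
      · intro j hj; exact absurd hj.1 (by simp)
      · intro _ hhd; exact absurd hhd (by simp)
    · rintro ⟨_, he, _⟩; rw [pH_zero] at he; omega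
  | cons b t ih =>
    intro h v s h0
    -- altitude shift helper
    have hshift : ∀ (i : ℕ), prefixHeight (b :: t) (i+1) =
        (if b then 1 else -1) + prefixHeight t i := pH_cons b t
    cases b with
    | true =>
      cases s with
      | false =>
        rw [okm_true_false, ih (h+1) v false (by omega)]
        unfold GoodM
        constructor
        · rintro ⟨hH, hE, hN, hF, _⟩
          refine ⟨?_, ?_, ?_, ?_, ?_⟩
          · intro i hi
            match i with
            | 0 => rw [pH_zero]; omega
            | (j+1) => rw [hshift]; have := hH j (by simpa using hi); simp only [if_true]; omega
          · show h + prefixHeight (true :: t) (t.length + 1) = 0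
            rw [hshift]; simp only [if_true]; omega
          · intro i j hi hj hij
            match i, j with
            | 0, _ => exact absurd ((valley_zero _ _).mp hi).1 (by simp)
            | (i+1), 0 => omega
            | (i+1), (j+1) =>
              rw [hshift, hshift]
              have := hN i j ((valley_succ _ _ _).mp hi) ((valley_succ _ _ _).mp hj) (by omega)
              simp only [if_true]; omega
          · intro j hj
            match j with
            | 0 => exact absurd ((valley_zero _ _).mp hj).1 (by simp)
            | (j+1) =>
              rw [hshift]
              have := hF j ((valley_succ _ _ _).mp hj)
              simp only [if_true]; omega
          · intro hs; exact absurd hs (by simp)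
        · rintro ⟨hH, hE, hN, hF, _⟩
          refine ⟨?_, ?_, ?_, ?_, ?_⟩
          · intro i hi
            have := hH (i+1) (by simpa using hi)
            rw [hshift] at this; simp only [if_true] at this; omega
          · have := hE
            show (h+1) + prefixHeight t t.length = 0
            rw [show (true :: t).length = t.length + 1 from rfl, hshift] at this
            simp only [if_true] at this; omega
          · intro i j hi hj hij
            have := hN (i+1) (j+1) ((valley_succ _ _ _).mpr hi) ((valley_succ _ _ _).mpr hj)
              (by omega)
            rw [hshift, hshift] at this; simp only [if_true] at this; omega
          · intro j hj
            have := hF (j+1) ((valley_succ _ _ _).mpr hj)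
            rw [hshift] at this; simp only [if_true] at this; omega
          · intro hs; exact absurd hs (by simp)
      | true =>
        rw [okm_true_true, ih (h+1) h false (by omega)]
        unfold GoodM
        constructor
        · rintro ⟨hvh, hH, hE, hN, hF, _⟩
          refine ⟨?_, ?_, ?_, ?_, ?_⟩
          · intro i hi
            match i with
            | 0 => rw [pH_zero]; omega
            | (j+1) => rw [hshift]; have := hH j (by simpa using hi); simp only [if_true]; omega
          · show h + prefixHeight (true :: t) (t.length + 1) = 0
            rw [hshift]; simp only [if_true]; omega
          · intro i j hi hj hij
            match i, j with
            | 0, _ => exact absurd ((valley_zero _ _).mp hi).1 (by simp)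
            | (i+1), 0 => omega
            | (i+1), (j+1) =>
              rw [hshift, hshift]
              have := hN i j ((valley_succ _ _ _).mp hi) ((valley_succ _ _ _).mp hj) (by omega)
              simp only [if_true]; omega
          · intro j hj
            match j with
            | 0 => exact absurd ((valley_zero _ _).mp hj).1 (by simp)
            | (j+1) =>
              rw [hshift]
              have := hF j ((valley_succ _ _ _).mp hj)
              simp only [if_true]; omega
          · intro _ _
            refine ⟨hvh, ?_⟩
            intro j hj
            match j with
            | 0 => exact absurd ((valley_zero _ _).mp hj).1 (by simp)
            | (j+1) =>
              rw [hshift]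
              have := hF j ((valley_succ _ _ _).mp hj)
              simp only [if_true]; omega
        · rintro ⟨hH, hE, hN, hF, hG⟩
          obtain ⟨hvh, hval⟩ := hG rfl (by simp)
          refine ⟨hvh, ?_, ?_, ?_, ?_, ?_⟩
          · intro i hi
            have := hH (i+1) (by simpa using hi)
            rw [hshift] at this; simp only [if_true] at this; omega
          · have := hE
            show (h+1) + prefixHeight t t.length = 0
            rw [show (true :: t).length = t.length + 1 from rfl, hshift] at this
            simp only [if_true] at this; omega
          · intro i j hi hj hij
            have := hN (i+1) (j+1) ((valley_succ _ _ _).mpr hi) ((valley_succ _ _ _).mpr hj)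
              (by omega)
            rw [hshift, hshift] at this; simp only [if_true] at this; omega
          · intro j hj
            have := hval (j+1) ((valley_succ _ _ _).mpr hj)
            rw [hshift] at this; simp only [if_true] at this; omega
          · intro hs; exact absurd hs (by simp)
    | false =>
      rw [okm_false]
      constructor
      · rintro ⟨h1, hok⟩
        have hG := (ih (h-1) v true (by omega)).mp hok
        obtain ⟨hH, hE, hN, hF, hG'⟩ := hG
        refine ⟨?_, ?_, ?_, ?_, ?_⟩
        · intro i hi
          match i with
          | 0 => rw [pH_zero]; omega
          | (j+1) =>
            rw [hshift]; have := hH j (by simpa using hi)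
            simp only [Bool.false_eq_true, if_false]; omega
        · show h + prefixHeight (false :: t) (t.length + 1) = 0
          rw [hshift]; simp only [Bool.false_eq_true, if_false]; omega
        · intro i j hi hj hij
          match i, j with
          | 0, 0 => omega
          | 0, (j+1) =>
            have hhd : t[0]? = some true := ((valley_zero _ _).mp hi).2
            have := (hG' rfl hhd).2 j ((valley_succ _ _ _).mp hj)
            rw [hshift, hshift, pH_zero]
            simp only [Bool.false_eq_true, if_false]; omega
          | (i+1), 0 =>
            exact absurd ((valley_zero _ _).mp hj).2 (by
              intro hc
              have := ((valley_succ _ _ _).mp hi)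
              -- i+1 ≤ 0 is false
              omega)
          | (i+1), (j+1) =>
            rw [hshift, hshift]
            have := hN i j ((valley_succ _ _ _).mp hi) ((valley_succ _ _ _).mp hj) (by omega)
            simp only [Bool.false_eq_true, if_false]; omega
        · intro j hj
          match j with
          | 0 =>
            have hhd : t[0]? = some true := ((valley_zero _ _).mp hj).2
            have := (hG' rfl hhd).1
            rw [hshift, pH_zero]; simp only [Bool.false_eq_true, if_false]; omega
          | (j+1) =>
            rw [hshift]
            have := hF j ((valley_succ _ _ _).mp hj)
            simp only [Bool.false_eq_true, if_false]; omega
        · intro _ hhd; exact absurd hhd (by simp)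
      · rintro ⟨hH, hE, hN, hF, _⟩
        have h1 : 1 ≤ h := by
          have := hH 1 (by simp)
          rw [hshift, pH_zero] at this; simp only [Bool.false_eq_true, if_false] at this; omega
        refine ⟨h1, (ih (h-1) v true (by omega)).mpr ⟨?_, ?_, ?_, ?_, ?_⟩⟩
        · intro i hi
          have := hH (i+1) (by simpa using hi)
          rw [hshift] at this; simp only [Bool.false_eq_true, if_false] at this; omega
        · have := hE
          show (h-1) + prefixHeight t t.length = 0
          rw [show (false :: t).length = t.length + 1 from rfl, hshift] at this
          simp only [Bool.false_eq_true, if_false] at this; omega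
        · intro i j hi hj hij
          have := hN (i+1) (j+1) ((valley_succ _ _ _).mpr hi) ((valley_succ _ _ _).mpr hj)
            (by omega)
          rw [hshift, hshift] at this; simp only [Bool.false_eq_true, if_false] at this; omega
        · intro j hj
          have := hF (j+1) ((valley_succ _ _ _).mpr hj)
          rw [hshift] at this; simp only [Bool.false_eq_true, if_false] at this; omega
        · intro _ hhd
          have hv0 : IsValley (false :: t) 0 := (valley_zero _ _).mpr ⟨rfl, hhd⟩
          constructor
          · have := hF 0 hv0
            rw [hshift, pH_zero] at this
            simp only [Bool.false_eq_true, if_false] at this; omega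
          · intro j hj
            have := hN 0 (j+1) hv0 ((valley_succ _ _ _).mpr hj) (by omega)
            rw [hshift, hshift, pH_zero] at this
            simp only [Bool.false_eq_true, if_false] at this; omega


/-! ### Numeric evaluation -/

abbrev X (k : ℕ) : ℕ := (xy k).1
abbrev Y (k : ℕ) : ℕ := (xy k).2

lemma X_succ (k : ℕ) : X (k+1) = X k + Y k := rfl
lemma Y_succ (k : ℕ) : Y (k+1) = X k + 2 * Y k := rfl
lemma X_zero : X 0 = 1 := rfl
lemma Y_zero : Y 0 = 0 := rfl

lemma m_zero (h v : ℤ) (s : Bool) : m 0 h v s = if h = 0 then 1 else 0 := by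
  simp [m, cnt, accM]

lemma m_succ_false (L : ℕ) (h v : ℤ) :
    m (L+1) h v false = m L (h+1) v false + (if 1 ≤ h then m L (h-1) v true else 0) := by
  simp [m, cnt, guM, nxM]

lemma m_succ_true (L : ℕ) (h v : ℤ) :
    m (L+1) h v true = (if v ≤ h then m L (h+1) h false else 0)
      + (if 1 ≤ h then m L (h-1) v true else 0) := by
  simp [m, cnt, guM, nxM]

lemma m_short : ∀ (L : ℕ) (h v : ℤ) (s : Bool), (L : ℤ) < h → m L h v s = 0 := by
  intro L
  induction L with
  | zero => intro h v s hL; rw [m_zero]; simp; omega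
  | succ L ih =>
    intro h v s hL
    have hU : ∀ v', m L (h+1) v' false = 0 := fun v' => ih (h+1) v' false (by push_cast at hL ⊢; omega)
    have hD : m L (h-1) v true = 0 := ih (h-1) v true (by push_cast at hL ⊢; omega)
    cases s
    · rw [m_succ_false, hU, hD]; simp
    · rw [m_succ_true, hD, hU]; simp

lemma m_high : ∀ (L : ℕ) (h v : ℤ), 0 ≤ h → h < v →
    m L h v true = if (L : ℤ) = h then 1 else 0 := by
  intro L
  induction L with
  | zero => intro h v h0 hv; rw [m_zero]; push_cast; simp [eq_comm]
  | succ L ih =>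
    intro h v h0 hv
    rw [m_succ_true, if_neg (by omega)]
    by_cases h1 : 1 ≤ h
    · rw [if_pos h1, ih (h-1) v (by omega) (by omega)]
      push_cast
      by_cases hLh : (L : ℤ) = h - 1
      · rw [if_pos hLh, if_pos (by omega)]
      · rw [if_neg hLh, if_neg (by omega)]
    · rw [if_neg h1, if_neg (by push_cast; omega)]

lemma m_diag_true : ∀ (h : ℕ) (v : ℤ), m h (h : ℤ) v true = 1 := by
  intro h
  induction h with
  | zero => intro v; rw [m_zero]; simp
  | succ h ih =>
    intro v
    rw [m_succ_true]
    push_cast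
    rw [m_short h ((h:ℤ)+1+1) ((h:ℤ)+1) false (by push_cast; omega)]
    rw [if_pos (by omega : (1:ℤ) ≤ (h:ℤ)+1), (by ring : (h:ℤ)+1-1 = (h:ℤ)), ih]
    simp

lemma m_diag_false : ∀ (h : ℕ) (v : ℤ), m h (h : ℤ) v false = 1 := by
  intro h
  induction h with
  | zero => intro v; rw [m_zero]; simp
  | succ h ih =>
    intro v
    rw [m_succ_false]
    push_cast
    rw [m_short h ((h:ℤ)+1+1) v false (by push_cast; omega)]
    rw [if_pos (by omega : (1:ℤ) ≤ (h:ℤ)+1), (by ring : (h:ℤ)+1-1 = (h:ℤ)), m_diag_true]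


lemma MFMT : ∀ k : ℕ,
    (∀ h v : ℕ, v ≤ h → m (h + 2*k) (h:ℤ) (v:ℤ) false = X k + (h - v) * Y k) ∧
    (∀ h v : ℕ, v ≤ h → m (h + 2*k) (h:ℤ) (v:ℤ) true
        = X k + (h - v) * (if k = 0 then 0 else X k)) := by
  intro k
  induction k with
  | zero =>
    constructor
    · intro h v _
      simpa [X_zero, Y_zero] using m_diag_false h (v:ℤ)
    · intro h v _
      simpa [X_zero] using m_diag_true h (v:ℤ)
  | succ k ihk =>
    obtain ⟨MF, MT⟩ := ihk
    have hMT : ∀ h v : ℕ, v ≤ h →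
        m (h + 2*(k+1)) (h:ℤ) (v:ℤ) true = X (k+1) + (h - v) * X (k+1) := by
      intro h
      induction h with
      | zero =>
        intro v hv
        have hv0 : v = 0 := by omega
        subst hv0
        rw [show 0 + 2*(k+1) = (1 + 2*k)+1 by ring, m_succ_true]
        rw [if_pos (by norm_num : ((0:ℕ):ℤ) ≤ ((0:ℕ):ℤ)), if_neg (by norm_num)]
        have h1 := MF 1 0 (by norm_num)
        push_cast at h1 ⊢
        rw [h1, X_succ]
        ring
      | succ h ihh =>
        intro v hv
        rw [show (h+1) + 2*(k+1) = ((h + 2*(k+1)))+1 by ring, m_succ_true]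
        have hU : m (h + 2*(k+1)) (((h:ℕ):ℤ)+1+1) (((h:ℕ):ℤ)+1) false = X (k+1) := by
          have h1 := MF (h+2) (h+1) (by omega)
          rw [show (h+2)+2*k = h + 2*(k+1) by ring] at h1
          push_cast at h1 ⊢
          rw [show ((h:ℤ)+1+1) = ((h:ℤ)+2) by ring, h1, X_succ]
          simp
        rw [if_pos (by push_cast; omega : ((v:ℕ):ℤ) ≤ ((h+1:ℕ):ℤ)),
            if_pos (by push_cast; omega : (1:ℤ) ≤ ((h+1:ℕ):ℤ))]
        push_cast
        rw [hU]
        by_cases hvh : v ≤ h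
        · have hD := ihh v hvh
          rw [show ((h:ℤ)+1-1) = (h:ℤ) by ring, hD]
          obtain ⟨d, rfl⟩ : ∃ d, h = v + d := ⟨h - v, by omega⟩
          rw [show v + d + 1 - v = d + 1 by omega, show v + d - v = d by omega]
          ring
        · have hveq : v = h + 1 := by omega
          subst hveq
          rw [show ((h:ℤ)+1-1) = (h:ℤ) by ring]
          rw [m_high (h + 2*(k+1)) (h:ℤ) (((h+1:ℕ)):ℤ) (by positivity) (by push_cast; omega)]
          rw [if_neg (by push_cast; omega)]
          simp
    refine ⟨?_, ?_⟩
    · intro h v hv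
      rw [show h + 2*(k+1) = (h + 2*k + 1)+1 by ring, m_succ_false]
      have hU : m (h + 2*k + 1) ((h:ℤ)+1) (v:ℤ) false = X k + (h + 1 - v) * Y k := by
        have h1 := MF (h+1) v (by omega)
        rw [show (h+1)+2*k = h + 2*k + 1 by ring] at h1
        push_cast at h1 ⊢
        rw [h1]
      rw [hU]
      rcases Nat.eq_zero_or_pos h with h0 | hpos
      · subst h0
        have hv0 : v = 0 := by omega
        subst hv0
        rw [if_neg (by norm_num)]
        simp [X_succ, Y_succ]
      · rw [if_pos (by push_cast; omega : (1:ℤ) ≤ (h:ℤ))]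
        by_cases hvh : v ≤ h - 1
        · have hD := hMT (h-1) v hvh
          rw [show (h-1) + 2*(k+1) = h + 2*k+1 by omega] at hD
          rw [show ((h:ℤ)-1) = (((h-1:ℕ)):ℤ) by push_cast [hpos]; omega, hD]
          obtain ⟨e, he⟩ : ∃ e, h = v + e + 1 := ⟨h - v - 1, by omega⟩
          subst he
          rw [show v + e + 1 - 1 - v = e by omega, show v + e + 1 - v = e + 1 by omega,
              show v + e + 1 + 1 - v = e + 2 by omega]
          rw [X_succ, Y_succ]
          ring
        · have hveq : v = h := by omega
          rw [hveq]
          rw [m_high (h + 2*k + 1) ((h:ℤ)-1) (h:ℤ) (by push_cast; omega) (by omega)]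
          rw [if_neg (by push_cast; omega)]
          rw [show h - h = 0 by omega, show h + 1 - h = 1 by omega, X_succ]
          ring
    · exact fun h v hv => by simpa using hMT h v hv


/-! ### Evaluation of `g` -/

lemma g_zero (h : ℤ) : g 0 h = if h = 0 then 1 else 0 := by simp [g, cnt, acc3]

lemma g_succ (L : ℕ) (h : ℤ) :
    g (L+1) h = (if h + 1 ≤ 3 then g L (h+1) else 0) + (if 1 ≤ h then g L (h-1) else 0) := by
  simp [g, cnt, gu3, nx3]

lemma g_eval : ∀ k : ℕ, g (2*k) 0 = X k ∧ g (2*k) 2 = Y k := by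
  intro k
  induction k with
  | zero => constructor <;> simp [g_zero, X, Y, xy]
  | succ k ihk =>
    obtain ⟨h0, h2⟩ := ihk
    have o1 : g (2*k+1) 1 = X k + Y k := by
      rw [g_succ]
      norm_num
      rw [h2, h0]
      ring
    have o3 : g (2*k+1) 3 = Y k := by
      rw [g_succ]
      norm_num
      exact h2
    constructor
    · rw [show 2*(k+1) = (2*k+1)+1 by ring, g_succ]
      norm_num
      rw [o1, X_succ]
    · rw [show 2*(k+1) = (2*k+1)+1 by ring, g_succ]
      norm_num
      rw [o3, o1, Y_succ]
      ring

/-! ### Assembly -/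

lemma setA_eq (n : ℕ) :
    {w : List Bool | w.length = 2*n ∧ IsDyckWord w ∧ ∀ i, i ≤ w.length → prefixHeight w i ≤ 3}
      = {w : List Bool | w.length = 2*n ∧ ok3 w 0 = true} := by
  ext w
  simp only [Set.mem_setOf_eq]
  refine and_congr_right (fun _ => ?_)
  rw [ok3_iff w 0 le_rfl (by norm_num)]
  unfold Good3 IsDyckWord
  simp only [zero_add]
  constructor
  · rintro ⟨⟨h1, he⟩, h2⟩
    exact ⟨fun i hi => ⟨h1 i hi, h2 i hi⟩, he⟩
  · rintro ⟨hb, he⟩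
    exact ⟨⟨fun i hi => (hb i hi).1, he⟩, fun i hi => (hb i hi).2⟩

lemma setB_eq (n : ℕ) :
    nondecDyck n = {w : List Bool | w.length = 2*n ∧ okm w 0 0 false = true} := by
  ext w
  simp only [nondecDyck, Set.mem_setOf_eq]
  refine and_congr_right (fun _ => ?_)
  rw [okm_iff w 0 0 false le_rfl]
  unfold GoodM IsNondecDyck IsDyckWord
  simp only [zero_add]
  constructor
  · rintro ⟨⟨hH, hE⟩, hN⟩
    refine ⟨hH, hE, hN, ?_, ?_⟩
    · intro j hj
      have hlt : j + 1 < w.length := (List.getElem?_eq_some_iff.mp hj.2).1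
      exact hH (j+1) (by omega)
    · intro hc; exact absurd hc (by simp)
  · rintro ⟨hH, hE, hN, _, _⟩
    exact ⟨⟨hH, hE⟩, hN⟩

end NDH

/-- Nondecreasing Dyck words of semilength `n` are equinumerous with Dyck words
of semilength `n` of height at most `3`. -/
theorem nondecDyck_eq_heightLeThree (n : ℕ) :
    (nondecDyck n).ncard =
      {w : List Bool | w.length = 2 * n ∧ IsDyckWord w ∧
        ∀ i, i ≤ w.length → prefixHeight w i ≤ 3}.ncard := by
  rw [NDH.setB_eq, NDH.setA_eq]
  have hB : {w : List Bool | w.length = 2*n ∧ NDH.okm w 0 0 false = true}.ncard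
      = NDH.m (2*n) 0 0 false := NDH.cnt_eq NDH.accM NDH.guM NDH.nxM (2*n) ((0:ℤ), (0:ℤ), false)
  have hA : {w : List Bool | w.length = 2*n ∧ NDH.ok3 w 0 = true}.ncard
      = NDH.g (2*n) 0 := NDH.cnt_eq NDH.acc3 NDH.gu3 NDH.nx3 (2*n) (0:ℤ)
  rw [hB, hA]
  have h1 : NDH.m (2*n) 0 0 false = NDH.X n := by
    have := (NDH.MFMT n).1 0 0 le_rfl
    simpa using this
  have h2 : NDH.g (2*n) 0 = NDH.X n := (NDH.g_eval n).1
  rw [h1, h2]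
end

section
/- Let r(n) denote the sum, over all nondecreasing Dyck words w of semilength n, of the number of returns of w (indices 1 ≤ i ≤ 2n at which the prefix of w of length i has height 0). Then in the ring of formal power series over ℤ, (1 − 2X)(1 − 3X + X²) · Σ_{n≥0} r(n) X^n = X(1 − X)². -/
/-- Number of returns of `w`: indices `1 ≤ i ≤ |w|` where the prefix of length
`i` has height `0`. -/
def numReturns (w : List Bool) : ℕ :=
  ((Finset.Icc 1 w.length).filter fun i => prefixHeight w i = 0).card

/-- `r n`: total number of returns over all nondecreasing Dyck words of
semilength `n`. -/
noncomputable def totalReturns (n : ℕ) : ℕ :=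
  ∑ᶠ w ∈ nondecDyck n, numReturns w

namespace NDD
open List

/-- signed height of a whole word -/
def hgt (w : List Bool) : ℤ := (w.count true : ℤ) - (w.count false : ℤ)

lemma prefixHeight_def (w : List Bool) (i : ℕ) : prefixHeight w i = hgt (w.take i) := rfl

@[simp] lemma hgt_nil : hgt [] = 0 := rfl

@[simp] lemma hgt_append (x y : List Bool) : hgt (x ++ y) = hgt x + hgt y := by
  simp [hgt, List.count_append]; ring

@[simp] lemma hgt_replicate_true (k : ℕ) : hgt (replicate k true) = k := by
  simp [hgt, List.count_replicate]

@[simp] lemma hgt_replicate_false (k : ℕ) : hgt (replicate k false) = -(k : ℤ) := by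
  simp [hgt, List.count_replicate]

@[simp] lemma hgt_cons (b : Bool) (w : List Bool) :
    hgt (b :: w) = (if b then 1 else -1) + hgt w := by
  cases b <;> simp [hgt] <;> ring

@[simp] lemma hgt_singleton (b : Bool) : hgt [b] = if b then 1 else -1 := by
  cases b <;> simp

lemma prefixHeight_length (w : List Bool) : prefixHeight w w.length = hgt w := by
  rw [prefixHeight_def, take_length]

lemma prefixHeight_of_length_le (w : List Bool) {i : ℕ} (h : w.length ≤ i) :
    prefixHeight w i = hgt w := by
  rw [prefixHeight_def, take_of_length_le h]

@[simp] lemma prefixHeight_zero (w : List Bool) : prefixHeight w 0 = 0 := rfl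

lemma prefixHeight_succ (w : List Bool) (i : ℕ) :
    prefixHeight w (i + 1) = prefixHeight w i + (match w[i]? with
      | some true => 1 | some false => -1 | none => 0) := by
  rw [prefixHeight_def, prefixHeight_def, take_succ, hgt_append]
  cases h : w[i]? with
  | none => simp
  | some b => cases b <;> simp

lemma prefixHeight_append_left {i : ℕ} (x y : List Bool) (h : i ≤ x.length) :
    prefixHeight (x ++ y) i = prefixHeight x i := by
  rw [prefixHeight_def, prefixHeight_def, take_append,
    Nat.sub_eq_zero_of_le h, take_zero, append_nil]

lemma prefixHeight_append_right (x y : List Bool) (i : ℕ) :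
    prefixHeight (x ++ y) (x.length + i) = hgt x + prefixHeight y i := by
  rw [prefixHeight_def, prefixHeight_def, take_append, hgt_append,
    take_of_length_le (by omega), Nat.add_sub_cancel_left]

end NDD

namespace NDD
open List

/-- the arch operation `v ↦ U v D` -/
def opA (v : List Bool) : List Bool := true :: (v ++ [false])

/-- pyramid `U^(j+1) D^(j+1)` -/
def pyr (j : ℕ) : List Bool := replicate (j+1) true ++ replicate (j+1) false

/-- pyramid-prefix operation -/
def opB (j : ℕ) (u : List Bool) : List Bool := pyr j ++ u

@[simp] lemma opA_length (v : List Bool) : (opA v).length = v.length + 2 := by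
  simp [opA]

@[simp] lemma pyr_length (j : ℕ) : (pyr j).length = 2 * (j + 1) := by
  simp [pyr]; omega

@[simp] lemma opB_length (j : ℕ) (u : List Bool) :
    (opB j u).length = 2 * (j + 1) + u.length := by simp [opB]

@[simp] lemma hgt_pyr (j : ℕ) : hgt (pyr j) = 0 := by simp [pyr]

lemma getElem?_append_left' {x : List Bool} (y : List Bool) {i : ℕ} (h : i < x.length) :
    (x ++ y)[i]? = x[i]? := by
  rw [getElem?_append]; simp [h]

lemma prefixHeight_opA (v : List Bool) {i : ℕ} (h : i ≤ v.length) :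
    prefixHeight (opA v) (i + 1) = prefixHeight v i + 1 := by
  have h0 : opA v = [true] ++ (v ++ [false]) := rfl
  rw [h0]
  have h1 : i + 1 = ([true] : List Bool).length + i := by simp [Nat.add_comm]
  rw [h1, prefixHeight_append_right, prefixHeight_append_left v [false] h]
  simp [Nat.add_comm]; ring

lemma prefixHeight_opA_last (v : List Bool) :
    prefixHeight (opA v) (v.length + 2) = hgt v := by
  rw [prefixHeight_of_length_le _ (by simp), opA]
  simp

lemma getElem?_opA_succ (v : List Bool) (i : ℕ) : (opA v)[i + 1]? = (v ++ [false])[i]? := by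
  simp [opA]

lemma valley_opA (v : List Bool) (i : ℕ) :
    IsValley (opA v) (i + 1) ↔ IsValley v i := by
  unfold IsValley
  rw [getElem?_opA_succ, getElem?_opA_succ]
  constructor
  · rintro ⟨h1, h2⟩
    have hi1 : i + 1 < v.length := by
      by_contra hc
      rw [getElem?_append_right (by omega)] at h2
      rcases Nat.lt_or_ge i v.length with h | h
      · have : i + 1 = v.length := by omega
        simp [this] at h2
      · have : 1 ≤ i + 1 - v.length := by omega
        rw [show (i+1) - v.length = (i - v.length) + 1 by omega] at h2
        simp at h2
    have hi : i < v.length := by omega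
    rw [getElem?_append_left' _ hi] at h1
    rw [getElem?_append_left' _ hi1] at h2
    exact ⟨h1, h2⟩
  · rintro ⟨h1, h2⟩
    have hi1 : i + 1 < v.length := by
      by_contra hc
      rw [getElem?_eq_none (by omega)] at h2; simp at h2
    have hi : i < v.length := by omega
    rw [getElem?_append_left' _ hi, getElem?_append_left' _ hi1]
    exact ⟨h1, h2⟩

lemma not_valley_opA_zero (v : List Bool) : ¬ IsValley (opA v) 0 := by
  rintro ⟨h1, -⟩
  simp [opA] at h1

end NDD
namespace NDD
open List Finset

lemma numReturns_eq_range (w : List Bool) :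
    numReturns w = ((Finset.range w.length).filter fun i => prefixHeight w (i+1) = 0).card := by
  unfold numReturns
  classical
  apply Finset.card_nbij' (fun i => i - 1) (fun i => i + 1)
  · intro a ha
    simp only [Finset.mem_coe, Finset.mem_filter, Finset.mem_Icc] at ha
    simp only [Finset.mem_coe, Finset.mem_filter, Finset.mem_range]
    refine ⟨by omega, ?_⟩
    rw [show a - 1 + 1 = a by omega]; exact ha.2
  · intro a ha
    simp only [Finset.mem_coe, Finset.mem_filter, Finset.mem_range] at ha
    simp only [Finset.mem_coe, Finset.mem_filter, Finset.mem_Icc]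
    exact ⟨⟨by omega, by omega⟩, ha.2⟩
  · intro a ha
    simp only [Finset.mem_coe, Finset.mem_filter, Finset.mem_Icc] at ha
    beta_reduce
    omega
  · intro a _; simp

lemma numReturns_append (x u : List Bool) (hx : hgt x = 0) :
    numReturns (x ++ u) = numReturns x + numReturns u := by
  classical
  rw [numReturns_eq_range, numReturns_eq_range, numReturns_eq_range]
  rw [length_append, Finset.range_add, Finset.filter_union]
  rw [Finset.card_union_of_disjoint]
  · congr 1
    · congr 1
      apply Finset.filter_congr
      intro i hi
      simp only [Finset.mem_range] at hi
      rw [prefixHeight_append_left x u (by omega)]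
    · rw [Finset.filter_map, Finset.card_map]
      congr 1
      apply Finset.filter_congr
      intro k hk
      simp only [addLeftEmbedding_apply, Function.comp_apply]
      rw [show x.length + k + 1 = x.length + (k + 1) by omega,
        prefixHeight_append_right, hx, zero_add]
  · apply Finset.disjoint_filter_filter
    rw [Finset.disjoint_left]
    intro a ha hb
    simp only [Finset.mem_range] at ha
    simp only [Finset.mem_map, addLeftEmbedding_apply] at hb
    obtain ⟨k, -, rfl⟩ := hb
    omega

lemma numReturns_of_no_internal (w : List Bool) (h0 : w ≠ [])
    (h : ∀ i, 1 ≤ i → i < w.length → prefixHeight w i ≠ 0) (hend : hgt w = 0) :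
    numReturns w = 1 := by
  classical
  unfold numReturns
  rw [show ((Finset.Icc 1 w.length).filter fun i => prefixHeight w i = 0) = {w.length} from ?_,
    Finset.card_singleton]
  ext i
  simp only [Finset.mem_filter, Finset.mem_Icc, Finset.mem_singleton]
  constructor
  · rintro ⟨⟨h1, h2⟩, h3⟩
    by_contra hne
    exact h i h1 (lt_of_le_of_ne h2 hne) h3
  · rintro rfl
    have : 1 ≤ w.length := by
      cases w with
      | nil => exact absurd rfl h0
      | cons a l => simp
    exact ⟨⟨this, le_rfl⟩, by rw [prefixHeight_length]; exact hend⟩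

end NDD
namespace NDD
open List Finset

lemma prefixHeight_pyr (j : ℕ) {i : ℕ} (h : i ≤ 2 * (j + 1)) :
    prefixHeight (pyr j) i = min (i : ℤ) (2 * (j + 1) - i) := by
  rw [prefixHeight_def, pyr, take_append]
  rw [take_replicate, take_replicate, length_replicate, hgt_append,
    hgt_replicate_true, hgt_replicate_false]
  push_cast
  omega

lemma numReturns_pyr (j : ℕ) : numReturns (pyr j) = 1 := by
  apply numReturns_of_no_internal
  · intro h
    have := congrArg List.length h
    simp at this
  · intro i h1 h2
    rw [pyr_length] at h2
    rw [prefixHeight_pyr j (le_of_lt h2)]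
    push_cast
    omega
  · exact hgt_pyr j

lemma opA_mem {v : List Bool} {n : ℕ} (hv : v ∈ nondecDyck n) :
    opA v ∈ nondecDyck (n + 1) := by
  obtain ⟨hlen, ⟨⟨hpos, hend⟩, hnd⟩⟩ := hv
  have hgv : hgt v = 0 := by rw [← prefixHeight_length]; exact hend
  refine ⟨by simp [hlen]; ring, ⟨⟨?_, ?_⟩, ?_⟩⟩
  · intro i hi
    rw [opA_length] at hi
    match i with
    | 0 => simp
    | (k+1) =>
      rcases Nat.lt_or_ge k (v.length + 1) with hk | hk
      · rcases Nat.lt_or_ge k v.length with hk2 | hk2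
        · rw [prefixHeight_opA v (le_of_lt hk2)]
          have := hpos k (le_of_lt hk2)
          omega
        · have hk3 : k = v.length := by omega
          subst hk3
          rw [prefixHeight_opA v le_rfl]
          have := hpos v.length le_rfl
          omega
      · have : k + 1 = v.length + 2 := by omega
        rw [this, prefixHeight_opA_last, hgv]
  · rw [opA_length, prefixHeight_opA_last, hgv]
  · intro i j hi hj hij
    match j, i with
    | 0, _ => exact absurd hj (not_valley_opA_zero v)
    | (j'+1), 0 => exact absurd hi (not_valley_opA_zero v)
    | (j'+1), (i'+1) =>
      rw [valley_opA] at hi hj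
      have hi' : i' < v.length := by
        have := hi.1; by_contra hc
        rw [getElem?_eq_none (by omega)] at this; simp at this
      have hj' : j' < v.length := by
        have := hj.1; by_contra hc
        rw [getElem?_eq_none (by omega)] at this; simp at this
      rw [prefixHeight_opA v hi', prefixHeight_opA v hj']
      have := hnd i' j' hi hj (by omega)
      simp only [Nat.succ_eq_add_one] at this ⊢
      omega

lemma numReturns_opA {v : List Bool} {n : ℕ} (hv : v ∈ nondecDyck n) :
    numReturns (opA v) = 1 := by
  obtain ⟨hlen, ⟨⟨hpos, hend⟩, -⟩⟩ := hv
  have hgv : hgt v = 0 := by rw [← prefixHeight_length]; exact hend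
  apply numReturns_of_no_internal
  · simp [opA]
  · intro i h1 h2
    rw [opA_length] at h2
    match i with
    | (k+1) =>
      have hk : k ≤ v.length := by omega
      rw [prefixHeight_opA v hk]
      have := hpos k hk
      omega
  · simp [opA, hgv]

lemma head_true {u : List Bool} {m : ℕ} (hu : u ∈ nondecDyck m) (hm : 1 ≤ m) :
    u[0]? = some true := by
  obtain ⟨hlen, ⟨⟨hpos, -⟩, -⟩⟩ := hu
  have h0 : 0 < u.length := by omega
  have h1 := hpos 1 (by omega)
  rw [prefixHeight_succ] at h1
  cases hg : u[0]? with
  | none => rw [getElem?_eq_none_iff] at hg; omega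
  | some b =>
    cases b
    · exfalso
      rw [hg] at h1
      simp only [prefixHeight_zero, zero_add] at h1
      omega
    · rfl

lemma getElem?_opB (j : ℕ) (u : List Bool) (i : ℕ) :
    (opB j u)[i]? = if i < j + 1 then some true
      else if i < 2 * (j + 1) then some false
      else u[i - 2 * (j + 1)]? := by
  rw [opB]
  rcases Nat.lt_or_ge i (2 * (j + 1)) with h | h
  · rw [getElem?_append_left' u (by simp; omega)]
    rcases Nat.lt_or_ge i (j + 1) with h2 | h2
    · rw [if_pos h2, pyr, getElem?_append_left' _ (by simp; omega),
        getElem?_replicate, if_pos h2]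
    · rw [if_neg (by omega), if_pos h, pyr,
        getElem?_append_right (by simp; omega), getElem?_replicate,
        length_replicate, if_pos (by omega)]
  · rw [getElem?_append_right (by simp; omega),
      if_neg (by omega), if_neg (by omega), pyr_length]

lemma valley_opB {u : List Bool} {m : ℕ} (hu : u ∈ nondecDyck m) (hm : 1 ≤ m)
    (j i : ℕ) :
    IsValley (opB j u) i ↔ (i = 2 * j + 1 ∨ ∃ i', i = 2 * (j + 1) + i' ∧ IsValley u i') := by
  unfold IsValley
  rw [getElem?_opB, getElem?_opB]
  constructor
  · rintro ⟨h1, h2⟩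
    rcases Nat.lt_or_ge i (2 * (j + 1)) with h | h
    · -- i in pyramid: must be i = 2j+1
      have hi1 : ¬ i < j + 1 := by
        intro hc; rw [if_pos hc] at h1; simp at h1
      rw [if_neg hi1, if_pos h] at h1
      left
      by_contra hne
      have : i + 1 < 2 * (j + 1) := by omega
      rw [if_neg (by omega), if_pos this] at h2
      simp at h2
    · right
      refine ⟨i - 2 * (j + 1), by omega, ?_⟩
      rw [if_neg (by omega), if_neg (by omega)] at h1
      rw [if_neg (by omega), if_neg (by omega)] at h2
      rw [show i + 1 - 2 * (j + 1) = i - 2 * (j + 1) + 1 by omega] at h2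
      exact ⟨h1, h2⟩
  · rintro (rfl | ⟨i', rfl, h1, h2⟩)
    · constructor
      · rw [if_neg (by omega), if_pos (by omega)]
      · rw [if_neg (by omega), if_neg (by omega)]
        rw [show 2 * j + 1 + 1 - 2 * (j + 1) = 0 by omega]
        exact head_true hu hm
    · constructor
      · rw [if_neg (by omega), if_neg (by omega)]
        rw [show 2 * (j + 1) + i' - 2 * (j + 1) = i' by omega]
        exact h1
      · rw [if_neg (by omega), if_neg (by omega)]
        rw [show 2 * (j + 1) + i' + 1 - 2 * (j + 1) = i' + 1 by omega]
        exact h2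

lemma prefixHeight_opB_right (j : ℕ) (u : List Bool) (i : ℕ) :
    prefixHeight (opB j u) (2 * (j + 1) + i) = prefixHeight u i := by
  have h := prefixHeight_append_right (pyr j) u i
  rw [pyr_length, hgt_pyr, zero_add] at h
  exact h

lemma opB_mem {u : List Bool} {m : ℕ} (hu : u ∈ nondecDyck m) (hm : 1 ≤ m) (j : ℕ) :
    opB j u ∈ nondecDyck (m + (j + 1)) := by
  obtain ⟨hlen, ⟨⟨hpos, hend⟩, hnd⟩⟩ := hu
  have hgu : hgt u = 0 := by rw [← prefixHeight_length]; exact hend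
  refine ⟨by simp [hlen]; ring, ⟨⟨?_, ?_⟩, ?_⟩⟩
  · intro i hi
    rw [opB_length] at hi
    rcases le_or_gt i (2 * (j + 1)) with h | h
    · rw [opB, prefixHeight_append_left _ _ (by simpa using h), prefixHeight_pyr j h]
      push_cast; omega
    · rw [show i = 2 * (j + 1) + (i - 2 * (j + 1)) by omega, prefixHeight_opB_right]
      exact hpos _ (by omega)
  · rw [opB_length, show 2 * (j + 1) + u.length = 2 * (j + 1) + u.length from rfl,
      prefixHeight_opB_right, prefixHeight_length]
    exact hgu
  · have hval := valley_opB ⟨hlen, ⟨⟨hpos, hend⟩, hnd⟩⟩ hm j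
    intro i j' hi hj' hij
    rw [hval] at hi hj'
    rcases hi with rfl | ⟨i', rfl, hiu⟩
    · rcases hj' with rfl | ⟨j'', rfl, hju⟩
      · exact le_rfl
      · rw [show 2 * j + 1 + 1 = 2 * (j + 1) + 0 by omega, prefixHeight_opB_right,
          show 2 * (j + 1) + j'' + 1 = 2 * (j + 1) + (j'' + 1) by omega,
          prefixHeight_opB_right]
        simp only [prefixHeight_zero]
        apply hpos
        have := hju.1
        have : j'' < u.length := by
          by_contra hc
          rw [getElem?_eq_none (by omega)] at this; simp at this
        omega
    · rcases hj' with rfl | ⟨j'', rfl, hju⟩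
      · omega
      · rw [show 2 * (j + 1) + i' + 1 = 2 * (j + 1) + (i' + 1) by omega,
          show 2 * (j + 1) + j'' + 1 = 2 * (j + 1) + (j'' + 1) by omega,
          prefixHeight_opB_right, prefixHeight_opB_right]
        exact hnd i' j'' hiu hju (by omega)

lemma numReturns_opB (j : ℕ) (u : List Bool) :
    numReturns (opB j u) = 1 + numReturns u := by
  rw [opB, numReturns_append _ _ (hgt_pyr j), numReturns_pyr]

end NDD
namespace NDD
open List Finset

lemma valley_lt_length {w : List Bool} {i : ℕ} (h : IsValley w i) : i + 1 < w.length := by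
  by_contra hc
  have := h.2
  rw [getElem?_eq_none (by omega)] at this
  simp at this

lemma valley_opB_shift {u : List Bool} (j i : ℕ) (h : IsValley u i) :
    IsValley (opB j u) (2 * (j + 1) + i) := by
  constructor
  · rw [getElem?_opB, if_neg (by omega), if_neg (by omega),
      show 2 * (j + 1) + i - 2 * (j + 1) = i by omega]
    exact h.1
  · rw [getElem?_opB, if_neg (by omega), if_neg (by omega),
      show 2 * (j + 1) + i + 1 - 2 * (j + 1) = i + 1 by omega]
    exact h.2

lemma opB_mem_rev {u : List Bool} {m j : ℕ} (hlen : u.length = 2 * m)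
    (h : opB j u ∈ nondecDyck (m + (j + 1))) : u ∈ nondecDyck m := by
  obtain ⟨-, ⟨⟨hpos, hend⟩, hnd⟩⟩ := h
  refine ⟨hlen, ⟨⟨?_, ?_⟩, ?_⟩⟩
  · intro i hi
    have h1 := hpos (2 * (j + 1) + i) (by rw [opB_length]; omega)
    rwa [prefixHeight_opB_right] at h1
  · rw [prefixHeight_length]
    have h2 : prefixHeight (opB j u) (2 * (j + 1) + u.length) = 0 := by
      rw [← opB_length]; exact hend
    rw [prefixHeight_opB_right, prefixHeight_length] at h2
    exact h2
  · intro i j' hi hj' hij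
    have h3 := hnd _ _ (valley_opB_shift j i hi) (valley_opB_shift j j' hj') (by omega)
    rwa [show 2 * (j + 1) + i + 1 = 2 * (j + 1) + (i + 1) by omega,
      show 2 * (j + 1) + j' + 1 = 2 * (j + 1) + (j' + 1) by omega,
      prefixHeight_opB_right, prefixHeight_opB_right] at h3

lemma opA_mem_rev {v : List Bool} {n : ℕ} (hlen : v.length = 2 * n)
    (h : opA v ∈ nondecDyck (n + 1))
    (hint : ∀ i, 1 ≤ i → i ≤ 2 * n + 1 → prefixHeight (opA v) i ≠ 0) :
    v ∈ nondecDyck n := by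
  obtain ⟨-, ⟨⟨hpos, hend⟩, hnd⟩⟩ := h
  refine ⟨hlen, ⟨⟨?_, ?_⟩, ?_⟩⟩
  · intro i hi
    have h1 := hpos (i + 1) (by rw [opA_length]; omega)
    rw [prefixHeight_opA v (by omega)] at h1
    have h2 := hint (i + 1) (by omega) (by omega)
    rw [prefixHeight_opA v (by omega)] at h2
    omega
  · rw [prefixHeight_length]
    have h2 : prefixHeight (opA v) (v.length + 2) = 0 := by
      rw [← opA_length v]; exact hend
    rw [prefixHeight_opA_last] at h2
    exact h2
  · intro i j' hi hj' hij
    have h3 := hnd (i + 1) (j' + 1) ((valley_opA v i).mpr hi) ((valley_opA v j').mpr hj')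
      (by omega)
    have hiv : i + 1 ≤ v.length := le_of_lt (valley_lt_length hi)
    have hjv : j' + 1 ≤ v.length := le_of_lt (valley_lt_length hj')
    rw [prefixHeight_opA v hiv, prefixHeight_opA v hjv] at h3
    omega

/-- a word with no descent-ascent factor is a pyramid-type word -/
lemma eq_replicate_of_no_DU (w : List Bool)
    (h : ∀ i, ¬(w[i]? = some false ∧ w[i + 1]? = some true)) :
    ∃ a b, w = replicate a true ++ replicate b false := by
  induction w with
  | nil => exact ⟨0, 0, rfl⟩
  | cons x t ih =>
    obtain ⟨a, b, ht⟩ := ih (fun i hi => h (i + 1) (by simpa using hi))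
    cases x with
    | true => exact ⟨a + 1, b, by rw [ht]; rfl⟩
    | false =>
      have ha : a = 0 := by
        by_contra hc
        obtain ⟨a', rfl⟩ : ∃ a', a = a' + 1 := ⟨a - 1, by omega⟩
        apply h 0
        refine ⟨by simp, ?_⟩
        rw [show (0:ℕ) + 1 = 1 by rfl, getElem?_cons_succ, ht, replicate_succ]
        simp
      subst ha
      refine ⟨0, b + 1, ?_⟩
      rw [ht]
      simp [replicate_succ]

end NDD
namespace NDD
open List Finset

theorem decomp (n : ℕ) :
    nondecDyck (n + 1) =
      opA '' nondecDyck n ∪ ⋃ m ∈ Finset.Icc 1 n, opB (n - m) '' nondecDyck m := by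
  classical
  ext w
  constructor
  · intro hw
    have hlen : w.length = 2 * (n + 1) := hw.1
    obtain ⟨-, ⟨⟨hpos, hend⟩, hnd⟩⟩ := hw
    have hw' : w ∈ nondecDyck (n + 1) := ⟨hlen, ⟨⟨hpos, hend⟩, hnd⟩⟩
    have hhead : w[0]? = some true := head_true hw' (by omega)
    by_cases hc : ∃ i, 1 ≤ i ∧ i ≤ 2 * n + 1 ∧ prefixHeight w i = 0
    · -- internal return exists: pyramid-prefix case
      right
      obtain ⟨i₀, hfind⟩ : ∃ i₀, i₀ = Nat.find hc := ⟨_, rfl⟩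
      obtain ⟨hi1, hi2, hi0⟩ : 1 ≤ i₀ ∧ i₀ ≤ 2 * n + 1 ∧ prefixHeight w i₀ = 0 :=
        hfind ▸ Nat.find_spec hc
      have hmin : ∀ k, k < i₀ → ¬(1 ≤ k ∧ k ≤ 2 * n + 1 ∧ prefixHeight w k = 0) :=
        fun k hk => Nat.find_min hc (by omega)
      have hint : ∀ k, 1 ≤ k → k < i₀ → 1 ≤ prefixHeight w k := by
        intro k hk1 hk2
        have h2 := hpos k (by omega)
        have h3 := hmin k hk2
        push_neg at h3
        have := h3 hk1 (by omega)
        omega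
      have h2i : 2 ≤ i₀ := by
        by_contra hcc
        have : i₀ = 1 := by omega
        subst this
        rw [prefixHeight_succ, hhead] at hi0
        simp at hi0
      -- the step into the first return is a D, the step after is a U
      have hfalse : w[i₀ - 1]? = some false := by
        have e := prefixHeight_succ w (i₀ - 1)
        rw [show i₀ - 1 + 1 = i₀ by omega] at e
        have hp1 := hint (i₀ - 1) (by omega) (by omega)
        cases hg : w[i₀ - 1]? with
        | none =>
          rw [getElem?_eq_none_iff] at hg
          omega
        | some b =>
          cases b
          · rfl
          · rw [hg] at e; simp at e; omega
      have htrue : w[i₀]? = some true := by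
        have e := prefixHeight_succ w i₀
        have hp1 := hpos (i₀ + 1) (by omega)
        cases hg : w[i₀]? with
        | none =>
          rw [getElem?_eq_none_iff] at hg
          omega
        | some b =>
          cases b
          · rw [hg] at e; simp at e; omega
          · rfl
      have valley0 : IsValley w (i₀ - 1) :=
        ⟨hfalse, by rw [show i₀ - 1 + 1 = i₀ by omega]; exact htrue⟩
      -- the prefix before the first return has no valley, hence is a pyramid
      obtain ⟨a, b, hab⟩ := eq_replicate_of_no_DU (w.take i₀) (by
        rintro i ⟨hf, ht⟩
        rw [getElem?_take] at hf ht
        have hilt : i + 1 < i₀ := by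
          by_contra hcc
          rw [if_neg hcc] at ht; simp at ht
        rw [if_pos (by omega)] at hf
        rw [if_pos hilt] at ht
        have hv : IsValley w i := ⟨hf, ht⟩
        have := hnd i (i₀ - 1) hv valley0 (by omega)
        rw [show i₀ - 1 + 1 = i₀ by omega, hi0] at this
        have := hint (i + 1) (by omega) (by omega)
        omega)
      have hlen0 : (w.take i₀).length = i₀ := by
        rw [length_take]; omega
      have habl : a + b = i₀ := by
        have := congrArg List.length hab
        rw [hlen0] at this
        simp at this
        omega
      have hgab : (a : ℤ) - b = 0 := by
        have : hgt (w.take i₀) = 0 := hi0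
        rw [hab, hgt_append, hgt_replicate_true, hgt_replicate_false] at this
        omega
      rw [show a = b from by omega] at hab habl
      have hi2a : i₀ = 2 * b := by omega
      have hb1 : 1 ≤ b := by omega
      have hbn : b ≤ n := by omega
      set u := w.drop i₀ with hu
      have hweq : w = opB (b - 1) u := by
        have h1 : pyr (b - 1) = w.take i₀ := by
          rw [pyr, show b - 1 + 1 = b by omega, hab]
        rw [opB, h1, hu]
        exact (take_append_drop i₀ w).symm
      have hulen : u.length = 2 * (n + 1 - b) := by
        rw [hu, length_drop]; omega
      have humem : u ∈ nondecDyck (n + 1 - b) := by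
        apply opB_mem_rev hulen
        rw [show n + 1 - b + (b - 1 + 1) = n + 1 by omega, ← hweq]
        exact hw'
      simp only [Set.mem_iUnion, Finset.mem_Icc]
      refine ⟨n + 1 - b, ⟨by omega, by omega⟩, u, humem, ?_⟩
      rw [show n - (n + 1 - b) = b - 1 by omega]
      exact hweq.symm
    · -- no internal return: arch case
      left
      push_neg at hc
      have hne : w ≠ [] := by
        intro h; rw [h] at hlen; simp at hlen
      obtain ⟨x, t, rfl⟩ := List.exists_cons_of_ne_nil hne
      have hx : x = true := by
        have : (x :: t)[0]? = some x := by simp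
        rw [this] at hhead
        exact (Option.some_inj.mp hhead)
      subst hx
      have htne : t ≠ [] := by
        intro h; rw [h] at hlen; simp at hlen; omega
      obtain ⟨v, y, htv⟩ : ∃ v y, t = v ++ [y] :=
        ⟨t.dropLast, t.getLast htne, (List.dropLast_append_getLast htne).symm⟩
      subst htv
      have hvlen : v.length = 2 * n := by
        simp at hlen; omega
      have hph : 1 ≤ prefixHeight (true :: (v ++ [y])) (2 * n + 1) := by
        have h1 := hc (2 * n + 1) (by omega) le_rfl
        have h2 := hpos (2 * n + 1) (by omega)
        omega
      have hph2 : prefixHeight (true :: (v ++ [y])) (2 * n + 1) = 1 + hgt v := by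
        rw [show (true :: (v ++ [y])) = (true :: v) ++ [y] by simp,
          prefixHeight_append_left _ _ (by simp; omega),
          prefixHeight_of_length_le _ (by simp; omega), hgt_cons]
        simp
      have hgw : hgt (true :: (v ++ [y])) = 0 := by
        rw [← prefixHeight_length]; exact hend
      have hy : y = false := by
        cases y
        · rfl
        · exfalso
          rw [hgt_cons, hgt_append, hgt_singleton] at hgw
          simp at hgw
          omega
      subst hy
      have hwa : (true :: (v ++ [false])) = opA v := rfl
      refine ⟨v, ?_, hwa.symm⟩
      apply opA_mem_rev hvlen
      · rw [← hwa]; exact hw'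
      · intro i h1 h2
        exact hc i h1 (by omega)
  · intro hw
    rcases hw with ⟨v, hv, rfl⟩ | hw
    · exact opA_mem hv
    · simp only [Set.mem_iUnion, Finset.mem_Icc] at hw
      obtain ⟨m, ⟨hm1, hm2⟩, u, hu, rfl⟩ := hw
      have := opB_mem hu hm1 (n - m)
      rwa [show m + (n - m + 1) = n + 1 by omega] at this

end NDD
namespace NDD
open List Finset

lemma opA_inj : Function.Injective opA := by
  intro v v' h
  unfold opA at h
  simpa using h

lemma opB_inj (j : ℕ) : Function.Injective (opB j) := by
  intro u u' h
  exact List.append_cancel_left h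

lemma opA_ne_opB {v u : List Bool} {n m : ℕ} (hv : v ∈ nondecDyck n)
    (hu : u ∈ nondecDyck m) (hm : 1 ≤ m) (hmn : m ≤ n) :
    opA v ≠ opB (n - m) u := by
  intro he
  set j := n - m with hj
  have h1 : prefixHeight (opB j u) (2 * (j + 1)) = 0 := by
    have := prefixHeight_opB_right j u 0
    simpa using this
  have h2 : 1 ≤ prefixHeight (opA v) (2 * (j + 1)) := by
    rw [show 2 * (j + 1) = (2 * j + 1) + 1 by omega,
      prefixHeight_opA v (by rw [hv.1]; omega)]
    have := hv.2.1.1 (2 * j + 1) (by rw [hv.1]; omega)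
    omega
  rw [he, h1] at h2
  omega

lemma opB_ne {j j' : ℕ} (h : j < j') (u u' : List Bool) : opB j u ≠ opB j' u' := by
  intro he
  have h2 := congrArg (fun l => l[j + 1]?) he
  simp only [getElem?_opB] at h2
  rw [if_neg (by omega), if_pos (by omega), if_pos (by omega)] at h2
  simp at h2

lemma finite_nondecDyck (n : ℕ) : (nondecDyck n).Finite :=
  (List.finite_length_eq Bool (2 * n)).subset (fun _ hw => hw.1)

noncomputable def DT (n : ℕ) : Finset (List Bool) := (finite_nondecDyck n).toFinset

lemma mem_DT {w : List Bool} {n : ℕ} : w ∈ DT n ↔ w ∈ nondecDyck n :=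
  Set.Finite.mem_toFinset _

lemma card_DT (n : ℕ) : numNondecDyck n = (DT n).card :=
  Set.ncard_eq_toFinset_card _ _

lemma sum_DT (n : ℕ) : totalReturns n = ∑ w ∈ DT n, numReturns w := by
  have h : ↑(DT n) = nondecDyck n := Set.Finite.coe_toFinset _
  rw [totalReturns, ← h, finsum_mem_coe_finset]

lemma decompF (n : ℕ) :
    DT (n + 1) = (DT n).image opA ∪
      (Finset.Icc 1 n).biUnion (fun m => (DT m).image (opB (n - m))) := by
  classical
  apply Finset.coe_injective
  push_cast [Finset.coe_union, Finset.coe_biUnion, Finset.coe_image]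
  rw [DT, Set.Finite.coe_toFinset, decomp n]
  congr 1
  · rw [DT, Set.Finite.coe_toFinset]
  · ext w
    simp only [Set.mem_iUnion, Finset.mem_Icc, Finset.mem_coe, Set.mem_image]
    constructor
    · rintro ⟨m, hm, u, hu, rfl⟩
      exact ⟨m, by simpa using hm, u, mem_DT.mpr hu, rfl⟩
    · rintro ⟨m, hm, u, hu, rfl⟩
      exact ⟨m, by simpa using hm, u, mem_DT.mp hu, rfl⟩

lemma hd1 (n : ℕ) :
    Disjoint ((DT n).image opA)
      ((Finset.Icc 1 n).biUnion (fun m => (DT m).image (opB (n - m)))) := by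
  classical
  rw [Finset.disjoint_left]
  rintro w hw1 hw2
  simp only [Finset.mem_image, Finset.mem_biUnion, Finset.mem_Icc] at hw1 hw2
  obtain ⟨v, hv, rfl⟩ := hw1
  obtain ⟨m, ⟨hm1, hm2⟩, u, hu, he⟩ := hw2
  exact opA_ne_opB (mem_DT.mp hv) (mem_DT.mp hu) hm1 hm2 he.symm

lemma hd2 (n : ℕ) : ∀ m ∈ Finset.Icc 1 n, ∀ m' ∈ Finset.Icc 1 n, m ≠ m' →
    Disjoint ((DT m).image (opB (n - m))) ((DT m').image (opB (n - m'))) := by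
  classical
  intro m hm m' hm' hne
  simp only [Finset.mem_Icc] at hm hm'
  rw [Finset.disjoint_left]
  rintro w hw1 hw2
  simp only [Finset.mem_image] at hw1 hw2
  obtain ⟨u, -, rfl⟩ := hw1
  obtain ⟨u', -, he⟩ := hw2
  rcases Nat.lt_or_ge (n - m) (n - m') with h | h
  · exact opB_ne h u u' he.symm
  · have : n - m' < n - m := by omega
    exact opB_ne this u' u he

lemma C1 (n : ℕ) :
    numNondecDyck (n + 1) = numNondecDyck n + ∑ m ∈ Finset.Icc 1 n, numNondecDyck m := by
  classical
  rw [card_DT, decompF, Finset.card_union_of_disjoint (hd1 n),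
    Finset.card_image_of_injOn opA_inj.injOn, Finset.card_biUnion (hd2 n), ← card_DT]
  congr 1
  apply Finset.sum_congr rfl
  intro m _
  rw [Finset.card_image_of_injOn (opB_inj (n - m)).injOn, ← card_DT]

lemma C2 (n : ℕ) :
    totalReturns (n + 1) = numNondecDyck n +
      ∑ m ∈ Finset.Icc 1 n, (numNondecDyck m + totalReturns m) := by
  classical
  rw [sum_DT, decompF, Finset.sum_union (hd1 n), Finset.sum_biUnion (by
    intro a ha b hb hab
    exact hd2 n a (by simpa using ha) b (by simpa using hb) hab)]
  congr 1
  · rw [Finset.sum_image (fun x _ y _ h => opA_inj h)]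
    have h : ∀ v ∈ DT n, numReturns (opA v) = 1 :=
      fun v hv => numReturns_opA (mem_DT.mp hv)
    rw [Finset.sum_congr rfl h, Finset.sum_const, smul_eq_mul, mul_one, ← card_DT]
  · apply Finset.sum_congr rfl
    intro m hm
    rw [Finset.sum_image (fun x _ y _ h => opB_inj (n - m) h)]
    have : ∀ u ∈ DT m, numReturns (opB (n - m) u) = 1 + numReturns u :=
      fun u _ => numReturns_opB (n - m) u
    rw [Finset.sum_congr rfl this, Finset.sum_add_distrib, Finset.sum_const,
      smul_eq_mul, mul_one, ← card_DT, ← sum_DT]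

end NDD
namespace NDD
open List Finset PowerSeries

lemma nondecDyck_zero : nondecDyck 0 = {([] : List Bool)} := by
  ext w
  constructor
  · intro hw
    have := hw.1
    simp only [Nat.mul_zero] at this
    exact List.length_eq_zero_iff.mp this
  · rintro rfl
    refine ⟨rfl, ⟨⟨?_, rfl⟩, ?_⟩⟩
    · intro i hi
      simp only [List.length_nil, Nat.le_zero] at hi
      subst hi
      simp
    · intro i j hi _ _
      exact absurd hi.1 (by simp)

lemma numNondecDyck_zero : numNondecDyck 0 = 1 := by
  rw [numNondecDyck, nondecDyck_zero, Set.ncard_singleton]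

lemma totalReturns_zero : totalReturns 0 = 0 := by
  rw [totalReturns, nondecDyck_zero, finsum_mem_singleton]
  rfl

/-- `d n` as an integer -/
noncomputable def dz (n : ℕ) : ℤ := (numNondecDyck n : ℤ)
/-- `s n` as an integer -/
noncomputable def sz (n : ℕ) : ℤ := (totalReturns n : ℤ)

lemma C1z (n : ℕ) : dz (n + 1) = dz n + ∑ m ∈ Finset.Icc 1 n, dz m := by
  unfold dz
  rw [C1 n]
  push_cast
  ring

lemma C2z (n : ℕ) : sz (n + 1) = dz n + ∑ m ∈ Finset.Icc 1 n, (dz m + sz m) := by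
  unfold dz sz
  rw [C2 n]
  push_cast
  ring

lemma dz_zero : dz 0 = 1 := by rw [dz, numNondecDyck_zero]; norm_num
lemma sz_zero : sz 0 = 0 := by rw [sz, totalReturns_zero]; norm_num

lemma dz_one : dz 1 = 1 := by
  have := C1z 0
  simpa [dz_zero] using this

lemma sz_one : sz 1 = 1 := by
  have := C2z 0
  simpa [dz_zero] using this

lemma L1 (n : ℕ) : dz (n + 2) = 3 * dz (n + 1) - dz n := by
  have a := C1z (n + 1)
  have b := C1z n
  rw [Finset.sum_Icc_succ_top (by omega : 1 ≤ n + 1),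
    show n + 1 + 1 = n + 2 by omega] at a
  omega

lemma L2 (n : ℕ) : sz (n + 2) = 2 * sz (n + 1) + 2 * dz (n + 1) - dz n := by
  have a := C2z (n + 1)
  have b := C2z n
  rw [Finset.sum_Icc_succ_top (by omega : 1 ≤ n + 1),
    show n + 1 + 1 = n + 2 by omega] at a
  omega

lemma P1 : ((1 : ℤ⟦X⟧) - 3 * X + X ^ 2) * PowerSeries.mk dz = 1 - 2 * X := by
  have expand : ((1 : ℤ⟦X⟧) - 3 * X + X ^ 2) * PowerSeries.mk dz =
      PowerSeries.mk dz - C (R := ℤ) 3 * (X ^ 1 * PowerSeries.mk dz) + X ^ 2 * PowerSeries.mk dz := by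
    rw [map_ofNat (C (R := ℤ)) 3]
    ring
  have expand2 : (1 : ℤ⟦X⟧) - 2 * X = 1 - C (R := ℤ) 2 * X := by
    rw [map_ofNat (C (R := ℤ)) 2]
  ext n
  rw [expand, expand2]
  simp only [map_add, map_sub, coeff_C_mul, coeff_X_pow_mul', coeff_mk, coeff_one, coeff_X]
  match n with
  | 0 => norm_num [dz_zero]
  | 1 => norm_num [dz_one, dz_zero]
  | (k + 2) =>
    have := L1 k
    simp only [if_pos (by omega : 1 ≤ k + 2), if_pos (by omega : 2 ≤ k + 2),
      if_neg (by omega : ¬ (k + 2 = 0)), if_neg (by omega : ¬ (k + 2 = 1)),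
      show k + 2 - 1 = k + 1 by omega, show k + 2 - 2 = k by omega]
    omega

lemma P2 : ((1 : ℤ⟦X⟧) - 2 * X) * PowerSeries.mk sz = X * (2 - X) * PowerSeries.mk dz - X := by
  have expand : ((1 : ℤ⟦X⟧) - 2 * X) * PowerSeries.mk sz =
      PowerSeries.mk sz - C (R := ℤ) 2 * (X ^ 1 * PowerSeries.mk sz) := by
    rw [map_ofNat (C (R := ℤ)) 2]
    ring
  have expand2 : X * ((2 : ℤ⟦X⟧) - X) * PowerSeries.mk dz - X =
      C (R := ℤ) 2 * (X ^ 1 * PowerSeries.mk dz) - X ^ 2 * PowerSeries.mk dz - X := by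
    rw [map_ofNat (C (R := ℤ)) 2]
    ring
  ext n
  rw [expand, expand2]
  simp only [map_add, map_sub, coeff_C_mul, coeff_X_pow_mul', coeff_mk, coeff_one, coeff_X]
  match n with
  | 0 => norm_num [sz_zero]
  | 1 => norm_num [sz_one, sz_zero, dz_zero]
  | (k + 2) =>
    have := L2 k
    simp only [if_pos (by omega : 1 ≤ k + 2), if_pos (by omega : 2 ≤ k + 2),
      if_neg (by omega : ¬ (k + 2 = 0)), if_neg (by omega : ¬ (k + 2 = 1)),
      show k + 2 - 1 = k + 1 by omega, show k + 2 - 2 = k by omega]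
    omega

end NDD


/-- In `ℤ⟦X⟧`: `(1 − 2X)(1 − 3X + X²) · Σ r(n) Xⁿ = X(1 − X)²`. -/
theorem totalReturns_gf :
    ((1 : PowerSeries ℤ) - 2 * PowerSeries.X) *
        (1 - 3 * PowerSeries.X + PowerSeries.X ^ 2) *
        PowerSeries.mk (fun n => (totalReturns n : ℤ)) =
      PowerSeries.X * (1 - PowerSeries.X) ^ 2 := by
  have hm : PowerSeries.mk (fun n => (totalReturns n : ℤ)) = PowerSeries.mk NDD.sz := rfl
  rw [hm]
  have p1 := NDD.P1
  have p2 := NDD.P2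
  linear_combination (PowerSeries.X * (2 - PowerSeries.X)) * p1 +
    (1 - 3 * PowerSeries.X + PowerSeries.X ^ 2) * p2
end
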